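/- arXiv:2503.16313 — 9 statements merged into one kernel-verified Lean document; each statement's English description precedes it below -/
import Mathlib

section
/- If f(z) = Σ_{n≥0} a_n z^n is analytic in the unit disk with sup_{|z|<1} |f(z)| ≤ 1, then for all 0 ≤ r ≤ 1/3, Σ_{n≥0} |a_n| r^n ≤ 1. -/
open Complex MeasureTheory Real Set Filter

set_option maxHeartbeats 1000000


/-- orthogonality -/
lemma bohr_integral_exp_int (c : ℤ) :
    ∫ θ in (0:ℝ)..(2*π), Complex.exp ((c:ℂ) * θ * Complex.I) =
      if c = 0 then (2*π:ℂ) else 0 := by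
  rcases eq_or_ne c 0 with h | h
  · simp [h]
  · rw [if_neg h]
    have hc : (c:ℂ) * Complex.I ≠ 0 := by
      simp [Complex.I_ne_zero, Complex.ext_iff, h]
    have key := integral_exp_mul_complex (a := (0:ℝ)) (b := 2*π) hc
    have : ∀ θ:ℝ, (c:ℂ) * θ * Complex.I = (c * Complex.I) * θ := fun θ => by ring
    simp_rw [this, key]
    rw [show (c:ℂ) * Complex.I * ((2:ℝ)*(π:ℝ) : ℝ) = (c:ℤ) * (2*(π:ℂ)*Complex.I) by push_cast; ring,
      Complex.exp_int_mul_two_pi_mul_I]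
    simp


lemma bohr_summable {a : ℕ → ℂ} {f : ℂ → ℂ}
    (hf : ∀ z ∈ Metric.ball (0 : ℂ) 1, HasSum (fun n : ℕ => a n * z ^ n) (f z))
    {ρ : ℝ} (h0 : 0 ≤ ρ) (h1 : ρ < 1) : Summable fun n => ‖a n‖ * ρ ^ n := by
  set s : ℝ := (ρ + 1) / 2 with hs
  have hs0 : 0 < s := by positivity
  have hρs : ρ < s := by simp only [hs]; linarith
  have hs1 : s < 1 := by simp only [hs]; linarith
  have hz : (s:ℂ) ∈ Metric.ball (0:ℂ) 1 := by
    simp [Complex.norm_real, _root_.abs_of_nonneg hs0.le, hs1]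
  have hsum := (hf _ hz).summable
  have htend : Tendsto (fun n => ‖a n * (s:ℂ) ^ n‖) atTop (nhds 0) := by
    simpa using hsum.tendsto_atTop_zero.norm
  obtain ⟨C, hC⟩ := htend.bddAbove_range
  have hCle : ∀ n, ‖a n‖ * s ^ n ≤ C := by
    intro n
    have := hC (mem_range_self n)
    simpa [norm_mul, norm_pow, Complex.norm_real, _root_.abs_of_nonneg hs0.le] using this
  refine Summable.of_nonneg_of_le (fun n => mul_nonneg (norm_nonneg _) (pow_nonneg h0 n))
    (f := fun n => C * (ρ / s) ^ n) (fun n => ?_) ?_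
  · have : ‖a n‖ * ρ ^ n = (‖a n‖ * s ^ n) * (ρ / s) ^ n := by
      rw [mul_assoc, ← mul_pow, mul_div_cancel₀ _ hs0.ne']
    rw [this]
    have hd : (0:ℝ) ≤ (ρ / s) ^ n := pow_nonneg (div_nonneg h0 hs0.le) n
    exact mul_le_mul_of_nonneg_right (hCle n) hd
  · exact (summable_geometric_of_lt_one (div_nonneg h0 hs0.le) (by rw [div_lt_one hs0]; exact hρs)).mul_left C


lemma bohr_continuousOn {a : ℕ → ℂ} {f : ℂ → ℂ}
    (hf : ∀ z ∈ Metric.ball (0 : ℂ) 1, HasSum (fun n : ℕ => a n * z ^ n) (f z)) :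
    ContinuousOn f (Metric.ball (0 : ℂ) 1) := by
  intro z0 hz0
  have hz0' : ‖z0‖ < 1 := by simpa using hz0
  set s : ℝ := (‖z0‖ + 1) / 2 with hs
  have hs0 : 0 ≤ s := by positivity
  have hzs : ‖z0‖ < s := by simp only [hs]; linarith
  have hs1 : s < 1 := by simp only [hs]; linarith [norm_nonneg z0]
  have hsum : Summable fun n => ‖a n‖ * s ^ n := bohr_summable hf hs0 hs1
  have hcont : ContinuousOn (fun z : ℂ => ∑' n, a n * z ^ n) (Metric.ball (0:ℂ) s) := by
    refine continuousOn_tsum (fun n => (Continuous.continuousOn (by fun_prop))) hsum ?_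
    intro n z hz
    rw [norm_mul, norm_pow]
    exact mul_le_mul_of_nonneg_left
      (pow_le_pow_left₀ (norm_nonneg z) (by simp only [Metric.mem_ball, dist_zero_right] at hz; exact hz.le) n) (norm_nonneg _)
  have hmem : Metric.ball (0:ℂ) s ∈ nhds z0 :=
    (Metric.isOpen_ball).mem_nhds (by simpa using hzs)
  have hca : ContinuousAt (fun z : ℂ => ∑' n, a n * z ^ n) z0 :=
    hcont.continuousAt hmem
  have heq : f =ᶠ[nhds z0] fun z : ℂ => ∑' n, a n * z ^ n := by
    filter_upwards [hmem] with z hz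
    exact ((hf z (by simp only [Metric.mem_ball, dist_zero_right] at hz ⊢; linarith [hz])).tsum_eq).symm
  exact (hca.congr heq.symm).continuousWithinAt


lemma bohr_norm_exp (c : ℤ) (θ : ℝ) : ‖Complex.exp ((c:ℂ) * θ * Complex.I)‖ = 1 := by
  rw [Complex.norm_exp]
  simp

lemma bohr_hasSum_integral {a : ℕ → ℂ} {f : ℂ → ℂ}
    (hf : ∀ z ∈ Metric.ball (0 : ℂ) 1, HasSum (fun n : ℕ => a n * z ^ n) (f z))
    {ρ : ℝ} (h0 : 0 ≤ ρ) (h1 : ρ < 1) (m : ℤ) :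
    HasSum (fun k : ℕ => a k * (ρ:ℂ) ^ k * (if ((k:ℤ) + m) = 0 then (2*π:ℂ) else 0))
      (∫ θ in Ioc (0:ℝ) (2*π),
        f ((ρ:ℂ) * Complex.exp (θ * Complex.I)) * Complex.exp ((m:ℂ) * θ * Complex.I)) := by
  set F : ℕ → ℝ → ℂ := fun k θ => a k * (ρ:ℂ) ^ k * Complex.exp ((((k:ℤ) + m : ℤ):ℂ) * θ * Complex.I)
    with hF
  have hπ : (0:ℝ) ≤ 2 * π := by positivity
  have hFint : ∀ k, Integrable (F k) (volume.restrict (Ioc (0:ℝ) (2*π))) := by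
    intro k
    apply Continuous.integrableOn_Ioc
    fun_prop
  have hFnorm : ∀ k θ, ‖F k θ‖ = ‖a k‖ * ρ ^ k := by
    intro k θ
    rw [hF]
    simp only [norm_mul, bohr_norm_exp, mul_one, norm_pow, Complex.norm_real,
      Real.norm_eq_abs, _root_.abs_of_nonneg h0]
  have hInorm : ∀ k, ∫ θ in Ioc (0:ℝ) (2*π), ‖F k θ‖ = ‖a k‖ * ρ ^ k * (2*π) := by
    intro k
    simp only [hFnorm]
    rw [setIntegral_const]
    rw [Real.volume_real_Ioc_of_le hπ, smul_eq_mul, sub_zero, mul_comm]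
  have hsummable : Summable fun k => ∫ θ in Ioc (0:ℝ) (2*π), ‖F k θ‖ := by
    simp only [hInorm]
    exact (bohr_summable hf h0 h1).mul_right _
  have key := hasSum_integral_of_summable_integral_norm hFint hsummable
  have hval : ∀ k, ∫ θ in Ioc (0:ℝ) (2*π), F k θ =
      a k * (ρ:ℂ) ^ k * (if ((k:ℤ) + m) = 0 then (2*π:ℂ) else 0) := by
    intro k
    rw [hF]
    simp only
    rw [integral_const_mul, ← intervalIntegral.integral_of_le hπ, bohr_integral_exp_int]
  have htsum : ∀ θ ∈ Ioc (0:ℝ) (2*π), (∑' k, F k θ) =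
      f ((ρ:ℂ) * Complex.exp (θ * Complex.I)) * Complex.exp ((m:ℂ) * θ * Complex.I) := by
    intro θ _
    have hz : (ρ:ℂ) * Complex.exp (θ * Complex.I) ∈ Metric.ball (0:ℂ) 1 := by
      simp only [Metric.mem_ball, dist_zero_right, norm_mul]
      rw [Complex.norm_real, Real.norm_eq_abs, _root_.abs_of_nonneg h0]
      have : ‖Complex.exp ((θ:ℂ) * Complex.I)‖ = 1 := by
        simpa using bohr_norm_exp 1 θ
      -- note
      rw [this, mul_one]; exact h1
    have hs := ((hf _ hz).mul_right (Complex.exp ((m:ℂ) * θ * Complex.I)))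
    have : (fun k : ℕ => a k * ((ρ:ℂ) * Complex.exp (θ * Complex.I)) ^ k *
        Complex.exp ((m:ℂ) * θ * Complex.I)) = fun k => F k θ := by
      funext k
      rw [hF]
      simp only
      rw [show (((k:ℤ) + m : ℤ):ℂ) * θ * Complex.I =
          (k:ℕ) * ((θ:ℂ) * Complex.I) + (m:ℂ) * θ * Complex.I by push_cast; ring,
        Complex.exp_add, Complex.exp_nat_mul, mul_pow]
      ring
    rw [this] at hs
    exact hs.tsum_eq
  have : ∫ θ in Ioc (0:ℝ) (2*π), (∑' k, F k θ) =
      ∫ θ in Ioc (0:ℝ) (2*π),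
        f ((ρ:ℂ) * Complex.exp (θ * Complex.I)) * Complex.exp ((m:ℂ) * θ * Complex.I) :=
    setIntegral_congr_fun measurableSet_Ioc htsum
  rw [← this]
  simpa only [hval] using key


section
variable {a : ℕ → ℂ} {f : ℂ → ℂ}
  (hf : ∀ z ∈ Metric.ball (0 : ℂ) 1, HasSum (fun n : ℕ => a n * z ^ n) (f z))
  {ρ : ℝ} (h0 : 0 ≤ ρ) (h1 : ρ < 1)

include hf h0 h1

lemma bohr_C1 (n : ℕ) :
    ∫ θ in Ioc (0:ℝ) (2*π),
        f ((ρ:ℂ) * Complex.exp (θ * Complex.I)) * Complex.exp (((-(n:ℤ)):ℂ) * θ * Complex.I)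
      = (2*π:ℂ) * a n * (ρ:ℂ) ^ n := by
  have key := bohr_hasSum_integral hf h0 h1 (-(n:ℤ))
  have h2 : HasSum (fun k : ℕ => a k * (ρ:ℂ) ^ k * (if ((k:ℤ) + -(n:ℤ)) = 0 then (2*π:ℂ) else 0))
      ((2*π:ℂ) * a n * (ρ:ℂ) ^ n) := by
    have : (fun k : ℕ => a k * (ρ:ℂ) ^ k * (if ((k:ℤ) + -(n:ℤ)) = 0 then (2*π:ℂ) else 0)) =
        fun k : ℕ => if k = n then (2*π:ℂ) * a n * (ρ:ℂ) ^ n else 0 := by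
      funext k
      rcases eq_or_ne k n with h | h
      · subst h; simp [mul_comm]; ring
      · have : ((k:ℤ) + -(n:ℤ)) ≠ 0 := by omega
        simp [h, this]
    rw [this]
    exact hasSum_ite_eq n _
  have := key.unique h2
  push_cast at this ⊢
  exact this

lemma bohr_C2 (n : ℕ) (hn : 0 < n) :
    ∫ θ in Ioc (0:ℝ) (2*π),
        f ((ρ:ℂ) * Complex.exp (θ * Complex.I)) * Complex.exp (((n:ℤ):ℂ) * θ * Complex.I)
      = 0 := by
  have key := bohr_hasSum_integral hf h0 h1 (n:ℤ)
  have h2 : HasSum (fun k : ℕ => a k * (ρ:ℂ) ^ k * (if ((k:ℤ) + (n:ℤ)) = 0 then (2*π:ℂ) else 0))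
      0 := by
    have : (fun k : ℕ => a k * (ρ:ℂ) ^ k * (if ((k:ℤ) + (n:ℤ)) = 0 then (2*π:ℂ) else 0)) =
        fun _ : ℕ => (0:ℂ) := by
      funext k
      have : ((k:ℤ) + (n:ℤ)) ≠ 0 := by omega
      simp [this]
    rw [this]
    exact hasSum_zero
  exact key.unique h2

end

section
variable {a : ℕ → ℂ} {f : ℂ → ℂ}
  (hf : ∀ z ∈ Metric.ball (0 : ℂ) 1, HasSum (fun n : ℕ => a n * z ^ n) (f z))
  (hb : ∀ z ∈ Metric.ball (0 : ℂ) 1, ‖f z‖ ≤ 1)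

omit hf in
lemma bohr_mem_ball {ρ : ℝ} (h0 : 0 ≤ ρ) (h1 : ρ < 1) (θ : ℝ) :
    (ρ:ℂ) * Complex.exp ((θ:ℂ) * Complex.I) ∈ Metric.ball (0:ℂ) 1 := by
  simp only [Metric.mem_ball, dist_zero_right, norm_mul]
  rw [Complex.norm_real, Real.norm_eq_abs, _root_.abs_of_nonneg h0]
  have h : ‖Complex.exp ((θ:ℂ) * Complex.I)‖ = 1 := by simpa using bohr_norm_exp 1 θ
  rw [h, mul_one]; exact h1

include hf in
lemma bohr_g_cont {ρ : ℝ} (h0 : 0 ≤ ρ) (h1 : ρ < 1) :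
    Continuous (fun θ : ℝ => f ((ρ:ℂ) * Complex.exp ((θ:ℂ) * Complex.I))) := by
  apply (bohr_continuousOn hf).comp_continuous (by fun_prop)
  exact fun θ => bohr_mem_ball h0 h1 θ

include hf hb in
lemma bohr_coeff_bound (n : ℕ) (hn : 0 < n) : ‖a n‖ ≤ 2 * (1 - ‖a 0‖) := by
  -- the rotation
  set l : ℂ := if a 0 = 0 then 1 else a 0 / ‖a 0‖ with hl
  have hl1 : ‖l‖ = 1 := by
    rcases eq_or_ne (a 0) 0 with h | h
    · simp [hl, h]
    · rw [hl, if_neg h, norm_div, Complex.norm_real, norm_norm,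
        div_self (norm_ne_zero_iff.2 h)]
  set L : ℂ := (starRingEnd ℂ) l with hL
  have hL1 : ‖L‖ = 1 := by rw [hL, RCLike.norm_conj]; exact hl1
  have hLa : L * a 0 = (‖a 0‖ : ℂ) := by
    rcases eq_or_ne (a 0) 0 with h | h
    · simp [hL, hl, h]
    · have hc : ((‖a 0‖:ℝ):ℂ) ≠ 0 := by
        exact_mod_cast norm_ne_zero_iff.2 h
      have h2 : (starRingEnd ℂ) (a 0) * a 0 = ((‖a 0‖^2 : ℝ) : ℂ) := by
        rw [mul_comm, Complex.mul_conj, Complex.normSq_eq_norm_sq]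
      rw [hL, hl, if_neg h, map_div₀, Complex.conj_ofReal, div_mul_eq_mul_div, h2,
        show ((‖a 0‖^2:ℝ):ℂ) = ((‖a 0‖:ℝ):ℂ) * ((‖a 0‖:ℝ):ℂ) by push_cast; ring,
        mul_div_assoc, div_self hc, mul_one]
  -- bound for each radius
  have main : ∀ ρ : ℝ, 0 ≤ ρ → ρ < 1 → ‖a n‖ * ρ ^ n ≤ 2 * (1 - ‖a 0‖) := by
    intro ρ h0 h1
    set g : ℝ → ℂ := fun θ => f ((ρ:ℂ) * Complex.exp ((θ:ℂ) * Complex.I)) with hg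
    have hgc : Continuous g := bohr_g_cont hf h0 h1
    have hπ : (0:ℝ) ≤ 2*π := by positivity
    set eneg : ℝ → ℂ := fun θ => Complex.exp (((-(n:ℤ)):ℂ) * θ * Complex.I) with hen
    set epos : ℝ → ℂ := fun θ => Complex.exp ((((n:ℤ)):ℂ) * θ * Complex.I) with hep
    have henc : Continuous eneg := by rw [hen]; fun_prop
    have hepc : Continuous epos := by rw [hep]; fun_prop
    have he1 : ∀ θ : ℝ, ‖eneg θ‖ = 1 := by
      intro θ
      rw [hen]
      simp only
      rw [show ((-(n:ℤ)):ℂ) * θ * Complex.I = (((-(n:ℤ) * θ : ℝ)):ℂ) * Complex.I by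
        push_cast; ring]
      rw [Complex.norm_exp_ofReal_mul_I]
    have I1 : ∫ θ in Ioc (0:ℝ) (2*π), g θ * eneg θ = (2*π:ℂ) * a n * (ρ:ℂ)^n := by
      have h := bohr_C1 hf h0 h1 n
      rw [hg, hen]; push_cast at h ⊢; exact h
    have I2 : ∫ θ in Ioc (0:ℝ) (2*π), g θ * epos θ = 0 := bohr_C2 hf h0 h1 n hn
    have I3 : ∫ θ in Ioc (0:ℝ) (2*π), eneg θ = 0 := by
      have h := bohr_integral_exp_int (-(n:ℤ))
      rw [if_neg (by omega : ¬ -(n:ℤ) = 0), intervalIntegral.integral_of_le hπ] at h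
      rw [hen, ← h]
      apply setIntegral_congr_fun measurableSet_Ioc
      intro θ _
      simp only
      norm_cast
    -- conjugate integral
    have I4 : ∫ θ in Ioc (0:ℝ) (2*π), (starRingEnd ℂ) (L * g θ) * eneg θ = 0 := by
      have hconj : ∀ θ : ℝ, (starRingEnd ℂ) (L * g θ) * eneg θ =
          (starRingEnd ℂ) (L * (g θ * epos θ)) := by
        intro θ
        simp only [hen, hep, map_mul, ← Complex.exp_conj, map_intCast,
          Complex.conj_ofReal, Complex.conj_I]
        ring_nf
      simp_rw [hconj]
      rw [integral_conj, integral_const_mul, I2, mul_zero, map_zero]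
    -- the key identity
    have key : ∫ θ in Ioc (0:ℝ) (2*π),
        ((2 * ((L * g θ).re : ℝ) - 2 : ℝ) : ℂ) * eneg θ = (2*π:ℂ) * L * a n * (ρ:ℂ)^n := by
      have hpt : ∀ θ : ℝ, ((2 * ((L * g θ).re : ℝ) - 2 : ℝ) : ℂ) * eneg θ =
          L * (g θ * eneg θ) + (starRingEnd ℂ) (L * g θ) * eneg θ - 2 * eneg θ := by
        intro θ
        have hac := Complex.add_conj (L * g θ)
        rw [show (L * (g θ * eneg θ) + (starRingEnd ℂ) (L * g θ) * eneg θ : ℂ)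
            = (L * g θ + (starRingEnd ℂ) (L * g θ)) * eneg θ by ring, hac]
        push_cast
        ring
      simp_rw [hpt]
      have int1 : IntegrableOn (fun θ => L * (g θ * eneg θ)) (Ioc (0:ℝ) (2*π)) := by
        apply Continuous.integrableOn_Ioc
        exact continuous_const.mul (hgc.mul henc)
      have int2 : IntegrableOn (fun θ => (starRingEnd ℂ) (L * g θ) * eneg θ)
          (Ioc (0:ℝ) (2*π)) := by
        apply Continuous.integrableOn_Ioc
        simp only [starRingEnd_apply]
        exact ((continuous_const.mul hgc).star).mul henc
      have int3 : IntegrableOn (fun θ => (2:ℂ) * eneg θ) (Ioc (0:ℝ) (2*π)) := by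
        apply Continuous.integrableOn_Ioc
        exact continuous_const.mul henc
      have intAB : IntegrableOn (fun θ => L * (g θ * eneg θ) +
          (starRingEnd ℂ) (L * g θ) * eneg θ) (Ioc (0:ℝ) (2*π)) := int1.add int2
      rw [integral_sub intAB int3, integral_add int1 int2, integral_const_mul,
        integral_const_mul, I1, I4, I3, mul_zero, add_zero, sub_zero]
      ring
    -- norm estimate
    have hRe : ∀ θ : ℝ, (L * g θ).re ≤ 1 := by
      intro θ
      calc (L * g θ).re ≤ ‖L * g θ‖ := Complex.re_le_norm _
        _ = ‖g θ‖ := by rw [norm_mul, hL1, one_mul]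
        _ ≤ 1 := hb _ (bohr_mem_ball h0 h1 θ)
    have hnorm_pt : ∀ θ : ℝ, ‖((2 * ((L * g θ).re : ℝ) - 2 : ℝ) : ℂ) * eneg θ‖
        = 2 - 2 * (L * g θ).re := by
      intro θ
      rw [norm_mul, he1 θ, mul_one, Complex.norm_real, Real.norm_eq_abs,
        abs_of_nonpos (by linarith [hRe θ])]
      ring
    have hint_Lg : IntegrableOn (fun θ => (L * g θ)) (Ioc (0:ℝ) (2*π)) := by
      apply Continuous.integrableOn_Ioc
      exact continuous_const.mul hgc
    have I0 : ∫ θ in Ioc (0:ℝ) (2*π), g θ = (2*π:ℂ) * a 0 := by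
      have h := bohr_C1 hf h0 h1 0
      simpa [hg] using h
    have bound : (2*π) * (‖a n‖ * ρ^n) ≤ (2*π) * (2 * (1 - ‖a 0‖)) := by
      have lhs_eq : ‖(2*π:ℂ) * L * a n * (ρ:ℂ)^n‖ = (2*π) * (‖a n‖ * ρ^n) := by
        simp only [norm_mul, norm_pow, hL1, Complex.norm_real, Real.norm_eq_abs,
          _root_.abs_of_nonneg h0, _root_.abs_of_nonneg Real.pi_pos.le, Complex.norm_ofNat,
          mul_one, one_mul]
        ring
      have step1 : ‖(2*π:ℂ) * L * a n * (ρ:ℂ)^n‖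
          ≤ ∫ θ in Ioc (0:ℝ) (2*π), ‖((2 * ((L * g θ).re : ℝ) - 2 : ℝ) : ℂ) * eneg θ‖ := by
        rw [← key]
        exact norm_integral_le_integral_norm _
      have step2 : ∫ θ in Ioc (0:ℝ) (2*π), ‖((2 * ((L * g θ).re : ℝ) - 2 : ℝ) : ℂ) * eneg θ‖
          = ∫ θ in Ioc (0:ℝ) (2*π), (2 - 2 * (L * g θ).re) := by
        apply setIntegral_congr_fun measurableSet_Ioc
        intro θ _
        exact hnorm_pt θ
      have hre_eq : ∫ θ in Ioc (0:ℝ) (2*π), (L * g θ).re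
          = ((2*π:ℂ) * L * a 0).re := by
        have := Complex.reCLM.integral_comp_comm hint_Lg
        simp only [Complex.reCLM_apply] at this
        rw [this, integral_const_mul, I0]
        congr 1
        ring
      have step3 : ∫ θ in Ioc (0:ℝ) (2*π), (2 - 2 * (L * g θ).re)
          = 2 * (2*π) - 2 * ((2*π) * ‖a 0‖) := by
        have hre_int : IntegrableOn (fun θ => (L * g θ).re) (Ioc (0:ℝ) (2*π)) := by
          apply Continuous.integrableOn_Ioc
          exact (Complex.continuous_re.comp (continuous_const.mul hgc))
        rw [integral_sub (by apply Continuous.integrableOn_Ioc; exact continuous_const)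
          (hre_int.const_mul 2), integral_const_mul, hre_eq]
        rw [setIntegral_const, Real.volume_real_Ioc_of_le hπ, sub_zero,
          smul_eq_mul]
        have hre2 : ((2*π:ℂ) * L * a 0).re = (2*π) * ‖a 0‖ := by
          rw [show (2*π:ℂ) * L * a 0 = (2*π:ℂ) * (L * a 0) by ring, hLa,
            show ((2*π:ℂ)) * ((‖a 0‖:ℝ):ℂ) = (((2*π) * ‖a 0‖ : ℝ) : ℂ) by push_cast; ring]
          exact Complex.ofReal_re _
        rw [hre2]
        ring
      calc (2*π) * (‖a n‖ * ρ^n) = ‖(2*π:ℂ) * L * a n * (ρ:ℂ)^n‖ := lhs_eq.symm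
        _ ≤ _ := step1
        _ = _ := by rw [step2, step3]; ring
    have hπpos : (0:ℝ) < 2*π := by positivity
    exact le_of_mul_le_mul_left bound hπpos
  -- take the limit ρ → 1⁻
  have htend : Tendsto (fun ρ : ℝ => ‖a n‖ * ρ ^ n) (nhdsWithin 1 (Iio 1)) (nhds (‖a n‖)) := by
    have hc : Continuous (fun ρ : ℝ => ‖a n‖ * ρ ^ n) := by fun_prop
    have h := hc.tendsto 1
    simp only [one_pow, mul_one] at h
    exact h.mono_left nhdsWithin_le_nhds
  refine le_of_tendsto htend ?_
  filter_upwards [Ioo_mem_nhdsLT_of_mem (show (1:ℝ) ∈ Ioc 0 1 by norm_num)] with ρ hρ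
  exact main ρ hρ.1.le hρ.2

end


/-- **Bohr's inequality.** If `f(z) = Σ aₙ zⁿ` is analytic in the unit disk with
`sup_{|z|<1} |f(z)| ≤ 1`, then for `0 ≤ r ≤ 1/3`, `Σ |aₙ| rⁿ ≤ 1`. -/
theorem bohr_inequality (a : ℕ → ℂ) (f : ℂ → ℂ)
    (hf : ∀ z ∈ Metric.ball (0 : ℂ) 1, HasSum (fun n : ℕ => a n * z ^ n) (f z))
    (hb : ∀ z ∈ Metric.ball (0 : ℂ) 1, ‖f z‖ ≤ 1)
    (r : ℝ) (hr0 : 0 ≤ r) (hr : r ≤ 1 / 3) :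
    ∑' n : ℕ, ENNReal.ofReal (‖a n‖ * r ^ n) ≤ 1 := by
  have hr1 : r < 1 := by linarith
  have hball0 : (0:ℂ) ∈ Metric.ball (0:ℂ) 1 := by simp
  have ha0 : f 0 = a 0 := by
    have h1 := hf 0 hball0
    have h2 : HasSum (fun k : ℕ => a k * (0:ℂ) ^ k) (a 0) := by
      have : (fun k : ℕ => a k * (0:ℂ) ^ k) = fun k : ℕ => if k = 0 then a 0 else 0 := by
        funext k
        cases k with
        | zero => simp
        | succ m => simp
      rw [this]
      exact hasSum_ite_eq 0 (a 0)
    exact h1.unique h2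
  have ha0le : ‖a 0‖ ≤ 1 := by rw [← ha0]; exact hb 0 hball0
  have hsum : Summable fun n => ‖a n‖ * r ^ n := bohr_summable hf hr0 hr1
  have hnn : ∀ n : ℕ, 0 ≤ ‖a n‖ * r ^ n :=
    fun n => mul_nonneg (norm_nonneg _) (pow_nonneg hr0 n)
  rw [← ENNReal.ofReal_tsum_of_nonneg hnn hsum]
  rw [ENNReal.ofReal_le_one]
  -- real series bound
  have hgeom : Summable fun n : ℕ => (2 * (1 - ‖a 0‖) * r) * r ^ n :=
    (summable_geometric_of_lt_one hr0 hr1).mul_left _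
  have htail_sum : Summable fun n : ℕ => ‖a (n+1)‖ * r ^ (n+1) :=
    (summable_nat_add_iff 1).mpr hsum
  have htail : (∑' n : ℕ, ‖a (n+1)‖ * r ^ (n+1))
      ≤ ∑' n : ℕ, (2 * (1 - ‖a 0‖) * r) * r ^ n := by
    refine Summable.tsum_le_tsum (fun n => ?_) htail_sum hgeom
    have hcb := bohr_coeff_bound hf hb (n+1) (Nat.succ_pos n)
    calc ‖a (n+1)‖ * r ^ (n+1) ≤ (2 * (1 - ‖a 0‖)) * r ^ (n+1) :=
          mul_le_mul_of_nonneg_right hcb (pow_nonneg hr0 _)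
      _ = (2 * (1 - ‖a 0‖) * r) * r ^ n := by rw [pow_succ]; ring
  have hgeom_val : (∑' n : ℕ, (2 * (1 - ‖a 0‖) * r) * r ^ n)
      = (2 * (1 - ‖a 0‖) * r) * (1 - r)⁻¹ := by
    rw [tsum_mul_left, tsum_geometric_of_lt_one hr0 hr1]
  rw [Summable.tsum_eq_zero_add hsum]
  simp only [pow_zero, mul_one]
  have hfrac : r * (1 - r)⁻¹ ≤ 1/2 := by
    rw [← div_eq_mul_inv, div_le_iff₀ (by linarith : (0:ℝ) < 1 - r)]
    linarith
  have hfinal : ‖a 0‖ + (2 * (1 - ‖a 0‖) * r) * (1 - r)⁻¹ ≤ 1 := by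
    have h4 : (2 * (1 - ‖a 0‖)) * (r * (1 - r)⁻¹) ≤ (2 * (1 - ‖a 0‖)) * (1/2) :=
      mul_le_mul_of_nonneg_left hfrac (by linarith)
    nlinarith [h4]
  calc ‖a 0‖ + ∑' n : ℕ, ‖a (n+1)‖ * r ^ (n+1)
      ≤ ‖a 0‖ + (2 * (1 - ‖a 0‖) * r) * (1 - r)⁻¹ := by
        rw [← hgeom_val]; exact add_le_add_right htail _
    _ ≤ 1 := hfinal
end

section
/- If r^2 ≥ 1/c_2 and the sequence c_n/c_{n+1} is non-decreasing for n ≥ 2 (with c_1 = 1, c_n > 0), and inf_{n≥s-1} c_n/c_{n+1} ≤ r^2 ≤ inf_{n≥s} c_n/c_{n+1} for some integer s ≥ 2, then r^2 ≤ c_n r^{2n} ≤ c_s r^{2s} for all 1 ≤ n < s. -/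
/-- **Remark 1.** If `r² ≥ 1/c₂` and `cₙ/c_{n+1}` is non-decreasing for `n ≥ 2`
(with `c₁ = 1`), and `inf_{n≥s-1} cₙ/c_{n+1} ≤ r² ≤ inf_{n≥s} cₙ/c_{n+1}` for an
integer `s ≥ 2`, then `r² ≤ cₙ r^{2n} ≤ c_s r^{2s}` for all `1 ≤ n < s`. -/
theorem remark1_chain_condition (c : ℕ → ℝ) (hc : ∀ n ≥ 1, 0 < c n) (hc1 : c 1 = 1)
    (r : ℝ) (hr0 : 0 ≤ r) (hr2 : 1 / c 2 ≤ r ^ 2)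
    (hmono : ∀ n ≥ 2, c n / c (n + 1) ≤ c (n + 1) / c (n + 2))
    (s : ℕ) (hs : 2 ≤ s)
    (hlow : ⨅ n : ℕ, c (n + (s - 1)) / c (n + s) ≤ r ^ 2)
    (hhigh : r ^ 2 ≤ ⨅ n : ℕ, c (n + s) / c (n + s + 1)) :
    ∀ n, 1 ≤ n → n < s →
      r ^ 2 ≤ c n * r ^ (2 * n) ∧ c n * r ^ (2 * n) ≤ c s * r ^ (2 * s) := by
  have hc2 := hc 2 (by norm_num)
  have hrpos : 0 < r ^ 2 := lt_of_lt_of_le (by positivity) hr2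
  have mono : ∀ m n, 2 ≤ n → n ≤ m → c n / c (n + 1) ≤ c m / c (m + 1) := by
    intro m
    induction m with
    | zero => intro n h2 hnm; omega
    | succ k ih =>
      intro n h2 hnm
      rcases eq_or_lt_of_le hnm with h | h
      · rw [h]
      · exact (ih n h2 (by omega)).trans (hmono k (by omega))
  have step : ∀ n, 1 ≤ n → n < s → c n / c (n + 1) ≤ r ^ 2 := by
    intro n h1 hns
    rcases eq_or_lt_of_le h1 with h | h
    · rw [← h, hc1]; exact hr2
    · have h3 : 3 ≤ s := by omega
      obtain ⟨t, rfl⟩ : ∃ t, s = t + 1 := ⟨s - 1, by omega⟩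
      have hsub : t + 1 - 1 = t := by omega
      rw [hsub] at hlow
      have hlb : c t / c (t + 1) ≤ ⨅ k : ℕ, c (k + t) / c (k + (t + 1)) := by
        apply le_ciInf
        intro k
        have hk : k + (t + 1) = k + t + 1 := by omega
        rw [hk]
        exact mono (k + t) t (by omega) (by omega)
      exact (mono t n (by omega) (by omega)).trans (hlb.trans hlow)
  have step' : ∀ n, 1 ≤ n → n < s → c n * r ^ (2 * n) ≤ c (n + 1) * r ^ (2 * (n + 1)) := by
    intro n h1 hns
    have hcn1 := hc (n + 1) (by omega)
    have h := step n h1 hns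
    rw [div_le_iff₀ hcn1] at h
    calc c n * r ^ (2 * n) ≤ (r ^ 2 * c (n + 1)) * r ^ (2 * n) := by
          apply mul_le_mul_of_nonneg_right (by linarith) (by positivity)
      _ = c (n + 1) * r ^ (2 * (n + 1)) := by ring
  have chain : ∀ m, m ≤ s → ∀ n, 1 ≤ n → n ≤ m → c n * r ^ (2 * n) ≤ c m * r ^ (2 * m) := by
    intro m
    induction m with
    | zero => intro _ n h1 hnm; omega
    | succ k ih =>
      intro hms n h1 hnm
      rcases eq_or_lt_of_le hnm with h | h
      · rw [h]
      · exact (ih (by omega) n h1 (by omega)).trans (step' k (by omega) (by omega))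
  intro n h1 hns
  constructor
  · have := chain n (by omega) 1 le_rfl h1
    simpa [hc1] using this
  · exact chain s le_rfl n h1 (by omega)
end

section
/- Let f(z) = Σ_{n≥1} a_n z^n be analytic in the unit disk with f(0) = 0 and ‖f‖_∞ ≤ 1. Then for every integer s ≥ 1 and every r with (s-1)/s ≤ r^2 ≤ s/(s+1), the area functional satisfies S_r f := π Σ_{n≥1} n |a_n|^2 r^{2n} ≤ π s r^{2s}. -/
open MeasureTheory Complex AddCircle
noncomputable section
local instance : Fact ((0:ℝ) < 1) := ⟨one_pos⟩

lemma fourier_pow_nat (m : ℕ) (x : AddCircle (1:ℝ)) :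
    fourier (m : ℤ) x = (fourier 1 x) ^ m := by
  induction m with
  | zero => simp [fourier_zero]
  | succ k ih => push_cast; rw [fourier_add, ih, pow_succ]

lemma norm_fourier_apply (k : ℤ) (x : AddCircle (1:ℝ)) : ‖fourier k x‖ = 1 :=
  Circle.norm_coe _

lemma integral_fourier_eq (k : ℤ) :
    (∫ t : AddCircle (1:ℝ), fourier k t ∂haarAddCircle)
      = if k = 0 then 1 else 0 := by
  split_ifs with h
  · subst h
    have h1 : ⇑(fourier (T := (1:ℝ)) 0) = (fun _ => 1 : AddCircle (1:ℝ) → ℂ) := by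
      ext1; exact fourier_zero
    rw [h1, integral_const, probReal_univ, one_smul]
  · exact integral_eq_zero_of_add_right_eq_neg
      (fourier_add_half_inv_index h one_pos)

lemma parseval_sum_le_one (a : ℕ → ℂ) (f : ℂ → ℂ)
    (hf : ∀ z ∈ Metric.ball (0 : ℂ) 1, HasSum (fun n : ℕ => a n * z ^ n) (f z))
    (hb : ∀ z ∈ Metric.ball (0 : ℂ) 1, ‖f z‖ ≤ 1)
    {ρ : ℝ} (hρ0 : 0 ≤ ρ) (hρ1 : ρ < 1) (F : Finset ℕ) :
    ∑ n ∈ F, (‖a n‖ * ρ ^ n) ^ 2 ≤ 1 := by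
  set c : ℕ → ℂ := fun m => a m * (ρ : ℂ) ^ m with hc
  have hnormc : ∀ m, ‖c m‖ = ‖a m‖ * ρ ^ m := by
    intro m
    simp [hc, norm_mul, norm_pow, Complex.norm_real, _root_.abs_of_nonneg hρ0]
  -- summability of ‖c‖
  have hcs : Summable fun m => ‖c m‖ := by
    set ρ' : ℝ := (ρ + 1) / 2 with hρ'
    have hρ'pos : 0 < ρ' := by positivity
    have hρ'lt : ρ' < 1 := by simp [hρ']; linarith
    have hρρ' : ρ < ρ' := by simp [hρ']; linarith
    have hz : ((ρ' : ℂ)) ∈ Metric.ball (0:ℂ) 1 := by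
      rw [mem_ball_zero_iff]
      simp [Complex.norm_real, _root_.abs_of_nonneg hρ'pos.le, hρ'lt]
    have hsum := (hf _ hz).summable
    have htend := hsum.tendsto_atTop_zero
    obtain ⟨C, hC⟩ := (htend.norm.bddAbove_range)
    simp only [mem_upperBounds, Set.mem_range, forall_exists_index] at hC
    have hC' : ∀ m : ℕ, ‖a m‖ * ρ' ^ m ≤ C := by
      intro m
      have := hC _ m rfl
      simpa [norm_mul, norm_pow, Complex.norm_real, _root_.abs_of_nonneg hρ'pos.le] using this
    have hgeo : Summable fun m : ℕ => C * (ρ / ρ') ^ m := by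
      apply Summable.mul_left
      apply summable_geometric_of_lt_one (by positivity)
      rw [div_lt_one hρ'pos]; exact hρρ'
    apply Summable.of_nonneg_of_le (fun m => norm_nonneg _) _ hgeo
    intro m
    rw [hnormc]
    have h1 : ρ ^ m = ρ' ^ m * (ρ / ρ') ^ m := by
      rw [← mul_pow, mul_div_cancel₀ _ hρ'pos.ne']
    calc ‖a m‖ * ρ ^ m = (‖a m‖ * ρ' ^ m) * (ρ / ρ') ^ m := by rw [h1]; ring
      _ ≤ C * (ρ / ρ') ^ m := by
          apply mul_le_mul_of_nonneg_right (hC' m) (by positivity)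
  -- the boundary function
  have hcont : Continuous fun x : AddCircle (1:ℝ) => ∑' m : ℕ, c m * fourier m x := by
    apply continuous_tsum (fun m => continuous_const.mul (map_continuous _)) hcs
    intro m x
    simp [norm_mul, norm_fourier_apply, Circle.norm_coe, hnormc, _root_.abs_of_nonneg hρ0]
  set g : C(AddCircle (1:ℝ), ℂ) := ⟨_, hcont⟩ with hg
  have hgval : ∀ x, g x = f ((ρ : ℂ) * fourier 1 x) := by
    intro x
    have hzx : ((ρ:ℂ) * fourier 1 x) ∈ Metric.ball (0:ℂ) 1 := by
      rw [mem_ball_zero_iff, norm_mul, norm_fourier_apply, mul_one]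
      simpa [Complex.norm_real, _root_.abs_of_nonneg hρ0] using hρ1
    have hsum := hf _ hzx
    have heq : (fun m : ℕ => a m * ((ρ:ℂ) * fourier 1 x) ^ m)
        = fun m : ℕ => c m * fourier m x := by
      funext m
      rw [mul_pow, fourier_pow_nat]
      ring
    rw [heq] at hsum
    exact hsum.tsum_eq
  have hgb : ∀ x, ‖g x‖ ≤ 1 := by
    intro x
    rw [hgval]
    apply hb
    rw [mem_ball_zero_iff, norm_mul, norm_fourier_apply, mul_one]
    simpa [Complex.norm_real, _root_.abs_of_nonneg hρ0] using hρ1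
  -- Fourier coefficients of g
  have hcoeff : ∀ n : ℕ, fourierCoeff (⇑g) (n : ℤ) = c n := by
    intro n
    have hpt : ∀ t : AddCircle (1:ℝ), fourier (-(n:ℤ)) t • g t
        = ∑' m : ℕ, c m * fourier (-(n:ℤ) + m) t := by
      intro t
      have : g t = ∑' m : ℕ, c m * fourier m t := rfl
      rw [this, smul_eq_mul, ← tsum_mul_left]
      congr 1; funext m
      rw [fourier_add]; ring
    rw [fourierCoeff]
    simp_rw [hpt]
    rw [← integral_tsum_of_summable_integral_norm]
    · have hterm : ∀ m : ℕ, (∫ t : AddCircle (1:ℝ), c m * fourier (-(n:ℤ) + m) t ∂haarAddCircle)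
          = c m * (if -(n:ℤ) + m = 0 then 1 else 0) := by
        intro m
        have : (fun t : AddCircle (1:ℝ) => c m * fourier (-(n:ℤ) + m) t)
            = fun t : AddCircle (1:ℝ) => c m • fourier (-(n:ℤ) + m) t := by
          funext t; rw [smul_eq_mul]
        rw [this, integral_smul, integral_fourier_eq, smul_eq_mul]
      simp_rw [hterm]
      rw [tsum_eq_single n]
      · simp
      · intro m hm
        have : ¬(-(n:ℤ) + m = 0) := by omega
        simp [this]
    · intro m
      apply Continuous.integrable_of_hasCompactSupport
        (continuous_const.mul (map_continuous _))
      exact HasCompactSupport.of_compactSpace _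
    · apply hcs.congr
      intro m
      simp [norm_mul, norm_fourier_apply, measure_univ, Circle.norm_coe]
  -- Parseval
  set gL2 := ContinuousMap.toLp (E := ℂ) 2 haarAddCircle ℂ g with hgL2
  have hP := tsum_sq_fourierCoeff gL2
  have hPt : ∀ i : ℤ, fourierCoeff (⇑gL2) i = fourierCoeff (⇑g) i := fun i =>
    fourierCoeff_toLp g i
  have hint : (∫ t : AddCircle (1:ℝ), ‖gL2 t‖ ^ 2 ∂haarAddCircle) ≤ 1 := by
    have heqi : (∫ t : AddCircle (1:ℝ), ‖gL2 t‖ ^ 2 ∂haarAddCircle)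
        = ∫ t : AddCircle (1:ℝ), ‖g t‖ ^ 2 ∂haarAddCircle := by
      apply integral_congr_ae
      filter_upwards [ContinuousMap.coeFn_toLp (p := 2) (𝕜 := ℂ) haarAddCircle g] with t ht
      rw [ht]
    rw [heqi]
    calc (∫ t : AddCircle (1:ℝ), ‖g t‖ ^ 2 ∂haarAddCircle)
        ≤ ∫ _t : AddCircle (1:ℝ), (1:ℝ) ∂haarAddCircle := by
          apply integral_mono _ (integrable_const _)
          · intro t
            exact pow_le_one₀ (norm_nonneg _) (hgb t)
          · apply Continuous.integrable_of_hasCompactSupport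
              (((map_continuous g).norm).pow 2)
            exact HasCompactSupport.of_compactSpace _
      _ = 1 := by simp
  -- summability over ℤ
  have hsummZ : Summable fun i : ℤ => ‖fourierCoeff (⇑gL2) i‖ ^ 2 := by
    have horth := (fourierBasis (T := 1)).orthonormal
    have := horth.inner_products_summable gL2
    apply this.congr
    intro i
    rw [← HilbertBasis.repr_apply_apply, fourierBasis_repr]
  -- put it together
  have hsum_le : ∑ n ∈ F, (‖a n‖ * ρ ^ n) ^ 2
      ≤ ∑' i : ℤ, ‖fourierCoeff (⇑gL2) i‖ ^ 2 := by
    have hFsum : ∑ n ∈ F, (‖a n‖ * ρ ^ n) ^ 2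
        = ∑ i ∈ F.map ⟨(fun n : ℕ => (n : ℤ)), fun x y h => by simpa using h⟩,
            ‖fourierCoeff (⇑gL2) i‖ ^ 2 := by
      rw [Finset.sum_map]
      apply Finset.sum_congr rfl
      intro n _
      change (‖a n‖ * ρ ^ n) ^ 2 = ‖fourierCoeff (⇑gL2) (n:ℤ)‖ ^ 2
      rw [hPt, hcoeff, hnormc]
    rw [hFsum]
    exact Summable.sum_le_tsum _ (fun i _ => sq_nonneg _) hsummZ
  calc ∑ n ∈ F, (‖a n‖ * ρ ^ n) ^ 2 ≤ ∑' i : ℤ, ‖fourierCoeff (⇑gL2) i‖ ^ 2 := hsum_le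
    _ = _ := hP
    _ ≤ 1 := hint


lemma key_ineq (s : ℕ) (hs : 1 ≤ s) {x : ℝ} (hx0 : 0 ≤ x)
    (hlo : (s:ℝ) - 1 ≤ x * s) (hhi : x * (s + 1) ≤ s) :
    ∀ n : ℕ, (n : ℝ) * x ^ n ≤ s * x ^ s := by
  have hspos : (0:ℝ) < s := by exact_mod_cast hs
  -- upward part: n ≤ s
  have up : ∀ j : ℕ, ∀ n : ℕ, n + j = s → (n : ℝ) * x ^ n ≤ s * x ^ s := by
    intro j
    induction j with
    | zero => intro n hn; simp at hn; subst hn; exact le_rfl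
    | succ k ih =>
      intro n hn
      have hns : (n:ℝ) + 1 ≤ s := by
        have : n + 1 ≤ s := by omega
        exact_mod_cast this
      have step : (n : ℝ) ≤ ((n:ℝ) + 1) * x := by
        have h1 : ((n:ℝ) - 1 + 1) * s ≤ x * s * ((n:ℝ) + 1) := by nlinarith
        nlinarith
      calc (n : ℝ) * x ^ n ≤ (((n:ℝ) + 1) * x) * x ^ n := by
            apply mul_le_mul_of_nonneg_right step (pow_nonneg hx0 n)
        _ = ((n:ℝ) + 1) * x ^ (n + 1) := by ring
        _ ≤ s * x ^ s := by
            have := ih (n + 1) (by omega)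
            push_cast at this ⊢; linarith
  -- downward part: s ≤ n
  have down : ∀ n : ℕ, s ≤ n → (n : ℝ) * x ^ n ≤ s * x ^ s := by
    intro n hn
    induction n, hn using Nat.le_induction with
    | base => exact le_rfl
    | succ m hm ih =>
      have hsm : (s:ℝ) ≤ m := by exact_mod_cast hm
      have step : ((m:ℝ) + 1) * x ≤ m := by nlinarith
      push_cast
      calc ((m:ℝ) + 1) * x ^ (m + 1) = (((m:ℝ) + 1) * x) * x ^ m := by ring
        _ ≤ (m:ℝ) * x ^ m := mul_le_mul_of_nonneg_right step (pow_nonneg hx0 m)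
        _ ≤ s * x ^ s := ih
  intro n
  rcases le_or_gt n s with h | h
  · exact up (s - n) n (by omega)
  · exact down n h.le

open MeasureTheory Complex AddCircle

lemma coeff_sq_sum_le_one (a : ℕ → ℂ) (f : ℂ → ℂ)
    (hf : ∀ z ∈ Metric.ball (0 : ℂ) 1, HasSum (fun n : ℕ => a n * z ^ n) (f z))
    (hb : ∀ z ∈ Metric.ball (0 : ℂ) 1, ‖f z‖ ≤ 1) (F : Finset ℕ) :
    ∑ n ∈ F, ‖a n‖ ^ 2 ≤ 1 := by
  have hcont : Continuous fun ρ : ℝ => ∑ n ∈ F, (‖a n‖ * ρ ^ n) ^ 2 := by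
    apply continuous_finset_sum
    intro n _
    continuity
  have htend : Filter.Tendsto (fun ρ : ℝ => ∑ n ∈ F, (‖a n‖ * ρ ^ n) ^ 2)
      (nhdsWithin 1 (Set.Iio 1)) (nhds (∑ n ∈ F, ‖a n‖ ^ 2)) := by
    have := hcont.tendsto 1
    simp only [one_pow, mul_one] at this
    exact this.mono_left nhdsWithin_le_nhds
  refine le_of_tendsto htend ?_
  filter_upwards [Ioo_mem_nhdsLT_of_mem (Set.mem_Ioc.mpr ⟨zero_lt_one, le_refl (1:ℝ)⟩)] with ρ hρ
  exact parseval_sum_le_one a f hf hb hρ.1.le hρ.2 F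

/-- **Reich's area estimate (Corollary 1).** If `f(z) = Σ_{n≥1} aₙ zⁿ` with
`f(0) = 0` and `‖f‖_∞ ≤ 1`, then for integer `s ≥ 1` and
`(s-1)/s ≤ r² ≤ s/(s+1)`, `S_r f = π Σ n |aₙ|² r^{2n} ≤ π s r^{2s}`. -/
theorem area_functional_estimate (a : ℕ → ℂ) (f : ℂ → ℂ) (ha0 : a 0 = 0)
    (hf : ∀ z ∈ Metric.ball (0 : ℂ) 1, HasSum (fun n : ℕ => a n * z ^ n) (f z))
    (hb : ∀ z ∈ Metric.ball (0 : ℂ) 1, ‖f z‖ ≤ 1)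
    (s : ℕ) (hs : 1 ≤ s) (r : ℝ) (hr0 : 0 ≤ r)
    (hrlow : ((s : ℝ) - 1) / s ≤ r ^ 2) (hrhigh : r ^ 2 ≤ (s : ℝ) / (s + 1)) :
    ∑' n : ℕ, ENNReal.ofReal (Real.pi * n * ‖a n‖ ^ 2 * r ^ (2 * n)) ≤
      ENNReal.ofReal (Real.pi * s * r ^ (2 * s)) := by
  have hspos : (0:ℝ) < s := by exact_mod_cast hs
  have hx0 : (0:ℝ) ≤ r ^ 2 := sq_nonneg r
  have hlo : (s:ℝ) - 1 ≤ r ^ 2 * s := by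
    rw [div_le_iff₀ hspos] at hrlow; linarith
  have hhi : r ^ 2 * ((s:ℝ) + 1) ≤ s := by
    rw [le_div_iff₀ (by positivity)] at hrhigh; linarith
  have hkey := key_ineq s hs hx0 hlo hhi
  have claim := coeff_sq_sum_le_one a f hf hb
  have hsum2 : Summable fun n => ‖a n‖ ^ 2 :=
    summable_of_sum_range_le (fun n => sq_nonneg _) (fun n => claim (Finset.range n))
  have htsum1 : ∑' n, ‖a n‖ ^ 2 ≤ 1 := Summable.tsum_le_of_sum_le hsum2 claim
  set u : ℕ → ℝ := fun n => Real.pi * n * ‖a n‖ ^ 2 * r ^ (2 * n) with hu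
  set v : ℕ → ℝ := fun n => (Real.pi * s * r ^ (2 * s)) * ‖a n‖ ^ 2 with hv
  have hu0 : ∀ n, 0 ≤ u n := by
    intro n; simp only [hu]; positivity
  have hle : ∀ n, u n ≤ v n := by
    intro n
    simp only [hu, hv]
    calc Real.pi * n * ‖a n‖ ^ 2 * r ^ (2 * n)
        = (Real.pi * ‖a n‖ ^ 2) * ((n:ℝ) * (r ^ 2) ^ n) := by rw [pow_mul]; ring
      _ ≤ (Real.pi * ‖a n‖ ^ 2) * ((s:ℝ) * (r ^ 2) ^ s) := by
          exact mul_le_mul_of_nonneg_left (hkey n) (by positivity)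
      _ = (Real.pi * s * r ^ (2 * s)) * ‖a n‖ ^ 2 := by rw [pow_mul]; ring
  have hsumv : Summable v := hsum2.mul_left _
  have hsumu : Summable u := Summable.of_nonneg_of_le hu0 hle hsumv
  have htsum : ∑' n, u n ≤ Real.pi * s * r ^ (2 * s) := by
    calc ∑' n, u n ≤ ∑' n, v n := Summable.tsum_le_tsum hle hsumu hsumv
      _ = (Real.pi * s * r ^ (2 * s)) * ∑' n, ‖a n‖ ^ 2 := tsum_mul_left
      _ ≤ (Real.pi * s * r ^ (2 * s)) * 1 := by
          exact mul_le_mul_of_nonneg_left htsum1 (by positivity)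
      _ = _ := mul_one _
  calc ∑' n : ℕ, ENNReal.ofReal (u n) = ENNReal.ofReal (∑' n, u n) :=
        (ENNReal.ofReal_tsum_of_nonneg hu0 hsumu).symm
    _ ≤ ENNReal.ofReal (Real.pi * s * r ^ (2 * s)) := ENNReal.ofReal_le_ofReal htsum
end
end

section
/- Let m ≥ p ≥ 0 be integers with m ≥ 1, s ∈ ℕ_0, and let f(z) = Σ_{n≥0} a_{mn+p} z^{mn+p} be analytic in the unit disk with ‖f‖_∞ ≤ 1. Then for all r ≥ 0 with (m(s-1)+p)/(ms+p) ≤ r^{2m} ≤ (ms+p)/(m(s+1)+p), one has Σ_{n≥0} (mn+p) |a_{mn+p}|^2 r^{2(mn+p)} ≤ (ms+p) r^{2(ms+p)}. -/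
open MeasureTheory Complex Filter AddCircle Real
open scoped ENNReal NNReal Topology

noncomputable section

lemma fourier_orth {T : ℝ} [hT : Fact (0 < T)] (i j : ℤ) :
    ∫ t : AddCircle T, fourier (-i) t * fourier j t ∂haarAddCircle
      = if i = j then 1 else 0 := by
  have h := orthonormal_fourier (T := T)
  rw [orthonormal_iff_ite] at h
  have h2 := h i j
  rw [ContinuousMap.inner_toLp (haarAddCircle) (fourier i) (fourier j)] at h2
  simpa [← fourier_neg, mul_comm] using h2

lemma parseval_finset (m p : ℕ) (hm : 1 ≤ m)
    (a : ℕ → ℂ) (f : ℂ → ℂ)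
    (hf : ∀ z ∈ Metric.ball (0 : ℂ) 1,
      HasSum (fun n : ℕ => a n * z ^ (m * n + p)) (f z))
    (hb : ∀ z ∈ Metric.ball (0 : ℂ) 1, ‖f z‖ ≤ 1)
    (ρ : ℝ) (h0 : 0 ≤ ρ) (h1 : ρ < 1) (F : Finset ℕ) :
    ∑ n ∈ F, ‖a n‖ ^ 2 * ρ ^ (2 * (m * n + p)) ≤ 1 := by
  haveI : Fact (0 < 2 * π) := ⟨by positivity⟩
  set k : ℕ → ℕ := fun n => m * n + p with hk
  set b : ℕ → ℂ := fun n => a n * (ρ : ℂ) ^ (k n) with hbdef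
  -- summability of ‖b n‖
  set σ : ℝ := (1 + ρ) / 2 with hσ
  have hσ0 : 0 < σ := by positivity
  have hσ1 : σ < 1 := by simp only [hσ]; linarith
  have hρσ : ρ < σ := by simp only [hσ]; linarith
  have hz0 : (σ : ℂ) ∈ Metric.ball (0 : ℂ) 1 := by
    simp [Complex.norm_real, _root_.abs_of_nonneg hσ0.le, hσ1]
  have hsum0 : Summable (fun n => a n * (σ : ℂ) ^ (k n)) := (hf _ hz0).summable
  obtain ⟨C, hC⟩ := (hsum0.tendsto_atTop_zero.norm).bddAbove_range
  have hCbound : ∀ n, ‖a n‖ * σ ^ (k n) ≤ C := by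
    intro n
    have := hC ⟨n, rfl⟩
    simpa [norm_mul, Complex.norm_real, _root_.abs_of_nonneg hσ0.le] using this
  have hC0 : 0 ≤ C := le_trans (by positivity) (hCbound 0)
  set q : ℝ := ρ / σ with hq
  have hq0 : 0 ≤ q := by positivity
  have hq1 : q < 1 := by rw [hq, div_lt_one hσ0]; exact hρσ
  have hbb : ∀ n, ‖b n‖ ≤ C * q ^ (k n) := by
    intro n
    have : ‖b n‖ = ‖a n‖ * ρ ^ (k n) := by
      simp [hbdef, norm_mul, norm_pow, Complex.norm_real, _root_.abs_of_nonneg h0]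
    rw [this]
    have hρeq : ρ ^ (k n) = σ ^ (k n) * q ^ (k n) := by
      rw [← mul_pow, hq, mul_div_cancel₀ _ hσ0.ne']
    rw [hρeq, ← mul_assoc]
    exact mul_le_mul_of_nonneg_right (hCbound n) (by positivity)
  have hqsum : Summable (fun n : ℕ => C * q ^ (k n)) := by
    have : ∀ n, q ^ (k n) = q ^ p * (q ^ m) ^ n := by
      intro n; rw [← pow_mul, ← pow_add, hk]; ring_nf
    simp_rw [this]
    have hqm : q ^ m < 1 := by
      calc q ^ m ≤ q ^ 1 := pow_le_pow_of_le_one hq0 hq1.le hm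
      _ = q := pow_one q
      _ < 1 := hq1
    exact ((summable_geometric_of_lt_one (by positivity) hqm).mul_left _).mul_left _
  have hbsum : Summable (fun n => ‖b n‖) :=
    Summable.of_nonneg_of_le (fun n => norm_nonneg _) hbb hqsum
  -- pointwise norm bound for fourier
  have hfn : ∀ (j : ℤ) (x : AddCircle (2 * π)), ‖fourier j x‖ ≤ 1 := by
    intro j x
    calc ‖fourier j x‖ ≤ ‖fourier (T := 2 * π) j‖ := ContinuousMap.norm_coe_le_norm _ x
    _ = 1 := fourier_norm j
  have hbnd : ∀ (n : ℕ) (x : AddCircle (2 * π)), ‖b n * fourier (k n : ℤ) x‖ ≤ ‖b n‖ := by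
    intro n x
    rw [norm_mul]
    calc ‖b n‖ * ‖fourier (k n : ℤ) x‖ ≤ ‖b n‖ * 1 :=
      mul_le_mul_of_nonneg_left (hfn _ x) (norm_nonneg _)
    _ = ‖b n‖ := mul_one _
  -- the boundary function
  set G : AddCircle (2 * π) → ℂ := fun x => ∑' n, b n * fourier (k n : ℤ) x with hGdef
  have hGcont : Continuous G :=
    continuous_tsum (fun n => (continuous_const.mul (fourier _).continuous)) hbsum hbnd
  -- identification on points
  have hnorm : ∀ θ : ℝ, ‖(ρ : ℂ) * Complex.exp (θ * Complex.I)‖ = ρ := by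
    intro θ
    rw [norm_mul, Complex.norm_real, Real.norm_eq_abs,
      Complex.norm_exp_ofReal_mul_I, _root_.abs_of_nonneg h0, mul_one]
  have hmem : ∀ θ : ℝ, (ρ : ℂ) * Complex.exp (θ * Complex.I) ∈ Metric.ball (0 : ℂ) 1 := by
    intro θ
    simp [Metric.mem_ball, dist_zero_right, hnorm θ, h1, _root_.abs_of_nonneg h0]
  have hterm : ∀ (n : ℕ) (θ : ℝ), b n * fourier (k n : ℤ) (θ : AddCircle (2 * π))
      = a n * ((ρ : ℂ) * Complex.exp (θ * Complex.I)) ^ (m * n + p) := by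
    intro n θ
    have hkn : k n = m * n + p := rfl
    rw [fourier_coe_apply, hbdef, mul_pow, mul_assoc, hkn, ← Complex.exp_nat_mul]
    have hπ : (π : ℂ) ≠ 0 := by exact_mod_cast Real.pi_ne_zero
    refine congrArg (fun t => a n * ((ρ:ℂ) ^ (m*n+p) * Complex.exp t)) ?_
    push_cast
    field_simp
  have hGpt : ∀ θ : ℝ, HasSum (fun n => b n * fourier (k n : ℤ) (θ : AddCircle (2 * π)))
      (f ((ρ : ℂ) * Complex.exp (θ * Complex.I))) := by
    intro θ
    have h := hf _ (hmem θ)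
    have he : (fun n => b n * fourier (k n : ℤ) (θ : AddCircle (2 * π)))
        = fun n => a n * ((ρ : ℂ) * Complex.exp (θ * Complex.I)) ^ (m * n + p) :=
      funext fun n => hterm n θ
    rw [he]
    exact h
  have hGval : ∀ θ : ℝ, G (θ : AddCircle (2 * π)) = f ((ρ : ℂ) * Complex.exp (θ * Complex.I)) :=
    fun θ => (hGpt θ).tsum_eq
  have hGle : ∀ x : AddCircle (2 * π), ‖G x‖ ≤ 1 := by
    intro x
    induction x using QuotientAddGroup.induction_on with
    | H θ => rw [hGval θ]; exact hb _ (hmem θ)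
  -- injectivity of exponents
  have hkinj : Function.Injective k := by
    intro x y hxy
    simp only [hk] at hxy
    have : m * x = m * y := by omega
    exact Nat.eq_of_mul_eq_mul_left hm this
  -- Fourier coefficients of G
  have hswap : ∀ j : ℤ, fourierCoeff G j = ∑' n, b n * (if j = (k n : ℤ) then 1 else 0) := by
    intro j
    rw [fourierCoeff]
    have h1 : ∀ t : AddCircle (2 * π), (fourier (-j) t : ℂ) • G t
        = ∑' n, fourier (-j) t * (b n * fourier (k n : ℤ) t) := by
      intro t
      rw [smul_eq_mul, hGdef]
      exact (tsum_mul_left).symm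
    simp_rw [h1]
    rw [integral_tsum]
    · congr 1
      funext n
      have h2 : ∀ t : AddCircle (2 * π), fourier (-j) t * (b n * fourier (k n : ℤ) t)
          = b n * (fourier (-j) t * fourier (k n : ℤ) t) := fun t => by ring
      simp_rw [h2]
      rw [integral_const_mul, fourier_orth j (k n : ℤ)]
    · intro n
      exact (((fourier _).continuous.mul
        (continuous_const.mul (fourier _).continuous))).aestronglyMeasurable
    · have hbound : ∀ n : ℕ, ∫⁻ t : AddCircle (2 * π),
          ‖fourier (-j) t * (b n * fourier (k n : ℤ) t)‖₊ ∂haarAddCircle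
          ≤ (‖b n‖₊ : ℝ≥0∞) := by
        intro n
        have hpt : ∀ t : AddCircle (2 * π),
            (‖fourier (-j) t * (b n * fourier (k n : ℤ) t)‖₊ : ℝ≥0∞) ≤ (‖b n‖₊ : ℝ≥0∞) := by
          intro t
          rw [ENNReal.coe_le_coe, ← NNReal.coe_le_coe, coe_nnnorm, coe_nnnorm]
          calc ‖fourier (-j) t * (b n * fourier (k n : ℤ) t)‖
              = ‖fourier (-j) t‖ * (‖b n‖ * ‖fourier (k n : ℤ) t‖) := by
                rw [norm_mul, norm_mul]
            _ ≤ 1 * (‖b n‖ * 1) := by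
                apply mul_le_mul (hfn _ t) _ (by positivity) zero_le_one
                exact mul_le_mul_of_nonneg_left (hfn _ t) (norm_nonneg _)
            _ = ‖b n‖ := by ring
        calc ∫⁻ t : AddCircle (2 * π),
            ‖fourier (-j) t * (b n * fourier (k n : ℤ) t)‖₊ ∂haarAddCircle
            ≤ ∫⁻ _ : AddCircle (2 * π), (‖b n‖₊ : ℝ≥0∞) ∂haarAddCircle :=
              lintegral_mono hpt
          _ = ‖b n‖₊ := by rw [lintegral_const, measure_univ, mul_one]
      have hne : (∑' n, (‖b n‖₊ : ℝ≥0∞)) ≠ ⊤ := by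
        rw [ENNReal.tsum_coe_ne_top_iff_summable]
        exact NNReal.summable_coe.mp (by simpa using hbsum)
      exact ne_top_of_le_ne_top hne (ENNReal.tsum_le_tsum hbound)
  have hcoeff : ∀ n₀ : ℕ, fourierCoeff G ((k n₀ : ℕ) : ℤ) = b n₀ := by
    intro n₀
    rw [hswap]
    rw [tsum_eq_single n₀]
    · simp
    · intro n hn
      have : ((k n₀ : ℕ) : ℤ) ≠ ((k n : ℕ) : ℤ) := by
        intro hcon
        exact hn (hkinj (by exact_mod_cast hcon.symm))
      simp [this]
  -- Parseval
  set Gc : C(AddCircle (2 * π), ℂ) := ⟨G, hGcont⟩ with hGc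
  set gLp : Lp ℂ 2 (@haarAddCircle (2 * π) _) := ContinuousMap.toLp 2 haarAddCircle ℂ Gc with hGL
  have hcoeqf : ∀ i : ℤ, fourierCoeff (gLp : AddCircle (2 * π) → ℂ) i = fourierCoeff G i :=
    fun i => fourierCoeff_toLp Gc i
  have hpars := tsum_sq_fourierCoeff gLp
  have hint : ∫ t : AddCircle (2 * π), ‖gLp t‖ ^ 2 ∂haarAddCircle ≤ 1 := by
    have hae : ∀ᵐ t ∂(@haarAddCircle (2 * π) _), ‖gLp t‖ ^ 2 ≤ 1 := by
      filter_upwards [ContinuousMap.coeFn_toLp (p := 2) haarAddCircle (𝕜 := ℂ) Gc] with t ht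
      rw [ht]
      exact pow_le_one₀ (norm_nonneg _) (hGle t)
    calc ∫ t : AddCircle (2 * π), ‖gLp t‖ ^ 2 ∂haarAddCircle
        ≤ ∫ _ : AddCircle (2 * π), (1 : ℝ) ∂haarAddCircle :=
          integral_mono_of_nonneg (Filter.Eventually.of_forall (fun t => by positivity))
            (integrable_const 1) hae
      _ = 1 := by rw [integral_const]; simp
  have hsummable : Summable (fun i : ℤ => ‖fourierCoeff G i‖ ^ 2) := by
    have h := (lp.memℓp (fourierBasis.repr gLp)).summable
      (by norm_num : (0 : ℝ) < (2 : ℝ≥0∞).toReal)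
    have heq : (fun i : ℤ => ‖fourierBasis.repr gLp i‖ ^ (2 : ℝ≥0∞).toReal)
        = fun i : ℤ => ‖fourierCoeff G i‖ ^ 2 := by
      funext i
      rw [fourierBasis_repr, hcoeqf i]
      norm_num
    rwa [heq] at h
  -- assemble
  have hterm2 : ∀ n, ‖a n‖ ^ 2 * ρ ^ (2 * (m * n + p)) = ‖fourierCoeff G ((k n : ℕ) : ℤ)‖ ^ 2 := by
    intro n
    rw [hcoeff n, hbdef]
    simp only [norm_mul, norm_pow, Complex.norm_real, Real.norm_eq_abs,
      _root_.abs_of_nonneg h0]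
    rw [mul_pow, ← pow_mul, hk]
    ring_nf
  calc ∑ n ∈ F, ‖a n‖ ^ 2 * ρ ^ (2 * (m * n + p))
      = ∑ n ∈ F, ‖fourierCoeff G ((k n : ℕ) : ℤ)‖ ^ 2 :=
        Finset.sum_congr rfl (fun n _ => hterm2 n)
    _ = ∑ i ∈ F.image (fun n => ((k n : ℕ) : ℤ)), ‖fourierCoeff G i‖ ^ 2 := by
        rw [Finset.sum_image]
        intro x _ y _ hxy
        exact hkinj (by exact_mod_cast (show ((k x : ℕ) : ℤ) = ((k y : ℕ) : ℤ) from hxy))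
    _ ≤ ∑' i : ℤ, ‖fourierCoeff G i‖ ^ 2 :=
        hsummable.sum_le_tsum _ (fun i _ => by positivity)
    _ = ∫ t : AddCircle (2 * π), ‖gLp t‖ ^ 2 ∂haarAddCircle := by
        rw [← hpars]
        exact tsum_congr (fun i => by rw [hcoeqf i])
    _ ≤ 1 := hint

lemma coeff_sq_le_one (m p : ℕ) (hm : 1 ≤ m)
    (a : ℕ → ℂ) (f : ℂ → ℂ)
    (hf : ∀ z ∈ Metric.ball (0 : ℂ) 1,
      HasSum (fun n : ℕ => a n * z ^ (m * n + p)) (f z))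
    (hb : ∀ z ∈ Metric.ball (0 : ℂ) 1, ‖f z‖ ≤ 1) :
    Summable (fun n => ‖a n‖ ^ 2) ∧ ∑' n, ‖a n‖ ^ 2 ≤ 1 := by
  have key : ∀ F : Finset ℕ, ∑ n ∈ F, ‖a n‖ ^ 2 ≤ 1 := by
    intro F
    set φ : ℝ → ℝ := fun ρ => ∑ n ∈ F, ‖a n‖ ^ 2 * ρ ^ (2 * (m * n + p)) with hφ
    have hcont : Continuous φ := by
      apply continuous_finset_sum
      intro n _
      exact continuous_const.mul (continuous_pow _)
    have hseq : Tendsto (fun j : ℕ => (1 - 1 / (j + 1) : ℝ)) atTop (𝓝 1) := by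
      have h := tendsto_one_div_add_atTop_nhds_zero_nat (𝕜 := ℝ)
      have := tendsto_const_nhds (x := (1:ℝ)) (f := (atTop : Filter ℕ)) |>.sub h
      simpa using this
    have hcomp : Tendsto (fun j : ℕ => φ (1 - 1 / (j + 1))) atTop (𝓝 (φ 1)) :=
      (hcont.tendsto 1).comp hseq
    have hev : ∀ j : ℕ, φ (1 - 1 / (j + 1)) ≤ 1 := by
      intro j
      have h1 : (0:ℝ) < 1 / (j + 1) := by positivity
      have h2 : (1:ℝ) / (j + 1) ≤ 1 := by
        rw [div_le_one (by positivity)]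
        simp
      exact parseval_finset m p hm a f hf hb _ (by linarith) (by linarith) F
    have h1 : φ 1 ≤ 1 := le_of_tendsto hcomp (Filter.Eventually.of_forall hev)
    simpa [hφ] using h1
  have hsummable : Summable (fun n => ‖a n‖ ^ 2) :=
    summable_of_sum_le (fun n => by positivity) key
  exact ⟨hsummable, hsummable.tsum_le_of_sum_le key⟩

set_option maxHeartbeats 1000000 in
lemma weight_mono (m p s : ℕ) (hm : 1 ≤ m) (r : ℝ) (hr0 : 0 ≤ r)
    (hrlow : ((m : ℝ) * ((s : ℝ) - 1) + p) / ((m : ℝ) * s + p) ≤ r ^ (2 * m))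
    (hrhigh : r ^ (2 * m) ≤ ((m : ℝ) * s + p) / ((m : ℝ) * ((s : ℝ) + 1) + p)) (n : ℕ) :
    ((m * n + p : ℕ) : ℝ) * r ^ (2 * (m * n + p))
      ≤ ((m * s + p : ℕ) : ℝ) * r ^ (2 * (m * s + p)) := by
  set x : ℝ := r ^ 2 with hx
  have hx0 : 0 ≤ x := sq_nonneg r
  have hxm : r ^ (2 * m) = x ^ m := by rw [hx, ← pow_mul]
  have hM : (1:ℝ) ≤ (m:ℝ) := by exact_mod_cast hm
  have hP : (0:ℝ) ≤ (p:ℝ) := Nat.cast_nonneg p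
  have hXm : (0:ℝ) ≤ x ^ m := pow_nonneg hx0 m
  set w : ℕ → ℝ := fun j => ((m * j + p : ℕ) : ℝ) * x ^ (m * j + p) with hw
  have hgoal : ∀ j, ((m * j + p : ℕ) : ℝ) * r ^ (2 * (m * j + p)) = w j := by
    intro j
    simp only [hw]
    rw [hx, pow_mul]
  rw [hgoal n, hgoal s]
  have hup : ∀ j, j < s → w j ≤ w (j + 1) := by
    intro j hj
    have hS : ((j:ℝ) + 1) ≤ (s:ℝ) := by exact_mod_cast hj
    have hJ : (0:ℝ) ≤ (j:ℝ) := Nat.cast_nonneg j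
    have hD : (0:ℝ) < (m:ℝ) * s + p := by nlinarith
    have hlow' : ((m:ℝ) * ((s:ℝ) - 1) + p) ≤ x ^ m * ((m:ℝ) * s + p) := by
      rw [div_le_iff₀ hD, hxm] at hrlow
      exact hrlow
    have h1 : ((m:ℝ) * j + p) * ((m:ℝ) * s + p)
        ≤ ((m:ℝ) * ((j:ℝ) + 1) + p) * ((m:ℝ) * ((s:ℝ) - 1) + p) := by
      nlinarith [mul_nonneg (mul_nonneg (by linarith : (0:ℝ) ≤ (m:ℝ))
        (by linarith : (0:ℝ) ≤ (m:ℝ))) (by linarith : (0:ℝ) ≤ (s:ℝ) - 1 - (j:ℝ))]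
    have h2 : ((m:ℝ) * ((j:ℝ) + 1) + p) * ((m:ℝ) * ((s:ℝ) - 1) + p)
        ≤ ((m:ℝ) * ((j:ℝ) + 1) + p) * (x ^ m * ((m:ℝ) * s + p)) :=
      mul_le_mul_of_nonneg_left hlow' (by nlinarith)
    have hkey : ((m * j + p : ℕ) : ℝ) ≤ ((m * (j + 1) + p : ℕ) : ℝ) * x ^ m := by
      push_cast
      nlinarith [h1, h2, hD]
    have hexp : m * (j + 1) + p = (m * j + p) + m := by ring
    calc w j = ((m * j + p : ℕ) : ℝ) * x ^ (m * j + p) := by simp only [hw]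
      _ ≤ (((m * (j + 1) + p : ℕ) : ℝ) * x ^ m) * x ^ (m * j + p) :=
          mul_le_mul_of_nonneg_right hkey (pow_nonneg hx0 _)
      _ = ((m * (j + 1) + p : ℕ) : ℝ) * x ^ ((m * j + p) + m) := by
          rw [pow_add]; ring
      _ = w (j + 1) := by simp only [hw]; rw [hexp]
  have hdown : ∀ j, s ≤ j → w (j + 1) ≤ w j := by
    intro j hj
    have hS : (s:ℝ) ≤ (j:ℝ) := by exact_mod_cast hj
    have hS0 : (0:ℝ) ≤ (s:ℝ) := Nat.cast_nonneg s
    have hD' : (0:ℝ) < (m:ℝ) * ((s:ℝ) + 1) + p := by nlinarith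
    have hhigh' : x ^ m * ((m:ℝ) * ((s:ℝ) + 1) + p) ≤ (m:ℝ) * s + p := by
      rw [le_div_iff₀ hD', hxm] at hrhigh
      exact hrhigh
    have h1 : ((m:ℝ) * s + p) * ((m:ℝ) * ((j:ℝ) + 1) + p)
        ≤ ((m:ℝ) * j + p) * ((m:ℝ) * ((s:ℝ) + 1) + p) := by
      nlinarith [mul_nonneg (mul_nonneg (by linarith : (0:ℝ) ≤ (m:ℝ))
        (by linarith : (0:ℝ) ≤ (m:ℝ))) (by linarith : (0:ℝ) ≤ (j:ℝ) - (s:ℝ))]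
    have h2 : ((m:ℝ) * ((j:ℝ) + 1) + p) * (x ^ m * ((m:ℝ) * ((s:ℝ) + 1) + p))
        ≤ ((m:ℝ) * ((j:ℝ) + 1) + p) * ((m:ℝ) * s + p) :=
      mul_le_mul_of_nonneg_left hhigh' (by nlinarith)
    have hkey : ((m * (j + 1) + p : ℕ) : ℝ) * x ^ m ≤ ((m * j + p : ℕ) : ℝ) := by
      push_cast
      nlinarith [h1, h2, hD']
    have hexp : m * (j + 1) + p = (m * j + p) + m := by ring
    calc w (j + 1) = ((m * (j + 1) + p : ℕ) : ℝ) * x ^ ((m * j + p) + m) := by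
          simp only [hw]; rw [hexp]
      _ = (((m * (j + 1) + p : ℕ) : ℝ) * x ^ m) * x ^ (m * j + p) := by
          rw [pow_add]; ring
      _ ≤ ((m * j + p : ℕ) : ℝ) * x ^ (m * j + p) :=
          mul_le_mul_of_nonneg_right hkey (pow_nonneg hx0 _)
      _ = w j := by simp only [hw]
  rcases le_total n s with hns | hns
  · have hchain : ∀ d, d ≤ s → w (s - d) ≤ w s := by
      intro d
      induction d with
      | zero => intro _; simp
      | succ d ih =>
        intro hd
        have h1 : s - (d + 1) < s := by omega
        have h2 : s - (d + 1) + 1 = s - d := by omega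
        have := hup _ h1
        rw [h2] at this
        exact this.trans (ih (by omega))
    have h3 : n = s - (s - n) := by omega
    rw [h3]
    exact hchain (s - n) (by omega)
  · have hchain : ∀ d, w (s + d) ≤ w s := by
      intro d
      induction d with
      | zero => simp
      | succ d ih =>
        have := hdown (s + d) (Nat.le_add_right s d)
        exact this.trans ih
    have h3 : n = s + (n - s) := by omega
    rw [h3]
    exact hchain (n - s)

end



/-- **Theorem 2.** Area estimate for lacunary series
`f(z) = Σ_{n≥0} a_{mn+p} z^{mn+p}` with `m ≥ p ≥ 0`, `m ≥ 1`: if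
`(m(s-1)+p)/(ms+p) ≤ r^{2m} ≤ (ms+p)/(m(s+1)+p)`, then
`Σ (mn+p)|a_{mn+p}|² r^{2(mn+p)} ≤ (ms+p) r^{2(ms+p)}`. -/
theorem area_functional_lacunary (m p : ℕ) (hm : 1 ≤ m) (hpm : p ≤ m)
    (a : ℕ → ℂ) (f : ℂ → ℂ)
    (hf : ∀ z ∈ Metric.ball (0 : ℂ) 1,
      HasSum (fun n : ℕ => a n * z ^ (m * n + p)) (f z))
    (hb : ∀ z ∈ Metric.ball (0 : ℂ) 1, ‖f z‖ ≤ 1)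
    (s : ℕ) (r : ℝ) (hr0 : 0 ≤ r)
    (hrlow : ((m : ℝ) * ((s : ℝ) - 1) + p) / ((m : ℝ) * s + p) ≤ r ^ (2 * m))
    (hrhigh : r ^ (2 * m) ≤ ((m : ℝ) * s + p) / ((m : ℝ) * ((s : ℝ) + 1) + p)) :
    ∑' n : ℕ, ENNReal.ofReal (((m * n + p : ℕ) : ℝ) * ‖a n‖ ^ 2 * r ^ (2 * (m * n + p))) ≤
      ENNReal.ofReal (((m * s + p : ℕ) : ℝ) * r ^ (2 * (m * s + p))) := by

  obtain ⟨hsum, hle⟩ := coeff_sq_le_one m p hm a f hf hb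
  have hw := weight_mono m p s hm r hr0 hrlow hrhigh
  set W : ℝ := ((m * s + p : ℕ) : ℝ) * r ^ (2 * (m * s + p)) with hW
  have hW0 : 0 ≤ W := by positivity
  calc ∑' n : ℕ, ENNReal.ofReal (((m * n + p : ℕ) : ℝ) * ‖a n‖ ^ 2 * r ^ (2 * (m * n + p)))
      ≤ ∑' n : ℕ, ENNReal.ofReal (W * ‖a n‖ ^ 2) := by
        apply ENNReal.tsum_le_tsum
        intro n
        apply ENNReal.ofReal_le_ofReal
        have h1 : ((m * n + p : ℕ) : ℝ) * ‖a n‖ ^ 2 * r ^ (2 * (m * n + p))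
            = (((m * n + p : ℕ) : ℝ) * r ^ (2 * (m * n + p))) * ‖a n‖ ^ 2 := by ring
        rw [h1]
        exact mul_le_mul_of_nonneg_right (hw n) (by positivity)
    _ = ENNReal.ofReal W * ∑' n : ℕ, ENNReal.ofReal (‖a n‖ ^ 2) := by
        simp_rw [ENNReal.ofReal_mul hW0]
        rw [ENNReal.tsum_mul_left]
    _ ≤ ENNReal.ofReal W * 1 := by
        apply mul_le_mul_right
        rw [← ENNReal.ofReal_one]
        rw [← ENNReal.ofReal_tsum_of_nonneg (fun n => by positivity) hsum]
        exact ENNReal.ofReal_le_ofReal hle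
    _ = ENNReal.ofReal W := mul_one _
end

section
/- Let f(z) = Σ_{n≥0} a_n z^n be analytic in the unit disk with ‖f‖_∞ ≤ 1. Then for all 0 ≤ r ≤ 3^{-1/6}, one has Σ_{n≥1} n |a_n|^2 r^{2n} ≤ 1, i.e., S_r f ≤ π ‖f‖_∞^2. Moreover 3^{-1/6} is the best possible constant, with extremal functions f(z) = C z^3, |C| = 1. -/
open MeasureTheory Complex Filter Real

private lemma aux_cube_le (n : ℕ) : n ^ 3 ≤ 3 ^ n := by
  induction n with
  | zero => norm_num
  | succ k ih =>
    rcases Nat.lt_or_ge k 3 with h | h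
    · interval_cases k <;> norm_num
    · have h1 : (k + 1) ^ 3 ≤ 3 * k ^ 3 := by
        nlinarith [Nat.mul_le_mul h (Nat.le_refl (k * k)), Nat.mul_le_mul h h, h]
      calc (k + 1) ^ 3 ≤ 3 * k ^ 3 := h1
        _ ≤ 3 * 3 ^ k := Nat.mul_le_mul_left _ ih
        _ = 3 ^ (k + 1) := by ring

private lemma aux_nr (n : ℕ) {r : ℝ} (hr0 : 0 ≤ r) (hr : r ≤ (3 : ℝ) ^ (-(1 : ℝ) / 6)) :
    (n : ℝ) * r ^ (2 * n) ≤ 1 := by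
  have h31 : (0:ℝ) < 3 := by norm_num
  have h1 : r ^ (2 * n) ≤ ((3 : ℝ) ^ (-(1 : ℝ) / 6)) ^ (2 * n) := pow_le_pow_left₀ hr0 hr _
  have h2 : ((3 : ℝ) ^ (-(1 : ℝ) / 6)) ^ (2 * n) = ((3 : ℝ) ^ ((n : ℝ) / 3))⁻¹ := by
    rw [← Real.rpow_natCast ((3 : ℝ) ^ (-(1 : ℝ) / 6)) (2 * n), ← Real.rpow_mul h31.le,
      ← Real.rpow_neg_one ((3:ℝ) ^ ((n:ℝ)/3)), ← Real.rpow_mul h31.le]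
    congr 1
    push_cast
    ring
  have hpos : (0:ℝ) < (3 : ℝ) ^ ((n : ℝ) / 3) := Real.rpow_pos_of_pos h31 _
  have hn3 : (n : ℝ) ≤ (3 : ℝ) ^ ((n : ℝ) / 3) := by
    have hc : ((3 : ℝ) ^ ((n : ℝ) / 3)) ^ (3 : ℕ) = (3 : ℝ) ^ (n : ℕ) := by
      rw [← Real.rpow_natCast ((3 : ℝ) ^ ((n : ℝ) / 3)) 3, ← Real.rpow_mul h31.le,
        show ((n : ℝ) / 3 * ((3:ℕ):ℝ)) = (n : ℝ) by push_cast; ring, Real.rpow_natCast]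
    have hcube : (n : ℝ) ^ (3 : ℕ) ≤ ((3 : ℝ) ^ ((n : ℝ) / 3)) ^ (3 : ℕ) := by
      rw [hc]
      exact_mod_cast aux_cube_le n
    exact le_of_pow_le_pow_left₀ (by norm_num) hpos.le hcube
  calc (n : ℝ) * r ^ (2 * n) ≤ (n : ℝ) * ((3 : ℝ) ^ ((n : ℝ) / 3))⁻¹ := by
        rw [← h2] at *
        exact mul_le_mul_of_nonneg_left h1 (Nat.cast_nonneg n)
    _ ≤ 1 := by
        rw [← div_eq_mul_inv, div_le_one hpos]
        exact hn3

/-- Parseval-type bound: partial sums of `‖a n‖² ρ^{2n}` are at most 1. -/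
private lemma parseval_bound (a : ℕ → ℂ) (f : ℂ → ℂ)
    (hsum : ∀ z ∈ Metric.ball (0 : ℂ) 1, HasSum (fun n : ℕ => a n * z ^ n) (f z))
    (hb : ∀ z ∈ Metric.ball (0 : ℂ) 1, ‖f z‖ ≤ 1)
    {ρ : ℝ} (h0 : 0 ≤ ρ) (h1 : ρ < 1) (s : Finset ℕ) :
    ∑ n ∈ s, ‖a n‖ ^ 2 * ρ ^ (2 * n) ≤ 1 := by
  haveI : Fact (0 < (1:ℝ)) := ⟨one_pos⟩
  -- the coefficients of the circle function
  set c : ℕ → ℂ := fun n => a n * (ρ : ℂ) ^ n with hc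
  have hcn : ∀ n, ‖c n‖ = ‖a n‖ * ρ ^ n := by
    intro n
    rw [hc]
    rw [norm_mul, norm_pow, Complex.norm_real, Real.norm_eq_abs, _root_.abs_of_nonneg h0]
  -- summability of ‖c n‖
  set ρ' : ℝ := (1 + ρ) / 2 with hρ'
  have hρ'0 : 0 < ρ' := by positivity
  have hρ'1 : ρ' < 1 := by simp only [hρ']; linarith
  have hρρ' : ρ < ρ' := by simp only [hρ']; linarith
  clear_value ρ'
  have hz' : ((ρ' : ℂ)) ∈ Metric.ball (0 : ℂ) 1 := by
    rw [Metric.mem_ball, dist_zero_right, Complex.norm_real, Real.norm_eq_abs,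
      _root_.abs_of_nonneg hρ'0.le]
    exact hρ'1
  have hS : Summable (fun n => a n * (ρ' : ℂ) ^ n) := (hsum _ hz').summable
  have htend : Tendsto (fun n => ‖a n * (ρ' : ℂ) ^ n‖) atTop (nhds 0) := by
    simpa using hS.tendsto_atTop_zero.norm
  obtain ⟨C, hC⟩ := htend.bddAbove_range
  have hCle : ∀ n, ‖a n‖ * ρ' ^ n ≤ C := by
    intro n
    have h5 : ‖a n * (ρ' : ℂ) ^ n‖ ≤ C := hC (Set.mem_range_self n)
    rwa [norm_mul, norm_pow, Complex.norm_real, Real.norm_eq_abs,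
      _root_.abs_of_nonneg hρ'0.le] at h5
  have hgeo : Summable (fun n : ℕ => C * (ρ / ρ') ^ n) :=
    (summable_geometric_of_lt_one (by positivity) (by rw [div_lt_one hρ'0]; exact hρρ')).mul_left C
  have hsummable : Summable (fun n => ‖a n‖ * ρ ^ n) := by
    refine Summable.of_nonneg_of_le (fun n => by positivity) (fun n => ?_) hgeo
    have hne : ρ' ^ n ≠ 0 := by positivity
    have h6 : ‖a n‖ * ρ ^ n = (‖a n‖ * ρ' ^ n) * (ρ / ρ') ^ n := by
      rw [div_pow]
      field_simp
    rw [h6]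
    exact mul_le_mul_of_nonneg_right (hCle n) (by positivity)
  -- construct the continuous function on AddCircle 1
  have hnormterm : ∀ n, ‖c n • (fourier n : C(AddCircle (1:ℝ), ℂ))‖ ≤ ‖a n‖ * ρ ^ n := by
    intro n
    rw [norm_smul, fourier_norm, mul_one, hcn]
  have hsm : Summable (fun n => c n • (fourier (n : ℤ) : C(AddCircle (1:ℝ), ℂ))) :=
    Summable.of_norm_bounded hsummable hnormterm
  set G : C(AddCircle (1:ℝ), ℂ) := ∑' n : ℕ, c n • (fourier (n : ℤ) : C(AddCircle (1:ℝ), ℂ))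
    with hGdef
  have hG : HasSum (fun n : ℕ => c n • (fourier (n : ℤ) : C(AddCircle (1:ℝ), ℂ))) G :=
    hsm.hasSum
  have hGx : ∀ x : AddCircle (1:ℝ), HasSum (fun n : ℕ => c n * fourier (n : ℤ) x) (G x) := by
    intro x
    have := hG.mapL (ContinuousMap.evalCLM ℂ x)
    simpa [ContinuousMap.evalCLM, smul_eq_mul] using this
  -- pointwise identification with f
  have hGbd : ∀ x : AddCircle (1:ℝ), ‖G x‖ ≤ 1 := by
    intro x
    induction x using QuotientAddGroup.induction_on with
    | H θ =>
      set z : ℂ := (ρ : ℂ) * Complex.exp (2 * π * Complex.I * θ) with hzdef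
      have hre : (2 * (π:ℂ) * Complex.I * θ).re = 0 := by simp
      have hez : ‖Complex.exp (2 * π * Complex.I * θ)‖ = 1 := by
        rw [Complex.norm_exp, hre, Real.exp_zero]
      have hzball : z ∈ Metric.ball (0 : ℂ) 1 := by
        simp only [Metric.mem_ball, dist_zero_right, hzdef]
        rw [norm_mul, hez, mul_one, Complex.norm_real, Real.norm_eq_abs,
          _root_.abs_of_nonneg h0]
        exact h1
      have hfz : HasSum (fun n : ℕ => a n * z ^ n) (f z) := hsum z hzball
      have heq : (fun n : ℕ => c n * fourier (n : ℤ) ((θ : ℝ) : AddCircle (1:ℝ)))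
          = fun n : ℕ => a n * z ^ n := by
        funext n
        rw [fourier_coe_apply]
        simp only [hc, hzdef]
        rw [mul_pow, ← Complex.exp_nat_mul]
        push_cast
        ring_nf
      have : G ((θ : ℝ) : AddCircle (1:ℝ)) = f z := by
        have h1' := hGx ((θ : ℝ) : AddCircle (1:ℝ))
        rw [heq] at h1'
        exact h1'.unique hfz
      rw [this]
      exact hb z hzball
  -- move to L²
  set F := ContinuousMap.toLp (p := 2) AddCircle.haarAddCircle ℂ G with hFdef
  have hPar := tsum_sq_fourierCoeff F
  have hcoeF : ∀ i : ℤ, fourierCoeff (F : AddCircle (1:ℝ) → ℂ) i = fourierCoeff (⇑G) i :=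
    fourierCoeff_toLp G
  -- the integral bound
  have hint_le : ∫ t : AddCircle (1:ℝ), ‖(F : AddCircle (1:ℝ) → ℂ) t‖ ^ 2 ∂AddCircle.haarAddCircle
      ≤ 1 := by
    have hae : (F : AddCircle (1:ℝ) → ℂ) =ᵐ[AddCircle.haarAddCircle] ⇑G :=
      ContinuousMap.coeFn_toLp AddCircle.haarAddCircle G
    have h1' : ∫ t : AddCircle (1:ℝ), ‖(F : AddCircle (1:ℝ) → ℂ) t‖ ^ 2 ∂AddCircle.haarAddCircle
        = ∫ t : AddCircle (1:ℝ), ‖G t‖ ^ 2 ∂AddCircle.haarAddCircle := by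
      refine integral_congr_ae (hae.mono fun x hx => ?_)
      simp only [hx]
    rw [h1']
    have hGint : Integrable (fun t : AddCircle (1:ℝ) => ‖G t‖ ^ 2) AddCircle.haarAddCircle :=
      (G.continuous.norm.pow 2).integrable_of_hasCompactSupport (HasCompactSupport.of_compactSpace _)
    calc ∫ t : AddCircle (1:ℝ), ‖G t‖ ^ 2 ∂AddCircle.haarAddCircle
        ≤ ∫ _t : AddCircle (1:ℝ), (1:ℝ) ∂AddCircle.haarAddCircle := by
          refine integral_mono hGint (integrable_const 1) fun t => ?_
          have := hGbd t
          nlinarith [norm_nonneg (G t)]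
      _ = 1 := by simp
  -- compute Fourier coefficients of G
  have hintf : ∀ k : ℤ, (∫ t : AddCircle (1:ℝ), fourier k t ∂AddCircle.haarAddCircle)
      = if k = 0 then 1 else 0 := by
    intro k
    split_ifs with hk
    · subst hk
      have : (fun t : AddCircle (1:ℝ) => fourier 0 t) = fun _ => (1:ℂ) := by
        funext t; exact fourier_zero
      rw [this, integral_const]
      simp
    · exact integral_eq_zero_of_add_right_eq_neg (fourier_add_half_inv_index hk one_pos)
  have hcoeG : ∀ n₀ : ℕ, fourierCoeff (⇑G) (n₀ : ℤ) = c n₀ := by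
    intro n₀
    have hform : ∀ t : AddCircle (1:ℝ), fourier (-(n₀:ℤ)) t • G t
        = ∑' n : ℕ, c n * (fourier (-(n₀:ℤ) + (n:ℤ)) t) := by
      intro t
      have h2' : HasSum (fun n : ℕ => fourier (-(n₀:ℤ)) t * (c n * fourier (n:ℤ) t))
          (fourier (-(n₀:ℤ)) t * G t) := (hGx t).mul_left _
      have h3' : (fun n : ℕ => fourier (-(n₀:ℤ)) t * (c n * fourier (n:ℤ) t))
          = fun n : ℕ => c n * (fourier (-(n₀:ℤ) + (n:ℤ)) t) := by
        funext n
        rw [fourier_add]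
        ring
      rw [h3'] at h2'
      rw [smul_eq_mul, h2'.tsum_eq.symm]
    have hswap : fourierCoeff (⇑G) (n₀ : ℤ)
        = ∑' n : ℕ, ∫ t : AddCircle (1:ℝ), c n * fourier (-(n₀:ℤ) + (n:ℤ)) t
            ∂AddCircle.haarAddCircle := by
      rw [fourierCoeff]
      simp_rw [hform]
      refine integral_tsum (fun n => ?_) ?_
      · exact (continuous_const.mul (map_continuous _)).aestronglyMeasurable
      · have hnn : ∀ n : ℕ, ∫⁻ t : AddCircle (1:ℝ),
            ‖c n * fourier (-(n₀:ℤ) + (n:ℤ)) t‖₊ ∂AddCircle.haarAddCircle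
            = (‖c n‖₊ : ENNReal) := by
          intro n
          have : ∀ t : AddCircle (1:ℝ), (‖c n * fourier (-(n₀:ℤ) + (n:ℤ)) t‖₊ : ENNReal)
              = (‖c n‖₊ : ENNReal) := by
            intro t
            have h4 : ‖fourier (-(n₀:ℤ) + (n:ℤ)) t‖ = 1 := by
              rw [fourier_apply]
              exact Circle.norm_coe _
            have : ‖c n * fourier (-(n₀:ℤ) + (n:ℤ)) t‖ = ‖c n‖ := by
              rw [norm_mul, h4, mul_one]
            simp only [← coe_nnnorm, ENNReal.coe_inj]
            ext
            exact this
          simp_rw [this]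
          rw [lintegral_const, measure_univ, mul_one]
        simp_rw [enorm_eq_nnnorm, hnn]
        rw [ENNReal.tsum_coe_ne_top_iff_summable]
        have : Summable fun n => ‖c n‖ := by
          simpa [hcn] using hsummable
        exact NNReal.summable_coe.mp (by simpa [coe_nnnorm] using this)
    have hterm : ∀ n : ℕ, (∫ t : AddCircle (1:ℝ), c n * fourier (-(n₀:ℤ) + (n:ℤ)) t
        ∂AddCircle.haarAddCircle) = c n * (if -(n₀:ℤ) + (n:ℤ) = 0 then 1 else 0) := by
      intro n
      rw [integral_const_mul, hintf]
    rw [hswap]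
    simp_rw [hterm]
    rw [tsum_eq_single n₀]
    · simp
    · intro n hn
      have : ¬(-(n₀:ℤ) + (n:ℤ) = 0) := by omega
      rw [if_neg this, mul_zero]
  -- summability of the squared coefficients over ℤ
  have hsummZ : Summable (fun i : ℤ => ‖fourierCoeff (F : AddCircle (1:ℝ) → ℂ) i‖ ^ 2) := by
    have hmem := lp.memℓp (fourierBasis.repr F)
    rw [memℓp_gen_iff (by norm_num : (0:ℝ) < (2:ENNReal).toReal)] at hmem
    simp only [show ((2:ENNReal).toReal) = (2:ℝ) from by norm_num, Real.rpow_two,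
      fourierBasis_repr] at hmem
    exact hmem
  -- put it together
  have hfinal : ∑ n ∈ s, ‖a n‖ ^ 2 * ρ ^ (2 * n)
      = ∑ n ∈ s, ‖fourierCoeff (F : AddCircle (1:ℝ) → ℂ) (n : ℤ)‖ ^ 2 := by
    refine Finset.sum_congr rfl fun n _ => ?_
    rw [hcoeF, hcoeG, hcn, mul_pow, ← pow_mul, mul_comm (‖a n‖ ^ 2), mul_comm 2 n, mul_comm]
  rw [hfinal]
  have hemb : ∑ n ∈ s, ‖fourierCoeff (F : AddCircle (1:ℝ) → ℂ) (n : ℤ)‖ ^ 2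
      = ∑ i ∈ s.map ⟨(Nat.cast : ℕ → ℤ), Nat.cast_injective⟩,
        ‖fourierCoeff (F : AddCircle (1:ℝ) → ℂ) i‖ ^ 2 := by
    rw [Finset.sum_map]
    rfl
  rw [hemb]
  calc ∑ i ∈ s.map ⟨(Nat.cast : ℕ → ℤ), Nat.cast_injective⟩,
        ‖fourierCoeff (F : AddCircle (1:ℝ) → ℂ) i‖ ^ 2
      ≤ ∑' i : ℤ, ‖fourierCoeff (F : AddCircle (1:ℝ) → ℂ) i‖ ^ 2 :=
        hsummZ.sum_le_tsum _ (fun i _ => sq_nonneg _)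
    _ = ∫ t : AddCircle (1:ℝ), ‖(F : AddCircle (1:ℝ) → ℂ) t‖ ^ 2 ∂AddCircle.haarAddCircle := hPar
    _ ≤ 1 := hint_le

/-- **Corollary 3.** Bohr-type inequality for the area functional: if `‖f‖_∞ ≤ 1`
then `Σ_{n≥1} n|aₙ|² r^{2n} ≤ 1` for `0 ≤ r ≤ 3^{-1/6}`, and the constant
`3^{-1/6}` is best possible (the extremal function `f(z) = z³` exceeds the bound
for any larger radius). -/
theorem area_functional_bohr_radius :
    (∀ (a : ℕ → ℂ) (f : ℂ → ℂ),
      (∀ z ∈ Metric.ball (0 : ℂ) 1, HasSum (fun n : ℕ => a n * z ^ n) (f z)) →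
      (∀ z ∈ Metric.ball (0 : ℂ) 1, ‖f z‖ ≤ 1) →
      ∀ r : ℝ, 0 ≤ r → r ≤ (3 : ℝ) ^ (-(1 : ℝ) / 6) →
        ∑' n : ℕ, ENNReal.ofReal ((n : ℝ) * ‖a n‖ ^ 2 * r ^ (2 * n)) ≤ 1) ∧
    (∀ r : ℝ, (3 : ℝ) ^ (-(1 : ℝ) / 6) < r → r < 1 →
      ∃ (a : ℕ → ℂ) (f : ℂ → ℂ),
        (∀ z ∈ Metric.ball (0 : ℂ) 1, HasSum (fun n : ℕ => a n * z ^ n) (f z)) ∧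
        (∀ z ∈ Metric.ball (0 : ℂ) 1, ‖f z‖ ≤ 1) ∧
        (∃ C : ℂ, ‖C‖ = 1 ∧ ∀ z, f z = C * z ^ 3) ∧
        1 < ∑' n : ℕ, ENNReal.ofReal ((n : ℝ) * ‖a n‖ ^ 2 * r ^ (2 * n))) := by
  constructor
  · intro a f hsum hb r hr0 hr
    -- partial sums of ‖a n‖² are at most 1
    have hsq : ∀ N : ℕ, ∑ n ∈ Finset.range N, ‖a n‖ ^ 2 ≤ 1 := by
      intro N
      have hkey : ∀ ρ ∈ Set.Ico (0:ℝ) 1, ∑ n ∈ Finset.range N, ‖a n‖ ^ 2 * ρ ^ (2 * n) ≤ 1 :=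
        fun ρ hρ => parseval_bound a f hsum hb hρ.1 hρ.2 _
      have hcont : Continuous fun ρ : ℝ => ∑ n ∈ Finset.range N, ‖a n‖ ^ 2 * ρ ^ (2 * n) :=
        continuous_finset_sum _ fun n _ => continuous_const.mul (continuous_pow _)
      haveI : (nhdsWithin (1:ℝ) (Set.Ico (0:ℝ) 1)).NeBot := by
        refine mem_closure_iff_nhdsWithin_neBot.mp ?_
        rw [closure_Ico (by norm_num : (0:ℝ) ≠ 1)]
        exact ⟨by norm_num, le_refl 1⟩
      have htend : Tendsto (fun ρ : ℝ => ∑ n ∈ Finset.range N, ‖a n‖ ^ 2 * ρ ^ (2 * n))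
          (nhdsWithin (1:ℝ) (Set.Ico (0:ℝ) 1))
          (nhds (∑ n ∈ Finset.range N, ‖a n‖ ^ 2 * (1:ℝ) ^ (2 * n))) :=
        (hcont.tendsto 1).mono_left nhdsWithin_le_nhds
      have hle := le_of_tendsto htend (eventually_nhdsWithin_of_forall hkey)
      simpa using hle
    have hSum : Summable fun n => ‖a n‖ ^ 2 :=
      summable_of_sum_range_le (fun n => sq_nonneg _) hsq
    have htsum : ∑' n : ℕ, ‖a n‖ ^ 2 ≤ 1 :=
      Real.tsum_le_of_sum_range_le (fun n => sq_nonneg _) hsq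
    calc ∑' n : ℕ, ENNReal.ofReal ((n : ℝ) * ‖a n‖ ^ 2 * r ^ (2 * n))
        ≤ ∑' n : ℕ, ENNReal.ofReal (‖a n‖ ^ 2) := by
          refine ENNReal.tsum_le_tsum fun n => ENNReal.ofReal_le_ofReal ?_
          have h1 : (n : ℝ) * ‖a n‖ ^ 2 * r ^ (2 * n) = ‖a n‖ ^ 2 * ((n : ℝ) * r ^ (2 * n)) := by
            ring
          rw [h1]
          calc ‖a n‖ ^ 2 * ((n : ℝ) * r ^ (2 * n)) ≤ ‖a n‖ ^ 2 * 1 :=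
                mul_le_mul_of_nonneg_left (aux_nr n hr0 hr) (sq_nonneg _)
            _ = ‖a n‖ ^ 2 := mul_one _
      _ = ENNReal.ofReal (∑' n : ℕ, ‖a n‖ ^ 2) :=
          (ENNReal.ofReal_tsum_of_nonneg (fun n => sq_nonneg _) hSum).symm
      _ ≤ ENNReal.ofReal 1 := ENNReal.ofReal_le_ofReal htsum
      _ = 1 := ENNReal.ofReal_one
  · intro r hr1 hr2
    refine ⟨fun n => if n = 3 then 1 else 0, fun z => z ^ 3, ?_, ?_, ⟨1, by simp, by simp⟩, ?_⟩
    · intro z _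
      have : (fun n : ℕ => (if n = 3 then (1:ℂ) else 0) * z ^ n)
          = fun n : ℕ => if n = 3 then z ^ 3 else 0 := by
        funext n
        by_cases h : n = 3 <;> simp [h]
      rw [this]
      exact hasSum_ite_eq 3 (z ^ 3)
    · intro z hz
      rw [Metric.mem_ball, dist_zero_right] at hz
      rw [norm_pow]
      exact pow_le_one₀ (norm_nonneg z) hz.le
    · have hc0 : (0:ℝ) < (3 : ℝ) ^ (-(1 : ℝ) / 6) := Real.rpow_pos_of_pos (by norm_num) _
      have hr0 : 0 < r := lt_trans hc0 hr1
      have hpow : ((3 : ℝ) ^ (-(1 : ℝ) / 6)) ^ (6:ℕ) < r ^ (6:ℕ) :=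
        pow_lt_pow_left₀ hr1 hc0.le (by norm_num)
      have hval : ((3 : ℝ) ^ (-(1 : ℝ) / 6)) ^ (6:ℕ) = 3⁻¹ := by
        rw [← Real.rpow_natCast ((3 : ℝ) ^ (-(1 : ℝ) / 6)) 6, ← Real.rpow_mul (by norm_num)]
        norm_num
      have hgt : 1 < 3 * r ^ 6 := by
        rw [hval] at hpow
        nlinarith
      have hts : ∑' n : ℕ, ENNReal.ofReal ((n : ℝ) * ‖(if n = 3 then (1:ℂ) else 0)‖ ^ 2
          * r ^ (2 * n)) = ENNReal.ofReal (3 * r ^ 6) := by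
        rw [tsum_eq_single 3]
        · norm_num
        · intro n hn
          simp [hn]
      rw [hts]
      rw [show (1 : ENNReal) = ENNReal.ofReal 1 from ENNReal.ofReal_one.symm]
      rw [ENNReal.ofReal_lt_ofReal_iff (by nlinarith)]
      exact hgt
end

section
/- Define g(x) = x^{-1/(2x)} and h(x) = √(x/(x+1)) for x ≥ 1. Then the equation g(x) = h(x) has a unique solution y ∈ (1, ∞), with 2 < y < 3; moreover g(x) > h(x) for 1 < x < y and g(x) < h(x) for x > y. -/
noncomputable def Fc (x : ℝ) : ℝ := x * (Real.log (x+1) - Real.log x) - Real.log x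

lemma Fc_hasDeriv {x : ℝ} (hx : 0 < x) :
    HasDerivAt Fc ((Real.log (x+1) - Real.log x) + x * (1/(x+1) - 1/x) - 1/x) x := by
  have h1 : HasDerivAt (fun x : ℝ => Real.log (x+1)) (1/(x+1)) x := by
    simpa [Function.comp_def] using (Real.hasDerivAt_log (by positivity)).comp x ((hasDerivAt_id x).add_const 1)
  have h2 : HasDerivAt Real.log (1/x) x := by
    simpa [one_div] using Real.hasDerivAt_log hx.ne'
  have := ((hasDerivAt_id x).mul (h1.sub h2)).sub h2
  have hF : Fc = fun i => i * (Real.log (i + 1) - Real.log i) - Real.log i := rfl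
  simpa [hF, mul_comm, Pi.mul_def, Pi.sub_def] using this

lemma Fc_deriv_neg {x : ℝ} (hx : 1 < x) : deriv Fc x < 0 := by
  have hx0 : (0:ℝ) < x := by linarith
  rw [(Fc_hasDeriv hx0).deriv]
  have hlog : Real.log (x+1) - Real.log x < 1/x := by
    have h := Real.log_lt_sub_one_of_pos (x := (x+1)/x) (by positivity)
      (by intro h; rw [div_eq_one_iff_eq (by positivity)] at h; linarith)
    rw [Real.log_div (by positivity) (by positivity)] at h
    have : (x+1)/x - 1 = 1/x := by field_simp; ring
    linarith [this ▸ h]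
  have hm : x * (1/(x+1) - 1/x) = -(1/(x+1)) := by field_simp; ring
  rw [hm]
  have : (0:ℝ) < 1/(x+1) := by positivity
  linarith

lemma Fc_anti : StrictAntiOn Fc (Set.Ici 1) := by
  apply strictAntiOn_of_deriv_neg (convex_Ici 1)
  · intro x hx
    exact (Fc_hasDeriv (by simp at hx; linarith)).continuousAt.continuousWithinAt
  · intro x hx
    rw [interior_Ici] at hx
    exact Fc_deriv_neg hx

lemma log_g {x : ℝ} (hx : 0 < x) :
    Real.log (x ^ (-(1/(2*x)))) = -Real.log x / (2*x) := by
  rw [Real.log_rpow hx]; ring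

lemma log_h {x : ℝ} (hx : 0 < x) :
    Real.log (Real.sqrt (x/(x+1))) = (Real.log x - Real.log (x+1))/2 := by
  rw [Real.log_sqrt (by positivity), Real.log_div hx.ne' (by positivity)]

lemma cmp_iff {x : ℝ} (hx : 0 < x) :
    (Real.sqrt (x/(x+1)) < x ^ (-(1/(2*x))) ↔ 0 < Fc x) := by
  have hg : (0:ℝ) < x ^ (-(1/(2*x))) := Real.rpow_pos_of_pos hx _
  have hh : (0:ℝ) < Real.sqrt (x/(x+1)) := Real.sqrt_pos.2 (by positivity)
  rw [← Real.log_lt_log_iff hh hg, log_g hx, log_h hx, div_lt_div_iff₀ two_pos (by positivity)]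
  unfold Fc
  constructor <;> intro h <;> nlinarith

lemma cmp_iff' {x : ℝ} (hx : 0 < x) :
    (x ^ (-(1/(2*x))) < Real.sqrt (x/(x+1)) ↔ Fc x < 0) := by
  have hg : (0:ℝ) < x ^ (-(1/(2*x))) := Real.rpow_pos_of_pos hx _
  have hh : (0:ℝ) < Real.sqrt (x/(x+1)) := Real.sqrt_pos.2 (by positivity)
  rw [← Real.log_lt_log_iff hg hh, log_g hx, log_h hx, div_lt_div_iff₀ (by positivity) two_pos]
  unfold Fc
  constructor <;> intro h <;> nlinarith

lemma eq_iff {x : ℝ} (hx : 0 < x) :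
    (x ^ (-(1/(2*x))) = Real.sqrt (x/(x+1)) ↔ Fc x = 0) := by
  rcases lt_trichotomy (Fc x) 0 with h | h | h
  · simp only [h, ((cmp_iff' hx).2 h).ne, h.ne]
  · simp only [h, iff_true]
    by_contra hne
    rcases lt_or_gt_of_ne hne with h' | h'
    · exact absurd ((cmp_iff' hx).1 h') (by simp [h])
    · exact absurd ((cmp_iff hx).1 h') (by simp [h])
  · simp only [((cmp_iff hx).2 h).ne', h.ne']

lemma Fc2_pos : 0 < Fc 2 := by
  have h : Real.log (2^3) < Real.log (3^2) := Real.log_lt_log (by positivity) (by norm_num)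
  rw [Real.log_pow, Real.log_pow] at h
  have : Fc 2 = 2 * (Real.log 3 - Real.log 2) - Real.log 2 := by norm_num [Fc]
  push_cast at h
  linarith

lemma Fc3_neg : Fc 3 < 0 := by
  have h : Real.log (4^3) < Real.log (3^4) := Real.log_lt_log (by positivity) (by norm_num)
  rw [Real.log_pow, Real.log_pow] at h
  have h4 : Real.log 4 = 2 * Real.log 2 := by
    rw [show (4:ℝ) = 2^2 by norm_num, Real.log_pow]; push_cast; ring
  have : Fc 3 = 3 * (Real.log 4 - Real.log 3) - Real.log 3 := by norm_num [Fc]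
  push_cast at h
  linarith

/-- The equation `x^(-1/(2x)) = √(x/(x+1))` has a unique solution `y` in `(1,∞)`,
with `2 < y < 3`; moreover `g > h` on `(1,y)` and `g < h` on `(y,∞)`, where
`g(x) = x^(-1/(2x))` and `h(x) = √(x/(x+1))`. -/
theorem g_h_unique_crossing :
    ∃ y : ℝ, (1 < y ∧ y ^ (-(1 / (2 * y))) = Real.sqrt (y / (y + 1))) ∧
      2 < y ∧ y < 3 ∧
      (∀ x : ℝ, 1 < x → x < y →
        Real.sqrt (x / (x + 1)) < x ^ (-(1 / (2 * x)))) ∧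
      (∀ x : ℝ, y < x →
        x ^ (-(1 / (2 * x))) < Real.sqrt (x / (x + 1))) ∧
      (∀ y' : ℝ, 1 < y' → y' ^ (-(1 / (2 * y'))) = Real.sqrt (y' / (y' + 1)) → y' = y) := by
  have hcont : ContinuousOn Fc (Set.Icc 2 3) := by
    intro x hx
    exact (Fc_hasDeriv (by linarith [hx.1])).continuousAt.continuousWithinAt
  have hmem : (0:ℝ) ∈ Set.Ioo (Fc 3) (Fc 2) := ⟨Fc3_neg, Fc2_pos⟩
  obtain ⟨y, hy, hFy⟩ := intermediate_value_Ioo' (by norm_num : (2:ℝ) ≤ 3) hcont hmem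
  have hy1 : (1:ℝ) < y := by linarith [hy.1]
  have hy0 : (0:ℝ) < y := by linarith
  refine ⟨y, ⟨hy1, (eq_iff hy0).2 hFy⟩, hy.1, hy.2, ?_, ?_, ?_⟩
  · intro x hx1 hxy
    have : 0 < Fc x := by
      have := Fc_anti (Set.mem_Ici.2 hx1.le) (Set.mem_Ici.2 hy1.le) hxy
      linarith [hFy ▸ this]
    exact (cmp_iff (by linarith)).2 this
  · intro x hyx
    have : Fc x < 0 := by
      have := Fc_anti (Set.mem_Ici.2 hy1.le) (Set.mem_Ici.2 (by linarith : (1:ℝ) ≤ x)) hyx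
      linarith [hFy ▸ this]
    exact (cmp_iff' (by linarith)).2 this
  · intro y' hy'1 heq
    have hFy' : Fc y' = 0 := (eq_iff (by linarith)).1 heq
    exact Fc_anti.injOn (Set.mem_Ici.2 hy'1.le) (Set.mem_Ici.2 hy1.le) (by rw [hFy', hFy])
end

section
/- Let f(z) = Σ_{n≥m} a_n z^n be analytic in the unit disk with |f(z)| ≤ 1 for all |z| < 1, and let a = |a_m|. Then f(z)/z^m (extended analytically) is subordinate to the Möbius map (z + a)/(1 + a z) composed with a unimodular rotation; in particular, Σ_{n≥0} |a_{n+m}|^2 r^{2n} ≤ a^2 + (1/a - a)^2 Σ_{n≥1} a^{2n} r^{2n} for 0 ≤ r < 1 (when 0 < a < 1). -/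
open Complex Metric Set Filter Topology intervalIntegral FormalMultilinearSeries

noncomputable section

namespace SchwarzSubAux


/-- Mean value property on circles of radius `r < 1` for functions differentiable on the
unit ball. -/
lemma meanValue {F : ℂ → ℂ} (hF : DifferentiableOn ℂ F (ball 0 1)) {r : ℝ}
    (hr0 : 0 ≤ r) (hr1 : r < 1) :
    ∫ θ in (0:ℝ)..(2*Real.pi), F (circleMap 0 r θ) = 2 * Real.pi * F 0 := by
  rcases eq_or_lt_of_le hr0 with h0 | h0
  · simp [circleMap, ← h0, mul_comm]
  · have hsub : closure (ball (0:ℂ) r) ⊆ ball 0 1 := by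
      rw [closure_ball (0:ℂ) h0.ne']
      exact closedBall_subset_ball hr1
    have hdc : DiffContOnCl ℂ F (ball 0 r) :=
      ⟨hF.mono (ball_subset_ball hr1.le), (hF.continuousOn).mono hsub⟩
    have h := hdc.two_pi_i_inv_smul_circleIntegral_sub_inv_smul
      (mem_ball_self h0 : (0:ℂ) ∈ ball 0 r)
    have h2 : (∮ z in C(0, r), (z - 0)⁻¹ • F z) = (2 * Real.pi * I : ℂ) • F 0 := by
      rw [← h, smul_smul, mul_inv_cancel₀ (by simp [Real.pi_ne_zero, Complex.ext_iff]), one_smul]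
    rw [circleIntegral] at h2
    have h3 : ∀ θ : ℝ, deriv (circleMap 0 r) θ • ((circleMap 0 r θ - 0)⁻¹ • F (circleMap 0 r θ))
        = I * F (circleMap 0 r θ) := by
      intro θ
      have hne : circleMap 0 r θ ≠ 0 := circleMap_ne_center h0.ne'
      rw [deriv_circleMap]
      simp only [smul_eq_mul, sub_zero]
      field_simp
    rw [intervalIntegral.integral_congr (fun θ _ => h3 θ)] at h2
    rw [intervalIntegral.integral_const_mul] at h2
    apply mul_left_cancel₀ I_ne_zero
    rw [h2, smul_eq_mul]; ring

/-- Orthogonality of exponentials. -/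
lemma ortho {d : ℤ} (hd : d ≠ 0) :
    ∫ θ in (0:ℝ)..(2*Real.pi), Complex.exp (d * θ * I) = 0 := by
  have hc : (d : ℂ) * I ≠ 0 := by
    simp [hd, I_ne_zero]
  have h := integral_exp_mul_complex (a := 0) (b := 2*Real.pi) hc
  have heq : ∀ θ ∈ Set.uIcc (0:ℝ) (2*Real.pi),
      Complex.exp ((d:ℂ) * θ * I) = Complex.exp ((d:ℂ) * I * θ) := by
    intro θ _; ring_nf
  rw [intervalIntegral.integral_congr heq, h]
  have e1 : Complex.exp ((d:ℂ) * I * ((2*Real.pi : ℝ):ℂ)) = 1 := by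
    rw [show ((d:ℂ) * I * ((2*Real.pi:ℝ):ℂ)) = d * (2 * (Real.pi:ℂ) * I) by push_cast; ring]
    exact_mod_cast Complex.exp_int_mul_two_pi_mul_I d
  rw [e1]
  simp




lemma radius_ge {b : ℕ → ℂ} {g : ℂ → ℂ}
    (hsum : ∀ z ∈ ball (0:ℂ) 1, HasSum (fun n => b n * z ^ n) (g z)) :
    (1:ENNReal) ≤ (ofScalars ℂ b).radius := by
  apply ENNReal.le_of_forall_nnreal_lt
  intro ρ hρ
  have hρ1 : (ρ:ℝ) < 1 := by exact_mod_cast hρ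
  have hz : ((ρ:ℝ):ℂ) ∈ ball (0:ℂ) 1 := by
    simp [_root_.abs_of_nonneg ρ.coe_nonneg, hρ1]
  have h := (hsum _ hz).summable.tendsto_atTop_zero.norm
  simp only [norm_zero] at h
  apply (ofScalars ℂ b).le_radius_of_tendsto (l := 0)
  convert h using 2 with n
  rw [ofScalars_norm, norm_mul, norm_pow]
  simp [_root_.abs_of_nonneg ρ.coe_nonneg]

lemma hasFPSB {b : ℕ → ℂ} {g : ℂ → ℂ}
    (hsum : ∀ z ∈ ball (0:ℂ) 1, HasSum (fun n => b n * z ^ n) (g z)) :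
    HasFPowerSeriesOnBall g (ofScalars ℂ b) 0 1 where
  r_le := radius_ge hsum
  r_pos := one_pos
  hasSum := by
    intro y hy
    rw [mem_emetric_ball_zero_iff] at hy
    have hy' : y ∈ ball (0:ℂ) 1 := by
      rw [mem_ball_zero_iff]
      exact_mod_cast (show (‖y‖₊ : ENNReal) < 1 from hy)
    have := hsum y hy'
    rw [zero_add]
    convert this using 2 with n
    · rfl
    rw [ofScalars_apply_eq, smul_eq_mul]

lemma coeffFormula {g : ℂ → ℂ} {b : ℕ → ℂ} (hg : DifferentiableOn ℂ g (ball 0 1))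
    (hsum : ∀ z ∈ ball (0:ℂ) 1, HasSum (fun n => b n * z ^ n) (g z))
    {r : ℝ} (hr0 : 0 < r) (hr1 : r < 1) (n : ℕ) :
    ∫ θ in (0:ℝ)..(2*Real.pi), Complex.exp (-(n:ℂ) * θ * I) * g (circleMap 0 r θ)
      = 2 * Real.pi * (b n * (r:ℂ) ^ n) := by
  have hrne : (r:ℂ) ≠ 0 := by exact_mod_cast hr0.ne'
  -- cauchy power series
  have hq : HasFPowerSeriesOnBall g (cauchyPowerSeries g 0 r) 0 r.toNNReal := by
    have hd : DifferentiableOn ℂ g (closedBall 0 (r.toNNReal : ℝ)) := by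
      apply hg.mono
      rw [Real.coe_toNNReal _ hr0.le]
      exact closedBall_subset_ball hr1
    have := hd.hasFPowerSeriesOnBall (by simpa using hr0)
    rwa [Real.coe_toNNReal _ hr0.le] at this
  have hpq : ofScalars ℂ b = cauchyPowerSeries g 0 r :=
    (hasFPSB hsum).hasFPowerSeriesAt.eq_formalMultilinearSeries hq.hasFPowerSeriesAt
  have h1 : (b n : ℂ) = (2 * Real.pi * I : ℂ)⁻¹ •
      ∮ z in C(0, r), ((1:ℂ) / (z - 0)) ^ n • (z - 0)⁻¹ • g z := by
    have h := congrArg (fun q : FormalMultilinearSeries ℂ ℂ ℂ => q n (fun _ => (1:ℂ))) hpq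
    rw [ofScalars_apply_eq, cauchyPowerSeries_apply] at h
    simpa using h
  have hint : (∮ z in C(0, r), ((1:ℂ) / (z - 0)) ^ n • (z - 0)⁻¹ • g z)
      = I * (((r:ℂ) ^ n)⁻¹ * ∫ θ in (0:ℝ)..(2*Real.pi),
          Complex.exp (-(n:ℂ) * θ * I) * g (circleMap 0 r θ)) := by
    rw [circleIntegral, ← intervalIntegral.integral_const_mul,
      ← intervalIntegral.integral_const_mul]
    apply intervalIntegral.integral_congr
    intro θ _
    dsimp only
    rw [deriv_circleMap]
    set c := circleMap 0 r θ with hcdef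
    have hc : c = (r:ℂ) * Complex.exp (θ * I) := by
      simp [circleMap, hcdef]
    have hcn : c ^ n = (r:ℂ) ^ n * Complex.exp ((n:ℂ) * θ * I) := by
      rw [hc, mul_pow, ← Complex.exp_nat_mul]; ring_nf
    have hne : c ≠ 0 := circleMap_ne_center hr0.ne'
    have hen : Complex.exp ((n:ℂ) * θ * I) ≠ 0 := Complex.exp_ne_zero _
    have hrn : ((r:ℂ)) ^ n ≠ 0 := pow_ne_zero _ hrne
    have hexp : Complex.exp (-(n:ℂ) * θ * I) = (Complex.exp ((n:ℂ) * θ * I))⁻¹ := by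
      rw [← Complex.exp_neg]; ring_nf
    simp only [smul_eq_mul, sub_zero, div_pow, one_pow, hexp]
    rw [hcn]
    field_simp
  rw [hint, smul_eq_mul] at h1
  have hπ : (2 * (Real.pi:ℂ) * I) ≠ 0 := by
    simp [Real.pi_ne_zero, I_ne_zero, Complex.ext_iff]
  rw [h1]
  field_simp
  ring
  congr 1
  funext θ
  ring


lemma bessel {g : ℂ → ℂ} {b : ℕ → ℂ} (hg : DifferentiableOn ℂ g (ball 0 1))
    (hsum : ∀ z ∈ ball (0:ℂ) 1, HasSum (fun n => b n * z ^ n) (g z))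
    {r : ℝ} (hr0 : 0 < r) (hr1 : r < 1) (K : ℕ) :
    2 * Real.pi * ∑ n ∈ Finset.range K, ‖b n‖^2 * r^(2*n)
      ≤ ∫ θ in (0:ℝ)..(2*Real.pi), ‖g (circleMap 0 r θ)‖^2 := by
  set c : ℕ → ℂ := fun n => b n * (r:ℂ)^n with hc
  set G : ℝ → ℂ := fun θ => g (circleMap 0 r θ) with hG
  set P : ℝ → ℂ := fun θ => ∑ n ∈ Finset.range K, c n * Complex.exp ((n:ℂ) * θ * I) with hP
  set S : ℝ := ∑ n ∈ Finset.range K, ‖c n‖^2 with hS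
  have hGc : Continuous G := by
    apply hg.continuousOn.comp_continuous (continuous_circleMap 0 r)
    intro θ
    simp only [mem_ball_zero_iff, norm_circleMap_zero]
    rw [_root_.abs_of_nonneg hr0.le]; exact hr1
  have hec : ∀ d : ℂ, Continuous fun θ : ℝ => Complex.exp (d * θ * I) := by
    intro d
    exact Complex.continuous_exp.comp (by continuity)
  have hPc : Continuous P := by
    apply continuous_finset_sum
    intro n _
    exact continuous_const.mul (hec n)
  have hint : ∀ {F : ℝ → ℂ}, Continuous F →
      IntervalIntegrable F MeasureTheory.volume 0 (2*Real.pi) :=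
    fun h => h.intervalIntegrable _ _
  have hintR : ∀ {F : ℝ → ℝ}, Continuous F →
      IntervalIntegrable F MeasureTheory.volume 0 (2*Real.pi) :=
    fun h => h.intervalIntegrable _ _
  have hmc : ∀ w : ℂ, w * (starRingEnd ℂ) w = ((‖w‖^2 : ℝ) : ℂ) := by
    intro w
    rw [Complex.mul_conj, Complex.normSq_eq_norm_sq]
  have hconjexp : ∀ (k : ℕ) (θ : ℝ), (starRingEnd ℂ) (Complex.exp ((k:ℂ) * θ * I))
      = Complex.exp (-(k:ℂ) * θ * I) := by
    intro k θ
    rw [← Complex.exp_conj]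
    congr 1
    simp [map_mul, Complex.conj_I, Complex.conj_ofReal]
  have hconjP : ∀ θ : ℝ, (starRingEnd ℂ) (P θ)
      = ∑ k ∈ Finset.range K, (starRingEnd ℂ) (c k) * Complex.exp (-(k:ℂ) * θ * I) := by
    intro θ
    rw [hP, map_sum]
    apply Finset.sum_congr rfl
    intro k _
    rw [map_mul, hconjexp]
  -- (1) ∫ G conj P
  have hGP : (∫ θ in (0:ℝ)..(2*Real.pi), G θ * (starRingEnd ℂ) (P θ))
      = ((2 * Real.pi * S : ℝ) : ℂ) := by
    have heq : ∀ θ ∈ Set.uIcc (0:ℝ) (2*Real.pi), G θ * (starRingEnd ℂ) (P θ)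
        = ∑ k ∈ Finset.range K,
            (starRingEnd ℂ) (c k) * (Complex.exp (-(k:ℂ) * θ * I) * G θ) := by
      intro θ _
      rw [hconjP, Finset.mul_sum]
      apply Finset.sum_congr rfl
      intro k _; ring
    rw [intervalIntegral.integral_congr heq,
      intervalIntegral.integral_finset_sum
        (f := fun k θ => (starRingEnd ℂ) (c k) * (Complex.exp (-(k:ℂ) * θ * I) * G θ))
        (fun k _ => hint (continuous_const.mul ((hec _).mul hGc)))]
    have hterm : ∀ k ∈ Finset.range K,
        (∫ θ in (0:ℝ)..(2*Real.pi),
          (starRingEnd ℂ) (c k) * (Complex.exp (-(k:ℂ) * θ * I) * G θ))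
        = 2*(Real.pi:ℂ) * ((‖c k‖^2 : ℝ):ℂ) := by
      intro k _
      rw [intervalIntegral.integral_const_mul, coeffFormula hg hsum hr0 hr1 k,
        show b k * (r:ℂ)^k = c k from rfl,
        show (starRingEnd ℂ) (c k) * (2*(Real.pi:ℂ) * (c k))
          = 2*(Real.pi:ℂ) * (c k * (starRingEnd ℂ) (c k)) from by ring, hmc]
    rw [Finset.sum_congr rfl hterm, ← Finset.mul_sum, hS]
    push_cast
    ring
  -- (2) ∫ P conj P
  have hmerge : ∀ (n k : ℕ) (θ : ℝ), Complex.exp ((n:ℂ)*θ*I) * Complex.exp (-(k:ℂ)*θ*I)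
      = Complex.exp (((n:ℂ)-(k:ℂ))*θ*I) := by
    intro n k θ; rw [← Complex.exp_add]; ring_nf
  have hiexp : ∀ n k : ℕ, (∫ θ in (0:ℝ)..(2*Real.pi), Complex.exp (((n:ℂ)-(k:ℂ))*θ*I))
      = if n = k then ((2*Real.pi:ℝ):ℂ) else 0 := by
    intro n k
    by_cases h : n = k
    · subst h
      rw [if_pos rfl]
      have : ∀ θ ∈ Set.uIcc (0:ℝ) (2*Real.pi),
          Complex.exp (((n:ℂ)-(n:ℂ))*θ*I) = 1 := by
        intro θ _; simp
      rw [intervalIntegral.integral_congr this]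
      simp
    · rw [if_neg h]
      have hd : ((n:ℤ) - (k:ℤ)) ≠ 0 := sub_ne_zero.2 (by exact_mod_cast h)
      have := ortho hd
      push_cast at this
      exact this
  have hPP : (∫ θ in (0:ℝ)..(2*Real.pi), P θ * (starRingEnd ℂ) (P θ))
      = ((2 * Real.pi * S : ℝ) : ℂ) := by
    have heq : ∀ θ ∈ Set.uIcc (0:ℝ) (2*Real.pi), P θ * (starRingEnd ℂ) (P θ)
        = ∑ n ∈ Finset.range K, ∑ k ∈ Finset.range K,
            (c n * (starRingEnd ℂ) (c k)) * Complex.exp (((n:ℂ)-(k:ℂ))*θ*I) := by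
      intro θ _
      rw [hconjP, hP, Finset.sum_mul_sum]
      apply Finset.sum_congr rfl; intro n _
      apply Finset.sum_congr rfl; intro k _
      rw [← hmerge n k θ]; ring
    rw [intervalIntegral.integral_congr heq,
      intervalIntegral.integral_finset_sum (f := fun n θ => ∑ k ∈ Finset.range K,
          (c n * (starRingEnd ℂ) (c k)) * Complex.exp (((n:ℂ)-(k:ℂ))*θ*I)) (fun n _ =>
        hint (continuous_finset_sum _ (fun k _ => continuous_const.mul (hec _))))]
    have houter : ∀ n ∈ Finset.range K,
        (∫ θ in (0:ℝ)..(2*Real.pi), ∑ k ∈ Finset.range K,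
          (c n * (starRingEnd ℂ) (c k)) * Complex.exp (((n:ℂ)-(k:ℂ))*θ*I))
        = 2*(Real.pi:ℂ) * ((‖c n‖^2 : ℝ):ℂ) := by
      intro n hn
      rw [intervalIntegral.integral_finset_sum
      (f := fun k θ => (c n * (starRingEnd ℂ) (c k)) * Complex.exp (((n:ℂ)-(k:ℂ))*θ*I))
        (fun k _ => hint (continuous_const.mul (hec _)))]
      have hterm : ∀ k ∈ Finset.range K,
          (∫ θ in (0:ℝ)..(2*Real.pi),
            (c n * (starRingEnd ℂ) (c k)) * Complex.exp (((n:ℂ)-(k:ℂ))*θ*I))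
          = if n = k then (c n * (starRingEnd ℂ) (c k)) * ((2*Real.pi:ℝ):ℂ) else 0 := by
        intro k _
        rw [intervalIntegral.integral_const_mul, hiexp n k]
        split_ifs with h
        · rfl
        · rw [mul_zero]
      rw [Finset.sum_congr rfl hterm, Finset.sum_ite_eq (Finset.range K) n
        (fun k => (c n * (starRingEnd ℂ) (c k)) * ((2*Real.pi:ℝ):ℂ)), if_pos hn, hmc]
      push_cast
      ring
    rw [Finset.sum_congr rfl houter, ← Finset.mul_sum, hS]
    push_cast
    ring
  -- (3) Bessel via nonnegativity
  have hptwise : ∀ θ ∈ Set.uIcc (0:ℝ) (2*Real.pi),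
      ‖G θ - P θ‖^2
        = ‖G θ‖^2 - 2*((G θ) * (starRingEnd ℂ) (P θ)).re + ‖P θ‖^2 := by
    intro θ _
    simp only [Complex.sq_norm, Complex.normSq_sub]
    ring
  have h0 : (0:ℝ) ≤ ∫ θ in (0:ℝ)..(2*Real.pi), ‖G θ - P θ‖^2 := by
    apply intervalIntegral.integral_nonneg (by positivity)
    intro u _
    positivity
  have hre : (∫ θ in (0:ℝ)..(2*Real.pi), ((G θ) * (starRingEnd ℂ) (P θ)).re)
      = 2 * Real.pi * S := by
    have := Complex.reCLM.intervalIntegral_comp_comm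
      (hint (hGc.mul (Complex.continuous_conj.comp hPc)))
    simp only [Complex.reCLM_apply, Function.comp_apply, Function.comp, Pi.mul_apply] at this
    rw [this, hGP, Complex.ofReal_re]
  have hre2 : (∫ θ in (0:ℝ)..(2*Real.pi), ‖P θ‖^2) = 2 * Real.pi * S := by
    have hpt : ∀ θ : ℝ, ‖P θ‖^2 = ((P θ) * (starRingEnd ℂ) (P θ)).re := by
      intro θ; rw [hmc, Complex.ofReal_re]
    rw [intervalIntegral.integral_congr (fun θ _ => hpt θ)]
    have := Complex.reCLM.intervalIntegral_comp_comm
      (hint (hPc.mul (Complex.continuous_conj.comp hPc)))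
    simp only [Complex.reCLM_apply, Function.comp_apply, Function.comp, Pi.mul_apply] at this
    rw [this, hPP, Complex.ofReal_re]
  have hsplit : (∫ θ in (0:ℝ)..(2*Real.pi), ‖G θ - P θ‖^2)
      = (∫ θ in (0:ℝ)..(2*Real.pi), ‖G θ‖^2) - 2 * Real.pi * S := by
    rw [intervalIntegral.integral_congr hptwise]
    have i1 : IntervalIntegrable (fun θ : ℝ => ‖G θ‖^2)
        MeasureTheory.volume 0 (2*Real.pi) := hintR (hGc.norm.pow 2)
    have i2 : IntervalIntegrable (fun θ : ℝ => 2*((G θ) * (starRingEnd ℂ) (P θ)).re)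
        MeasureTheory.volume 0 (2*Real.pi) := by
      apply hintR
      apply continuous_const.mul
      exact Complex.continuous_re.comp (hGc.mul (Complex.continuous_conj.comp hPc))
    have i3 : IntervalIntegrable (fun θ : ℝ => ‖P θ‖^2)
        MeasureTheory.volume 0 (2*Real.pi) := hintR (hPc.norm.pow 2)
    rw [intervalIntegral.integral_add (i1.sub i2) i3, intervalIntegral.integral_sub i1 i2,
      intervalIntegral.integral_const_mul, hre, hre2]
    ring
  have hfinal : 2 * Real.pi * S ≤ ∫ θ in (0:ℝ)..(2*Real.pi), ‖G θ‖^2 := by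
    rw [hsplit] at h0; linarith
  have hSeq : S = ∑ n ∈ Finset.range K, ‖b n‖^2 * r^(2*n) := by
    rw [hS]
    apply Finset.sum_congr rfl
    intro n _
    rw [show c n = b n * (r:ℂ)^n from rfl, norm_mul, norm_pow, mul_pow]
    congr 1
    rw [Complex.norm_real, Real.norm_eq_abs, _root_.abs_of_nonneg hr0.le, ← pow_mul, mul_comm n 2]
  rw [← hSeq]
  exact hfinal


end SchwarzSubAux

open SchwarzSubAux
set_option maxHeartbeats 2000000 in
/-- By the Schwarz lemma, `f(z)/z^m` is subordinate to a rotated Möbius map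
`u·(ω(z)+a)/(1+a·ω(z))` with `|u| = 1`, and consequently (Littlewood, `L²` case)
`Σ_{n≥0} |a_{n+m}|² r^{2n} ≤ a² + (1/a - a)² Σ_{n≥1} a^{2n} r^{2n}` for `0 ≤ r < 1`. -/
theorem schwarz_subordination_moebius (m : ℕ) (a : ℕ → ℂ) (f : ℂ → ℂ)
    (hf : ∀ z ∈ Metric.ball (0 : ℂ) 1,
      HasSum (fun n : ℕ => a (n + m) * z ^ (n + m)) (f z))
    (hb : ∀ z ∈ Metric.ball (0 : ℂ) 1, ‖f z‖ ≤ 1)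
    (A : ℝ) (hA : A = ‖a m‖) (hA0 : 0 < A) (hA1 : A < 1) :
    (∃ (u : ℂ) (ω : ℂ → ℂ), ‖u‖ = 1 ∧
      AnalyticOn ℂ ω (Metric.ball (0 : ℂ) 1) ∧ ω 0 = 0 ∧
      (∀ z ∈ Metric.ball (0 : ℂ) 1, ω z ∈ Metric.ball (0 : ℂ) 1) ∧
      (∀ z ∈ Metric.ball (0 : ℂ) 1, z ≠ 0 →
        f z = z ^ m * (u * ((ω z + (A : ℂ)) / (1 + (A : ℂ) * ω z))))) ∧
    (∀ r : ℝ, 0 ≤ r → r < 1 →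
      ∑' n : ℕ, ENNReal.ofReal (‖a (n + m)‖ ^ 2 * r ^ (2 * n)) ≤
        ENNReal.ofReal (A ^ 2 +
          (1 / A - A) ^ 2 * ∑' n : ℕ, A ^ (2 * (n + 1)) * r ^ (2 * (n + 1)))) := by
  have hAne : (A:ℂ) ≠ 0 := by exact_mod_cast hA0.ne'
  have ham : a m ≠ 0 := by
    intro h; rw [hA, h, norm_zero] at hA0; exact lt_irrefl 0 hA0
  -- summability of the quotient series
  have hsummable : ∀ z ∈ ball (0:ℂ) 1, Summable (fun n => a (n + m) * z ^ n) := by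
    intro z hz
    rw [mem_ball_zero_iff] at hz
    obtain ⟨ρ, hzρ, hρ1⟩ : ∃ ρ:ℝ, ‖z‖ < ρ ∧ ρ < 1 :=
      ⟨(‖z‖ + 1)/2, by linarith, by linarith⟩
    have hρ0 : 0 < ρ := lt_of_le_of_lt (norm_nonneg z) hzρ
    have hρne : ρ ≠ 0 := hρ0.ne'
    have hρball : ((ρ:ℝ):ℂ) ∈ ball (0:ℂ) 1 := by
      rw [mem_ball_zero_iff, Complex.norm_real, Real.norm_eq_abs, _root_.abs_of_pos hρ0]
      exact hρ1
    have hsum := (hf _ hρball).summable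
    have hbdd : BddAbove (Set.range fun n => ‖a (n + m) * ((ρ:ℝ):ℂ) ^ (n + m)‖) :=
      (hsum.tendsto_atTop_zero.norm.bddAbove_range)
    obtain ⟨C, hC⟩ := hbdd
    have hCn : ∀ n : ℕ, ‖a (n + m)‖ * ρ ^ (n + m) ≤ C := by
      intro n
      have := hC (Set.mem_range_self n)
      rwa [norm_mul, norm_pow, Complex.norm_real, Real.norm_eq_abs,
        _root_.abs_of_pos hρ0] at this
    apply Summable.of_norm_bounded (g := fun n => (C / ρ^m) * (‖z‖/ρ)^n)
    · apply Summable.mul_left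
      apply summable_geometric_of_lt_one (by positivity)
      rw [div_lt_one hρ0]; exact hzρ
    · intro n
      have h1 : ‖a (n + m)‖ ≤ C / ρ^(n+m) :=
        (le_div_iff₀ (pow_pos hρ0 _)).2 (hCn n)
      calc ‖a (n + m) * z^n‖ = ‖a (n + m)‖ * ‖z‖^n := by rw [norm_mul, norm_pow]
        _ ≤ (C / ρ^(n+m)) * ‖z‖^n := by
            apply mul_le_mul_of_nonneg_right h1 (by positivity)
        _ = (C / ρ^m) * (‖z‖/ρ)^n := by
            rw [div_pow, pow_add]
            field_simp
  set g : ℂ → ℂ := fun z => ∑' n, a (n + m) * z^n with hgdef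
  have hgsum : ∀ z ∈ ball (0:ℂ) 1, HasSum (fun n => a (n + m) * z^n) (g z) :=
    fun z hz => (hsummable z hz).hasSum
  have hfg : ∀ z ∈ ball (0:ℂ) 1, f z = z^m * g z := by
    intro z hz
    have h1 := hf z hz
    have h2 := (hgsum z hz).mul_left (z^m)
    have heq : (fun n => z^m * (a (n + m) * z^n)) = fun n => a (n + m) * z^(n + m) := by
      funext n; rw [pow_add]; ring
    rw [heq] at h2
    exact h1.unique h2
  have hg0 : g 0 = a m := by
    have h2 := hgsum 0 (by simp)
    have h3 : HasSum (fun n => a (n + m) * (0:ℂ)^n) (a (0 + m) * (0:ℂ)^0) :=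
      hasSum_single 0 (fun n hn => by simp [zero_pow hn])
    have := h2.unique h3
    simpa using this
  -- differentiability of g
  have hfps : HasFPowerSeriesOnBall g (ofScalars ℂ (fun n => a (n + m))) 0 1 := by
    constructor
    · apply ENNReal.le_of_forall_nnreal_lt
      intro ρ hρ
      have hρ1 : (ρ:ℝ) < 1 := by exact_mod_cast hρ
      have hz : ((ρ:ℝ):ℂ) ∈ ball (0:ℂ) 1 := by
        rw [mem_ball_zero_iff, Complex.norm_real, Real.norm_eq_abs,
          _root_.abs_of_nonneg ρ.coe_nonneg]
        exact hρ1
      have h := (hgsum _ hz).summable.tendsto_atTop_zero.norm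
      simp only [norm_zero] at h
      apply FormalMultilinearSeries.le_radius_of_tendsto _ (l := 0)
      convert h using 2 with n
      rw [ofScalars_norm, norm_mul, norm_pow, Complex.norm_real, Real.norm_eq_abs,
        _root_.abs_of_nonneg ρ.coe_nonneg]
    · exact one_pos
    · intro y hy
      rw [mem_emetric_ball_zero_iff] at hy
      have hy' : y ∈ ball (0:ℂ) 1 := by
        rw [mem_ball_zero_iff, ← coe_nnnorm]
        exact_mod_cast (show (‖y‖₊ : ENNReal) < 1 from hy)
      have := hgsum y hy'
      rw [zero_add]
      convert this using 2 with n
      · rfl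
      rw [ofScalars_apply_eq, smul_eq_mul]
  have hgdiff : DifferentiableOn ℂ g (ball 0 1) := by
    intro z hz
    have hz' : z ∈ Metric.eball (0:ℂ) 1 := by
      rw [mem_emetric_ball_zero_iff]
      have := mem_ball_zero_iff.1 hz
      rw [← coe_nnnorm] at this
      exact (show (‖z‖₊ : ENNReal) < 1 by exact_mod_cast this)
    exact ((hfps.analyticAt_of_mem hz').differentiableAt).differentiableWithinAt
  -- |g| ≤ 1 on the ball
  have hgle : ∀ z ∈ ball (0:ℂ) 1, ‖g z‖ ≤ 1 := by
    intro z hz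
    rw [mem_ball_zero_iff] at hz
    have key : ∀ ρ : ℝ, ‖z‖ < ρ → ρ < 1 → ‖g z‖ ≤ 1/ρ^m := by
      intro ρ h1 h2
      have hρ0 : 0 < ρ := lt_of_le_of_lt (norm_nonneg z) h1
      have hUsub : closure (ball (0:ℂ) ρ) ⊆ ball 0 1 := by
        rw [closure_ball _ hρ0.ne']
        exact closedBall_subset_ball h2
      apply Complex.norm_le_of_forall_mem_frontier_norm_le isBounded_ball
        ⟨hgdiff.mono (ball_subset_ball h2.le), hgdiff.continuousOn.mono hUsub⟩
      · intro w hw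
        rw [frontier_ball _ hρ0.ne'] at hw
        have hwn : ‖w‖ = ρ := by simpa using hw
        have hwb : w ∈ ball (0:ℂ) 1 := by rw [mem_ball_zero_iff, hwn]; exact h2
        have hfw := hfg w hwb
        have hbw := hb w hwb
        rw [hfw, norm_mul, norm_pow, hwn] at hbw
        rw [le_div_iff₀ (pow_pos hρ0 m), mul_comm]
        exact hbw
      · exact subset_closure (mem_ball_zero_iff.2 h1)
    have htend : Tendsto (fun ρ : ℝ => 1/ρ^m) (nhdsWithin 1 (Set.Iio 1)) (𝓝 1) := by
      have hc : ContinuousAt (fun ρ:ℝ => 1/ρ^m) 1 :=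
        continuousAt_const.div ((continuous_pow m).continuousAt) (by norm_num)
      have := hc.tendsto.mono_left (nhdsWithin_le_nhds (s := Set.Iio (1:ℝ)))
      simpa using this
    apply ge_of_tendsto htend
    filter_upwards [Ioo_mem_nhdsLT_of_mem (Set.mem_Ioc.2 ⟨hz, le_refl 1⟩)] with ρ hρ
    exact key ρ hρ.1 hρ.2
  -- |g| < 1 on the ball
  have hglt : ∀ z ∈ ball (0:ℂ) 1, ‖g z‖ < 1 := by
    intro z hz
    rcases lt_or_eq_of_le (hgle z hz) with h | h
    · exact h
    · exfalso
      have hmax : IsMaxOn (norm ∘ g) (ball (0:ℂ) 1) z := by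
        intro w hw
        simp only [Function.comp_apply, Set.mem_setOf_eq]
        rw [h]
        exact hgle w hw
      have heqon := Complex.eqOn_of_isPreconnected_of_isMaxOn_norm
        (convex_ball (0:ℂ) 1).isPreconnected isOpen_ball hgdiff hz hmax
      have h0 := heqon (mem_ball_self one_pos)
      simp only [Function.const_apply] at h0
      rw [hg0] at h0
      have : ‖a m‖ = ‖g z‖ := by rw [h0]
      rw [← hA, h] at this
      linarith
  -- construction of u, v, ω
  obtain ⟨u, hu⟩ : ∃ u:ℂ, u = a m / (A:ℂ) := ⟨_, rfl⟩
  have hunorm : ‖u‖ = 1 := by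
    rw [hu, norm_div, Complex.norm_real, Real.norm_eq_abs, _root_.abs_of_pos hA0, ← hA,
      div_self hA0.ne']
  have hune : u ≠ 0 := by
    intro h; rw [h, norm_zero] at hunorm; norm_num at hunorm
  obtain ⟨v, hv⟩ : ∃ v:ℂ → ℂ, v = fun z => g z / u := ⟨_, rfl⟩
  have hvdiff : DifferentiableOn ℂ v (ball 0 1) := by
    rw [hv]; exact hgdiff.div_const u
  have hvnorm : ∀ z, ‖v z‖ = ‖g z‖ := by
    intro z; rw [hv]; simp only; rw [norm_div, hunorm, div_one]
  have hvlt : ∀ z ∈ ball (0:ℂ) 1, ‖v z‖ < 1 := by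
    intro z hz; rw [hvnorm]; exact hglt z hz
  have hv0 : v 0 = (A:ℂ) := by
    rw [hv]; simp only; rw [hg0, hu]
    field_simp
  obtain ⟨ω, hω⟩ : ∃ ω:ℂ → ℂ, ω = fun z => (v z - (A:ℂ)) / (1 - (A:ℂ) * v z) := ⟨_, rfl⟩
  have hden : ∀ z ∈ ball (0:ℂ) 1, (1:ℂ) - A * v z ≠ 0 := by
    intro z hz h
    rw [sub_eq_zero] at h
    have h2 : (1:ℝ) = ‖(A:ℂ) * v z‖ := by rw [← h, norm_one]
    rw [norm_mul, Complex.norm_real, Real.norm_eq_abs, _root_.abs_of_pos hA0] at h2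
    have h3 := hvlt z hz
    nlinarith [norm_nonneg (v z)]
  have hωdiff : DifferentiableOn ℂ ω (ball 0 1) := by
    rw [hω]
    exact DifferentiableOn.div (hvdiff.sub_const _)
      ((differentiableOn_const _).sub ((differentiableOn_const _).mul hvdiff)) hden
  have hω0 : ω 0 = 0 := by
    rw [hω]; simp only; rw [hv0]; simp
  have hωlt : ∀ z ∈ ball (0:ℂ) 1, ‖ω z‖ < 1 := by
    intro z hz
    rw [hω]; simp only
    rw [norm_div, div_lt_one (norm_pos_iff.2 (hden z hz))]
    have hv2 := hvlt z hz
    have hsq : ‖v z - (A:ℂ)‖^2 < ‖1 - (A:ℂ) * v z‖^2 := by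
      have hn : Complex.normSq (v z) < 1 := by
        rw [← Complex.sq_norm]
        nlinarith [hv2, norm_nonneg (v z)]
      rw [Complex.normSq_apply] at hn
      simp only [Complex.sq_norm, Complex.normSq_apply, Complex.sub_re,
        Complex.sub_im, Complex.mul_re, Complex.mul_im, Complex.ofReal_re, Complex.ofReal_im,
        Complex.one_re, Complex.one_im]
      have key : 0 < (1 - A^2) * (1 - ((v z).re^2 + (v z).im^2)) := by
        apply mul_pos (by nlinarith) (by nlinarith)
      nlinarith [key]
    exact lt_of_pow_lt_pow_left₀ 2 (norm_nonneg _) hsq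
  have hA2ne : (1:ℂ) - (A:ℂ)^2 ≠ 0 := by
    have : (1:ℝ) - A^2 ≠ 0 := by nlinarith
    intro h
    apply this
    have : ((1 - A^2 : ℝ) : ℂ) = 0 := by push_cast; linear_combination h
    exact_mod_cast this
  have he1 : ∀ z ∈ ball (0:ℂ) 1, (1:ℂ) + A * ω z = (1 - (A:ℂ)^2)/(1 - A * v z) := by
    intro z hz
    rw [hω]; simp only
    field_simp [hden z hz]
    ring
  have hd2 : ∀ z ∈ ball (0:ℂ) 1, (1:ℂ) + A * ω z ≠ 0 := by
    intro z hz
    rw [he1 z hz]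
    exact div_ne_zero hA2ne (hden z hz)
  have hvω : ∀ z ∈ ball (0:ℂ) 1, (ω z + A) / (1 + A * ω z) = v z := by
    intro z hz
    rw [div_eq_iff (hd2 z hz), hω]; simp only
    field_simp [hden z hz]
    have hden' : (1:ℂ) - v z * A ≠ 0 := by rw [mul_comm]; exact hden z hz
    field_simp
    ring
  have hsub : ∀ z ∈ ball (0:ℂ) 1, z ≠ 0 →
      f z = z^m * (u * ((ω z + A)/(1 + A * ω z))) := by
    intro z hz hz0
    rw [hvω z hz, hfg z hz, hv]; simp only
    rw [mul_div_cancel₀ _ hune]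
  -- PART 2
  refine ⟨⟨u, ω, hunorm, hωdiff.analyticOn isOpen_ball, hω0,
    fun z hz => mem_ball_zero_iff.2 (hωlt z hz), hsub⟩, ?_⟩
  intro r hr0 hr1
  rcases hr0.eq_or_lt with heq | hrpos
  · -- r = 0
    subst heq
    have hT0 : ∑' n:ℕ, A^(2*(n+1))*(0:ℝ)^(2*(n+1)) = 0 := by
      convert tsum_zero with n
      rw [zero_pow (by omega : 2*(n+1) ≠ 0), mul_zero]
    rw [hT0, mul_zero, add_zero]
    rw [tsum_eq_single 0 (fun n hn => by
      rw [zero_pow (by omega : 2*n ≠ 0), mul_zero, ENNReal.ofReal_zero])]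
    apply le_of_eq
    congr 1
    simp [hA]
  -- r > 0
  obtain ⟨h, hh⟩ : ∃ h:ℂ → ℂ, h = fun z => (1 + (A:ℂ) * ω z)⁻¹ := ⟨_, rfl⟩
  have hhdiff : DifferentiableOn ℂ h (ball 0 1) := by
    rw [hh]
    exact ((differentiableOn_const _).add ((differentiableOn_const _).mul hωdiff)).inv hd2
  have hmem : ∀ θ:ℝ, circleMap 0 r θ ∈ ball (0:ℂ) 1 := by
    intro θ
    simp only [mem_ball_zero_iff, norm_circleMap_zero]
    rw [_root_.abs_of_pos hrpos]; exact hr1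
  have hvc : Continuous fun θ:ℝ => v (circleMap 0 r θ) :=
    hvdiff.continuousOn.comp_continuous (continuous_circleMap 0 r) hmem
  have hωc : Continuous fun θ:ℝ => ω (circleMap 0 r θ) :=
    hωdiff.continuousOn.comp_continuous (continuous_circleMap 0 r) hmem
  have hhc : Continuous fun θ:ℝ => h (circleMap 0 r θ) :=
    hhdiff.continuousOn.comp_continuous (continuous_circleMap 0 r) hmem
  have hintR : ∀ {F : ℝ → ℝ}, Continuous F →
      IntervalIntegrable F MeasureTheory.volume 0 (2*Real.pi) :=
    fun hc => hc.intervalIntegrable _ _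
  obtain ⟨Iv, hIv⟩ : ∃ x:ℝ, x = ∫ θ in (0:ℝ)..(2*Real.pi), ‖v (circleMap 0 r θ)‖^2 := ⟨_, rfl⟩
  obtain ⟨Ih, hIh⟩ : ∃ x:ℝ, x = ∫ θ in (0:ℝ)..(2*Real.pi), ‖h (circleMap 0 r θ)‖^2 := ⟨_, rfl⟩
  obtain ⟨Iω, hIω⟩ : ∃ x:ℝ, x = ∫ θ in (0:ℝ)..(2*Real.pi),
    ‖ω (circleMap 0 r θ)‖^2 * ‖h (circleMap 0 r θ)‖^2 := ⟨_, rfl⟩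
  -- Schwarz lemma bound on ω along the circle
  have hωr : ∀ θ:ℝ, ‖ω (circleMap 0 r θ)‖ ≤ r := by
    intro θ
    have habs : ‖circleMap 0 r θ‖ < 1 := by
      rw [norm_circleMap_zero, _root_.abs_of_pos hrpos]; exact hr1
    have := Complex.norm_le_norm_of_mapsTo_ball hωdiff
      (fun z hz => ball_subset_closedBall (mem_ball_zero_iff.2 (hωlt z hz))) hω0 habs
    rw [norm_circleMap_zero, _root_.abs_of_pos hrpos] at this
    exact this
  -- mean value of ω * h along circle
  have hmean : (∫ θ in (0:ℝ)..(2*Real.pi),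
      ω (circleMap 0 r θ) * h (circleMap 0 r θ)) = 0 := by
    have := meanValue (F := fun z => ω z * h z) (hωdiff.mul hhdiff) hrpos.le hr1
    simpa [hω0] using this
  have hrec : (∫ θ in (0:ℝ)..(2*Real.pi),
      (ω (circleMap 0 r θ) * h (circleMap 0 r θ)).re) = 0 := by
    have hcomm := Complex.reCLM.intervalIntegral_comp_comm
      (Continuous.intervalIntegrable (μ := MeasureTheory.volume) (hωc.mul hhc) 0 (2*Real.pi))
    simp only [Complex.reCLM_apply, Pi.mul_apply] at hcomm
    rw [hcomm, hmean, Complex.zero_re]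
  -- squared norm helper
  have hnsq : ∀ w:ℂ, ‖w‖^2 = w.re^2 + w.im^2 := by
    intro w; rw [Complex.sq_norm, Complex.normSq_apply]; ring
  have hnorm1 : ∀ (t:ℝ) (w:ℂ), ‖(t:ℂ) + w‖^2 = t^2 + 2*t*w.re + ‖w‖^2 := by
    intro t w
    rw [hnsq, hnsq]
    simp only [Complex.add_re, Complex.add_im, Complex.ofReal_re, Complex.ofReal_im]
    ring
  -- pointwise expansions
  have hK2pt : ∀ z ∈ ball (0:ℂ) 1, ‖h z‖^2
      = 1 - 2*A*(ω z * h z).re + A^2*(‖ω z‖^2 * ‖h z‖^2) := by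
    intro z hz
    have hid : h z = ((1:ℝ):ℂ) + (((-A:ℝ):ℂ) * (ω z * h z)) := by
      rw [hh]; simp only
      push_cast
      field_simp [hd2 z hz]
      ring
    have h2 : ‖((-A:ℝ):ℂ) * (ω z * h z)‖^2 = A^2 * (‖ω z‖^2 * ‖h z‖^2) := by
      rw [norm_mul, norm_mul, Complex.norm_real, Real.norm_eq_abs, abs_neg,
        _root_.abs_of_pos hA0, mul_pow, mul_pow]
    conv_lhs => rw [hid]
    rw [hnorm1, Complex.re_ofReal_mul, h2]
    ring
  have h1A2 : (0:ℝ) < 1 - A^2 := by nlinarith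
  have hK1pt : ∀ z ∈ ball (0:ℂ) 1, ‖v z‖^2
      = A^2 + 2*(A*(1-A^2))*(ω z * h z).re + (1-A^2)^2*(‖ω z‖^2*‖h z‖^2) := by
    intro z hz
    have hhz : h z = (1 - (A:ℂ)*v z)/(1 - (A:ℂ)^2) := by
      rw [hh]; simp only; rw [he1 z hz, inv_div]
    have hid : v z = ((A:ℝ):ℂ) + (((1-A^2:ℝ):ℂ) * (ω z * h z)) := by
      rw [hhz, hω]; simp only
      push_cast
      field_simp [hden z hz, hA2ne]
      rw [mul_div_assoc, div_self (by rw [mul_comm]; exact hden z hz)]; ring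
    have h2 : ‖((1-A^2:ℝ):ℂ) * (ω z * h z)‖^2 = (1-A^2)^2 * (‖ω z‖^2 * ‖h z‖^2) := by
      rw [norm_mul, norm_mul, Complex.norm_real, Real.norm_eq_abs,
        _root_.abs_of_pos h1A2, mul_pow, mul_pow]
    conv_lhs => rw [hid]
    rw [hnorm1, Complex.re_ofReal_mul, h2]
    ring
  -- integrability
  have i1 : IntervalIntegrable (fun θ:ℝ => (ω (circleMap 0 r θ) * h (circleMap 0 r θ)).re)
      MeasureTheory.volume 0 (2*Real.pi) :=
    hintR (Complex.continuous_re.comp (hωc.mul hhc))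
  have i2 : IntervalIntegrable
      (fun θ:ℝ => ‖ω (circleMap 0 r θ)‖^2 * ‖h (circleMap 0 r θ)‖^2)
      MeasureTheory.volume 0 (2*Real.pi) :=
    hintR ((hωc.norm.pow 2).mul (hhc.norm.pow 2))
  have hIωb : Iω ≤ r^2 * Ih := by
    rw [hIω, hIh, ← intervalIntegral.integral_const_mul]
    apply intervalIntegral.integral_mono_on (by positivity) i2
      (hintR (continuous_const.mul (hhc.norm.pow 2)))
    intro θ _
    have h3 := hωr θ
    have h5 := norm_nonneg (ω (circleMap 0 r θ))
    have h6 : ‖ω (circleMap 0 r θ)‖^2 ≤ r^2 := by nlinarith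
    exact mul_le_mul_of_nonneg_right h6 (by positivity)
  have hIhpos : 0 ≤ Ih := by
    rw [hIh]
    apply intervalIntegral.integral_nonneg (by positivity)
    intro u _; positivity
  -- K2
  have hIh_eq : Ih = 2*Real.pi - 2*A*0 + A^2 * Iω := by
    rw [hIh, intervalIntegral.integral_congr (g :=
      fun θ => 1 - 2*A*(ω (circleMap 0 r θ) * h (circleMap 0 r θ)).re
        + A^2*(‖ω (circleMap 0 r θ)‖^2 * ‖h (circleMap 0 r θ)‖^2))
      (fun θ _ => hK2pt _ (hmem θ))]
    rw [intervalIntegral.integral_add (intervalIntegrable_const.sub (i1.const_mul (2*A)))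
      (i2.const_mul (A^2)),
      intervalIntegral.integral_sub intervalIntegrable_const (i1.const_mul (2*A)),
      intervalIntegral.integral_const_mul, intervalIntegral.integral_const_mul,
      hrec, intervalIntegral.integral_const]
    rw [hIω]
    simp
  have hArlt : A^2*r^2 < 1 := by nlinarith
  have hArpos : (0:ℝ) < 1 - A^2*r^2 := by linarith
  have hIhb : Ih ≤ 2*Real.pi * (1 - A^2*r^2)⁻¹ := by
    have hstep : Ih * (1-A^2*r^2) ≤ 2*Real.pi := by nlinarith [sq_nonneg A]
    rw [← div_eq_mul_inv]
    exact (le_div_iff₀ hArpos).2 hstep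
  -- K1
  have hIv_eq : Iv = 2*Real.pi*A^2 + 2*(A*(1-A^2))*0 + (1-A^2)^2 * Iω := by
    rw [hIv, intervalIntegral.integral_congr (g :=
      fun θ => A^2 + 2*(A*(1-A^2))*(ω (circleMap 0 r θ) * h (circleMap 0 r θ)).re
        + (1-A^2)^2*(‖ω (circleMap 0 r θ)‖^2 * ‖h (circleMap 0 r θ)‖^2))
      (fun θ _ => hK1pt _ (hmem θ))]
    rw [intervalIntegral.integral_add (intervalIntegrable_const.add
        (i1.const_mul (2*(A*(1-A^2))))) (i2.const_mul ((1-A^2)^2)),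
      intervalIntegral.integral_add intervalIntegrable_const (i1.const_mul (2*(A*(1-A^2)))),
      intervalIntegral.integral_const_mul, intervalIntegral.integral_const_mul,
      hrec, intervalIntegral.integral_const]
    rw [hIω]
    simp only [smul_eq_mul, sub_zero]
  obtain ⟨M, hM⟩ : ∃ x:ℝ, x = A^2 + (1-A^2)^2 * r^2 * (1 - A^2*r^2)⁻¹ := ⟨_, rfl⟩
  have hIvb : Iv ≤ 2*Real.pi*M := by
    rw [hIv_eq, hM]
    have c1 : (1-A^2)^2 * Iω ≤ (1-A^2)^2 * (r^2 * Ih) :=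
      mul_le_mul_of_nonneg_left hIωb (by positivity)
    have c2 : (1-A^2)^2 * (r^2 * Ih) ≤ (1-A^2)^2 * (r^2 * (2*Real.pi * (1 - A^2*r^2)⁻¹)) := by
      apply mul_le_mul_of_nonneg_left _ (by positivity)
      exact mul_le_mul_of_nonneg_left hIhb (by positivity)
    have c3 : (1-A^2)^2 * (r^2 * (2*Real.pi*(1-A^2*r^2)⁻¹))
        = 2*Real.pi*((1-A^2)^2*r^2*(1-A^2*r^2)⁻¹) := by ring
    linarith [c1, c2]
  -- Bessel
  have hSK : ∀ K : ℕ, ∑ n ∈ Finset.range K, ‖a (n+m)‖^2*r^(2*n) ≤ M := by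
    intro K
    have h1 := bessel hgdiff hgsum hrpos hr1 K
    have h2 : (∫ θ in (0:ℝ)..(2*Real.pi), ‖g (circleMap 0 r θ)‖^2) = Iv := by
      rw [hIv]
      apply intervalIntegral.integral_congr
      intro θ _
      dsimp only
      rw [hvnorm]
    rw [h2] at h1
    have hπ := Real.pi_pos
    nlinarith [h1, hIvb]
  -- assemble in ℝ≥0∞
  have hT : ∑' n:ℕ, A^(2*(n+1))*r^(2*(n+1)) = A^2*r^2 * (1 - A^2*r^2)⁻¹ := by
    have hterm : ∀ n:ℕ, A^(2*(n+1))*r^(2*(n+1)) = (A^2*r^2) * (A^2*r^2)^n := by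
      intro n
      rw [pow_mul, pow_mul, ← mul_pow, pow_succ']
    rw [tsum_congr hterm, tsum_mul_left, tsum_geometric_of_lt_one (by positivity) hArlt]
  have hMeq : A^2 + (1/A - A)^2 * ∑' n:ℕ, A^(2*(n+1))*r^(2*(n+1)) = M := by
    rw [hT, hM]
    have h4 : (1/A - A)^2 * (A^2*r^2*(1-A^2*r^2)⁻¹)
        = (1-A^2)^2 * r^2 * (1-A^2*r^2)⁻¹ := by
      rw [show (1/A - A)^2 * (A^2*r^2*(1-A^2*r^2)⁻¹)
          = ((1/A - A)^2 * A^2) * (r^2*(1-A^2*r^2)⁻¹) from by ring]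
      rw [show (1/A - A)^2 * A^2 = ((1/A - A)*A)^2 from by ring]
      rw [show ((1/A) - A)*A = 1 - A^2 from by field_simp]
      ring
    linarith [h4]
  rw [hMeq]
  rw [ENNReal.tsum_eq_iSup_sum]
  apply iSup_le
  intro s
  obtain ⟨K, hK⟩ := s.exists_nat_subset_range
  calc ∑ n ∈ s, ENNReal.ofReal (‖a (n+m)‖^2 * r^(2*n))
      = ENNReal.ofReal (∑ n ∈ s, ‖a (n+m)‖^2 * r^(2*n)) := by
        rw [ENNReal.ofReal_sum_of_nonneg (fun i _ => by positivity)]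
    _ ≤ ENNReal.ofReal (∑ n ∈ Finset.range K, ‖a (n+m)‖^2 * r^(2*n)) :=
        ENNReal.ofReal_le_ofReal
          (Finset.sum_le_sum_of_subset_of_nonneg hK (fun i _ _ => by positivity))
    _ ≤ ENNReal.ofReal M := ENNReal.ofReal_le_ofReal (hSK K)


end
end

section
/- Let f(z) = Σ_{n≥1} a_n z^n be analytic in the unit disk with ‖f‖_∞ ≤ 1 and a = |a_1|. Then Σ_{n≥1} n |a_n| r^{n-1} ≤ a + (1/(1-r)^2 - 1)(1 - a^2) for 0 ≤ r < 1; consequently M_r f′ ≤ 1 whenever r ≤ 1 - √((1+a)/(2+a)). -/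
open MeasureTheory Complex AddCircle ENNReal Filter

lemma integrable_cont' {T : ℝ} [Fact (0 < T)] {E : Type*} [NormedAddCommGroup E]
    {g : AddCircle T → E} (hg : Continuous g) :
    Integrable g haarAddCircle :=
  hg.integrable_of_hasCompactSupport (HasCompactSupport.of_compactSpace g)

lemma integral_fourier {T : ℝ} [hT : Fact (0 < T)] (j : ℤ) :
    ∫ x : AddCircle T, fourier j x ∂haarAddCircle = if j = 0 then 1 else 0 := by
  split_ifs with h
  · subst h
    have : (fun x : AddCircle T => fourier 0 x) = fun _ => (1:ℂ) := funext fun x => fourier_zero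
    rw [this, integral_const, probReal_univ, one_smul]
  · exact integral_eq_zero_of_add_right_eq_neg (fourier_add_half_inv_index h hT.out)

lemma fourier_pow' {T : ℝ} (j : ℕ) (x : AddCircle T) :
    (fourier 1 x) ^ j = fourier (j : ℤ) x := by
  induction j with
  | zero => simp [fourier_zero]
  | succ n ih =>
    have : ((n : ℤ) + 1) = ((n + 1 : ℕ) : ℤ) := by push_cast; ring
    rw [pow_succ, ih, ← fourier_add (m := (n:ℤ)) (n := 1)]
    norm_cast

lemma integral_two_fourier {T : ℝ} [hT : Fact (0 < T)] (C₁ C₂ : ℂ) (j₁ j₂ : ℤ) :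
    ∫ x : AddCircle T, (C₁ * fourier j₁ x + C₂ * fourier j₂ x) ∂haarAddCircle
      = (if j₁ = 0 then C₁ else 0) + (if j₂ = 0 then C₂ else 0) := by
  rw [integral_add]
  · rw [integral_const_mul, integral_const_mul, integral_fourier, integral_fourier]
    split_ifs <;> simp
  · exact integrable_cont' (continuous_const.mul (map_continuous _))
  · exact integrable_cont' (continuous_const.mul (map_continuous _))

lemma fourierCoeff_two_fourier {T : ℝ} [hT : Fact (0 < T)] (C₁ C₂ : ℂ) (j₁ j₂ k : ℤ) :
    fourierCoeff (fun x : AddCircle T => C₁ * fourier j₁ x + C₂ * fourier j₂ x) k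
      = (if k = j₁ then C₁ else 0) + (if k = j₂ then C₂ else 0) := by
  unfold fourierCoeff
  have h : ∀ x : AddCircle T, fourier (-k) x • (C₁ * fourier j₁ x + C₂ * fourier j₂ x)
      = C₁ * fourier (-k + j₁) x + C₂ * fourier (-k + j₂) x := by
    intro x
    simp only [smul_eq_mul, fourier_add]
    ring
  rw [MeasureTheory.integral_congr_ae (Filter.Eventually.of_forall h), integral_two_fourier]
  congr 1
  · congr 1; simp only [eq_iff_iff]; omega
  · congr 1; simp only [eq_iff_iff]; omega

/-- Parseval for continuous functions on `AddCircle T`. -/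
lemma parseval_cont {T : ℝ} [hT : Fact (0 < T)] {g : AddCircle T → ℂ} (hg : Continuous g) :
    (Summable fun i : ℤ => ‖fourierCoeff g i‖ ^ 2) ∧
      ∑' i : ℤ, ‖fourierCoeff g i‖ ^ 2 = ∫ x : AddCircle T, ‖g x‖ ^ 2 ∂haarAddCircle := by
  set gC : C(AddCircle T, ℂ) := ⟨g, hg⟩ with hgC
  set gL := ContinuousMap.toLp (E := ℂ) 2 haarAddCircle ℂ gC with hgL
  have hcoeff : ∀ i : ℤ, fourierCoeff (↑↑gL : AddCircle T → ℂ) i = fourierCoeff g i :=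
    fun i => fourierCoeff_toLp gC i
  constructor
  · have hmem := lp.memℓp (fourierBasis.repr gL)
    rw [memℓp_gen_iff (by norm_num)] at hmem
    have : (fun i : ℤ => ‖(fourierBasis.repr gL) i‖ ^ (ENNReal.toReal 2))
        = fun i : ℤ => ‖fourierCoeff g i‖ ^ 2 := by
      funext i
      rw [fourierBasis_repr, hcoeff i]
      norm_num
    rwa [this] at hmem
  · have h := tsum_sq_fourierCoeff gL
    simp_rw [hcoeff] at h
    rw [h]
    apply integral_congr_ae
    filter_upwards [ContinuousMap.coeFn_toLp (p := 2) haarAddCircle (𝕜 := ℂ) gC] with x hx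
    rw [hx]
    rfl

lemma summable_norm_coeff (a : ℕ → ℂ) (f : ℂ → ℂ)
    (hf : ∀ z ∈ Metric.ball (0 : ℂ) 1,
      HasSum (fun n : ℕ => a (n + 1) * z ^ (n + 1)) (f z))
    {ρ : ℝ} (h0 : 0 ≤ ρ) (h1 : ρ < 1) :
    Summable fun n : ℕ => ‖a (n + 1)‖ * ρ ^ (n + 1) := by
  have hz : (ρ : ℂ) ∈ Metric.ball (0 : ℂ) 1 := by
    simp [Complex.norm_of_nonneg h0, _root_.abs_of_nonneg h0, h1]
  have h2 := summable_norm_iff.mpr (hf _ hz).summable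
  have h3 : (fun n : ℕ => ‖a (n + 1) * (ρ:ℂ) ^ (n + 1)‖)
      = fun n : ℕ => ‖a (n + 1)‖ * ρ ^ (n + 1) := by
    funext n
    rw [norm_mul, norm_pow, Complex.norm_real, Real.norm_of_nonneg h0]
  rwa [h3] at h2

section Step
variable (a : ℕ → ℂ) (f : ℂ → ℂ)

include a f in
lemma step
    (hf : ∀ z ∈ Metric.ball (0 : ℂ) 1,
      HasSum (fun n : ℕ => a (n + 1) * z ^ (n + 1)) (f z))
    (hb : ∀ z ∈ Metric.ball (0 : ℂ) 1, ‖f z‖ ≤ 1)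
    (hsumm : ∀ {ρ : ℝ}, 0 ≤ ρ → ρ < 1 → Summable fun n : ℕ => ‖a (n + 1)‖ * ρ ^ (n + 1))
    (m : ℕ) (hm : 2 ≤ m) {ρ : ℝ} (h0 : 0 ≤ ρ) (h1 : ρ < 1) (α β : ℂ) :
    ‖α * a 1 * (ρ:ℂ)‖ ^ 2 + ‖(α * a m + β * a 1) * (ρ:ℂ) ^ m‖ ^ 2
      ≤ ‖α‖ ^ 2 + ‖β * (ρ:ℂ) ^ (m - 1)‖ ^ 2 := by
  haveI : Fact (0 < (1:ℝ)) := ⟨one_pos⟩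
  have hnorm : ∀ x : AddCircle 1, ‖(ρ:ℂ) * fourier 1 x‖ = ρ := by
    intro x
    rw [norm_mul, Complex.norm_real, Real.norm_of_nonneg h0]
    have h2 : ‖fourier 1 x‖ = 1 := Circle.norm_coe _
    rw [h2, mul_one]
  have hmem : ∀ x : AddCircle 1, (ρ:ℂ) * fourier 1 x ∈ Metric.ball (0:ℂ) 1 := by
    intro x; rw [Metric.mem_ball, dist_zero_right, hnorm]; exact h1
  set P : AddCircle 1 → ℂ := fun x => α + β * ((ρ:ℂ) * fourier 1 x) ^ (m-1) with hP
  have hPcont : Continuous P :=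
    continuous_const.add (continuous_const.mul ((continuous_const.mul (map_continuous _)).pow _))
  have hPnorm : ∀ x, ‖P x‖ ≤ ‖α‖ + ‖β‖ * ρ ^ (m-1) := by
    intro x
    refine (norm_add_le _ _).trans ?_
    rw [norm_mul, norm_pow, hnorm]
  set F : AddCircle 1 → ℂ := fun x => f ((ρ:ℂ) * fourier 1 x) * P x with hF
  have hfcont : Continuous fun x : AddCircle 1 => f ((ρ:ℂ) * fourier 1 x) := by
    have heq : (fun x : AddCircle 1 => f ((ρ:ℂ) * fourier 1 x))
        = fun x => ∑' n : ℕ, a (n+1) * ((ρ:ℂ) * fourier 1 x) ^ (n+1) :=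
      funext fun x => ((hf _ (hmem x)).tsum_eq).symm
    rw [heq]
    apply continuous_tsum (u := fun n => ‖a (n+1)‖ * ρ ^ (n+1))
      (fun n => continuous_const.mul ((continuous_const.mul (map_continuous _)).pow _))
      (hsumm h0 h1)
    intro n x
    show ‖a (n+1) * ((ρ:ℂ) * fourier 1 x)^(n+1)‖ ≤ _
    rw [norm_mul, norm_pow, hnorm]
  have hFcont : Continuous F := hfcont.mul hPcont
  -- coefficients of P
  have hPeq : P = fun x : AddCircle 1 =>
      α * fourier 0 x + (β * (ρ:ℂ)^(m-1)) * fourier ((m-1 : ℕ) : ℤ) x := by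
    funext x
    rw [hP]
    simp only [mul_pow, fourier_pow', fourier_zero]
    ring
  have hPcoeff : ∀ k : ℤ, fourierCoeff P k
      = (if k = 0 then α else 0) + (if k = ((m-1:ℕ):ℤ) then β * (ρ:ℂ)^(m-1) else 0) := by
    intro k; rw [hPeq]; exact fourierCoeff_two_fourier _ _ _ _ _
  -- coefficients of F
  have hck : ∀ k : ℤ, HasSum (fun n : ℕ =>
      (if k = ((n+1:ℕ):ℤ) then α * a (n+1) * (ρ:ℂ)^(n+1) else 0)
        + (if k = ((n+m:ℕ):ℤ) then β * a (n+1) * (ρ:ℂ)^(n+m) else 0)) (fourierCoeff F k) := by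
    intro k
    set G : ℕ → AddCircle 1 → ℂ :=
      fun n x => fourier (-k) x • (a (n+1) * ((ρ:ℂ) * fourier 1 x)^(n+1) * P x) with hG
    have hGcont : ∀ n, Continuous (G n) := fun n =>
      ((map_continuous (fourier (-k))).mul
        ((continuous_const.mul ((continuous_const.mul (map_continuous _)).pow _)).mul hPcont))
    have hGnorm : ∀ n x, ‖G n x‖ ≤ ‖a (n+1)‖ * ρ^(n+1) * (‖α‖ + ‖β‖ * ρ^(m-1)) := by
      intro n x
      rw [hG]
      simp only [smul_eq_mul]
      rw [norm_mul, norm_mul, norm_mul, norm_pow, hnorm]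
      have h2 : ‖fourier (-k) x‖ = 1 := Circle.norm_coe _
      rw [h2, one_mul]
      exact mul_le_mul_of_nonneg_left (hPnorm x)
        (mul_nonneg (norm_nonneg _) (pow_nonneg h0 _))
    have hGint : ∀ n, Integrable (G n) haarAddCircle := fun n => integrable_cont' (hGcont n)
    have hsum : Summable fun n => ∫ x, ‖G n x‖ ∂haarAddCircle := by
      apply Summable.of_nonneg_of_le (fun n => integral_nonneg fun x => norm_nonneg _)
        (fun n => ?_) (((hsumm h0 h1)).mul_right (‖α‖ + ‖β‖ * ρ^(m-1)))
      calc ∫ x, ‖G n x‖ ∂haarAddCircle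
          ≤ ∫ _x : AddCircle 1, (‖a (n+1)‖ * ρ^(n+1) * (‖α‖ + ‖β‖ * ρ^(m-1))) ∂haarAddCircle :=
            integral_mono (hGint n).norm (integrable_const _) (hGnorm n)
        _ = _ := by simp [measure_univ]
    have key := hasSum_integral_of_summable_integral_norm hGint hsum
    -- identify the total integral
    have htsum : (∫ x, ∑' n, G n x ∂haarAddCircle) = fourierCoeff F k := by
      rw [fourierCoeff]
      apply integral_congr_ae
      apply Filter.Eventually.of_forall
      intro x
      simp only [hG, hF, smul_eq_mul]
      exact (((hf _ (hmem x)).mul_right (P x)).mul_left (fourier (-k) x)).tsum_eq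
    rw [htsum] at key
    -- compute each integral
    have hGeq : ∀ n, (∫ x, G n x ∂haarAddCircle)
        = (if k = ((n+1:ℕ):ℤ) then α * a (n+1) * (ρ:ℂ)^(n+1) else 0)
          + (if k = ((n+m:ℕ):ℤ) then β * a (n+1) * (ρ:ℂ)^(n+m) else 0) := by
      intro n
      have hfun : G n = fun x =>
          (α * a (n+1) * (ρ:ℂ)^(n+1)) * fourier (-k + ((n+1:ℕ):ℤ)) x
            + (β * a (n+1) * (ρ:ℂ)^(n+m)) * fourier (-k + ((n+m:ℕ):ℤ)) x := by
        funext x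
        rw [hG]
        simp only [smul_eq_mul, hP]
        rw [mul_pow, fourier_pow', mul_pow, fourier_pow']
        rw [fourier_add (m := -k) (n := ((n+1:ℕ):ℤ)), fourier_add (m := -k) (n := ((n+m:ℕ):ℤ))]
        have hc : ((n+m:ℕ):ℤ) = ((n+1:ℕ):ℤ) + ((m-1:ℕ):ℤ) := by push_cast; omega
        rw [hc, fourier_add (m := ((n+1:ℕ):ℤ)) (n := ((m-1:ℕ):ℤ))]
        have hp : (ρ:ℂ)^(n+m) = (ρ:ℂ)^(n+1) * (ρ:ℂ)^(m-1) := by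
          rw [← pow_add]; congr 1; omega
        rw [hp]
        ring
      rw [hfun, integral_two_fourier]
      congr 1
      · congr 1; simp only [eq_iff_iff]; omega
      · congr 1; simp only [eq_iff_iff]; omega
    simp_rw [hGeq] at key
    exact key
  -- coefficient values at k = 1 and k = m
  have hc1 : fourierCoeff F 1 = α * a 1 * (ρ:ℂ) := by
    have h2 := hck 1
    have e1 : (fun n : ℕ =>
        (if (1:ℤ) = ((n+1:ℕ):ℤ) then α * a (n+1) * (ρ:ℂ)^(n+1) else 0)
          + (if (1:ℤ) = ((n+m:ℕ):ℤ) then β * a (n+1) * (ρ:ℂ)^(n+m) else 0))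
        = fun n : ℕ => if n = 0 then α * a 1 * (ρ:ℂ) else 0 := by
      funext n
      rcases eq_or_ne n 0 with rfl | hn
      · rw [if_pos rfl, if_pos (by norm_num), if_neg (by omega)]
        norm_num
      · rw [if_neg hn, if_neg (by omega), if_neg (by omega)]
        norm_num
    rw [e1] at h2
    exact (h2.unique (hasSum_ite_eq 0 _))
  have hcm : fourierCoeff F m = (α * a m + β * a 1) * (ρ:ℂ)^m := by
    have h2 := hck m
    have e2 : (fun n : ℕ =>
        (if (m:ℤ) = ((n+1:ℕ):ℤ) then α * a (n+1) * (ρ:ℂ)^(n+1) else 0)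
          + (if (m:ℤ) = ((n+m:ℕ):ℤ) then β * a (n+1) * (ρ:ℂ)^(n+m) else 0))
        = fun n : ℕ => (if n = m-1 then α * a m * (ρ:ℂ)^m else 0)
          + (if n = 0 then β * a 1 * (ρ:ℂ)^m else 0) := by
      funext n
      congr 1
      · rcases eq_or_ne n (m-1) with rfl | hn
        · rw [if_pos (by omega), if_pos rfl]
          have hmm1 : m - 1 + 1 = m := by omega
          rw [hmm1]
        · rw [if_neg (by omega), if_neg hn]
      · rcases eq_or_ne n 0 with rfl | hn
        · rw [if_pos (by omega), if_pos rfl]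
          norm_num
        · rw [if_neg (by omega), if_neg hn]
    rw [e2] at h2
    have h3 : HasSum (fun n : ℕ => (if n = m-1 then α * a m * (ρ:ℂ)^m else 0)
          + (if n = 0 then β * a 1 * (ρ:ℂ)^m else 0))
        (α * a m * (ρ:ℂ)^m + β * a 1 * (ρ:ℂ)^m) :=
      (hasSum_ite_eq (m-1) _).add (hasSum_ite_eq 0 _)
    rw [h2.unique h3]
    ring
  -- Parseval/Bessel chain
  obtain ⟨hFsumm, hFpar⟩ := parseval_cont hFcont
  obtain ⟨_, hPpar⟩ := parseval_cont hPcont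
  have hbessel : ‖fourierCoeff F 1‖^2 + ‖fourierCoeff F (m:ℤ)‖^2
      ≤ ∑' i : ℤ, ‖fourierCoeff F i‖ ^ 2 := by
    have := Summable.sum_le_tsum ({1, (m:ℤ)} : Finset ℤ) (fun i _ => sq_nonneg _) hFsumm
    rwa [Finset.sum_pair (by omega : (1:ℤ) ≠ (m:ℤ))] at this
  have hint_le : (∫ x : AddCircle 1, ‖F x‖ ^ 2 ∂haarAddCircle)
      ≤ ∫ x : AddCircle 1, ‖P x‖ ^ 2 ∂haarAddCircle := by
    apply integral_mono (integrable_cont' (by fun_prop)) (integrable_cont' (by fun_prop))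
    intro x
    have hFP : ‖F x‖ ≤ ‖P x‖ := by
      rw [hF]
      simp only
      rw [norm_mul]
      calc ‖f ((ρ:ℂ) * fourier 1 x)‖ * ‖P x‖ ≤ 1 * ‖P x‖ :=
        mul_le_mul_of_nonneg_right (hb _ (hmem x)) (norm_nonneg _)
      _ = ‖P x‖ := one_mul _
    exact pow_le_pow_left₀ (norm_nonneg _) hFP 2
  have hPsum : (∑' i : ℤ, ‖fourierCoeff P i‖ ^ 2) = ‖α‖^2 + ‖β * (ρ:ℂ)^(m-1)‖^2 := by
    rw [tsum_eq_sum (s := ({0, ((m-1:ℕ):ℤ)} : Finset ℤ)) ?_]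
    · rw [Finset.sum_pair (by omega : (0:ℤ) ≠ ((m-1:ℕ):ℤ))]
      rw [hPcoeff 0, hPcoeff (((m-1:ℕ):ℤ))]
      rw [if_pos rfl, if_neg (by omega), if_neg (by omega), if_pos rfl]
      simp
    · intro b hb'
      simp only [Finset.mem_insert, Finset.mem_singleton] at hb'
      push_neg at hb'
      rw [hPcoeff b, if_neg hb'.1, if_neg hb'.2]
      simp
  calc ‖α * a 1 * (ρ:ℂ)‖ ^ 2 + ‖(α * a m + β * a 1) * (ρ:ℂ) ^ m‖ ^ 2
      = ‖fourierCoeff F 1‖^2 + ‖fourierCoeff F (m:ℤ)‖^2 := by rw [hc1, hcm]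
    _ ≤ ∑' i : ℤ, ‖fourierCoeff F i‖ ^ 2 := hbessel
    _ = ∫ x : AddCircle 1, ‖F x‖ ^ 2 ∂haarAddCircle := hFpar
    _ ≤ ∫ x : AddCircle 1, ‖P x‖ ^ 2 ∂haarAddCircle := hint_le
    _ = ∑' i : ℤ, ‖fourierCoeff P i‖ ^ 2 := hPpar.symm
    _ = ‖α‖^2 + ‖β * (ρ:ℂ)^(m-1)‖^2 := hPsum

end Step

section K
variable {a : ℕ → ℂ} {f : ℂ → ℂ}

lemma keylem
    (hstep : ∀ (m : ℕ), 2 ≤ m → ∀ {ρ : ℝ}, 0 ≤ ρ → ρ < 1 → ∀ (α β : ℂ),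
      ‖α * a 1 * (ρ:ℂ)‖ ^ 2 + ‖(α * a m + β * a 1) * (ρ:ℂ) ^ m‖ ^ 2
        ≤ ‖α‖ ^ 2 + ‖β * (ρ:ℂ) ^ (m - 1)‖ ^ 2)
    (m : ℕ) (hm : 2 ≤ m) (α β : ℂ) :
    ‖α * a 1‖ ^ 2 + ‖α * a m + β * a 1‖ ^ 2 ≤ ‖α‖ ^ 2 + ‖β‖ ^ 2 := by
  set ρ : ℕ → ℝ := fun j => 1 - ((j:ℝ)+1+1)⁻¹ with hρdef
  have hjpos : ∀ j : ℕ, (0:ℝ) < (j:ℝ)+1+1 := by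
    intro j; have : (0:ℝ) ≤ (j:ℝ) := Nat.cast_nonneg j; linarith
  have h0 : ∀ j : ℕ, 0 ≤ ρ j := by
    intro j
    have h2 : ((j:ℝ)+1+1)⁻¹ ≤ 1 := by
      rw [inv_le_one_iff₀]; right; linarith [hjpos j]
    simp only [hρdef]
    linarith
  have h1 : ∀ j : ℕ, ρ j < 1 := by
    intro j
    have : 0 < ((j:ℝ)+1+1)⁻¹ := by positivity
    simp only [hρdef]; linarith
  have hρ : Tendsto ρ atTop (nhds 1) := by
    have h2 : Tendsto (fun j : ℕ => ((j:ℝ)+1+1)⁻¹) atTop (nhds 0) := by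
      have h4 := (tendsto_one_div_add_atTop_nhds_zero_nat (𝕜 := ℝ)).comp (tendsto_add_atTop_nat 1)
      apply h4.congr
      intro j
      show (1:ℝ)/(((j+1:ℕ):ℝ)+1) = ((j:ℝ)+1+1)⁻¹
      push_cast
      ring_nf
    have h3 := tendsto_const_nhds (x := (1:ℝ)) (f := atTop (α := ℕ)) |>.sub h2
    simpa using h3
  have hρC : Tendsto (fun j => ((ρ j : ℝ) : ℂ)) atTop (nhds 1) := by
    have := (Complex.continuous_ofReal.tendsto 1).comp hρ
    simpa [Function.comp_def] using this
  have hL : Tendsto (fun j => ‖α * a 1 * ((ρ j:ℝ):ℂ)‖ ^ 2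
      + ‖(α * a m + β * a 1) * ((ρ j:ℝ):ℂ) ^ m‖ ^ 2) atTop
      (nhds (‖α * a 1‖ ^ 2 + ‖α * a m + β * a 1‖ ^ 2)) := by
    have c1 : Tendsto (fun j => α * a 1 * ((ρ j:ℝ):ℂ)) atTop (nhds (α * a 1 * 1)) :=
      tendsto_const_nhds.mul hρC
    have c2 : Tendsto (fun j => (α * a m + β * a 1) * ((ρ j:ℝ):ℂ) ^ m) atTop
        (nhds ((α * a m + β * a 1) * 1 ^ m)) := tendsto_const_nhds.mul (hρC.pow m)
    have := ((c1.norm.pow 2).add (c2.norm.pow 2))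
    simpa using this
  have hR : Tendsto (fun j => ‖α‖ ^ 2 + ‖β * ((ρ j:ℝ):ℂ) ^ (m-1)‖ ^ 2) atTop
      (nhds (‖α‖ ^ 2 + ‖β‖ ^ 2)) := by
    have c2 : Tendsto (fun j => β * ((ρ j:ℝ):ℂ) ^ (m-1)) atTop (nhds (β * 1 ^ (m-1))) :=
      tendsto_const_nhds.mul (hρC.pow _)
    have := tendsto_const_nhds (x := ‖α‖^2) (f := atTop (α := ℕ)) |>.add (c2.norm.pow 2)
    simpa using this
  exact le_of_tendsto_of_tendsto' hL hR fun j => hstep m hm (h0 j) (h1 j) α β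

lemma coeff_bound
    (hkey : ∀ (m : ℕ), 2 ≤ m → ∀ (α β : ℂ),
      ‖α * a 1‖ ^ 2 + ‖α * a m + β * a 1‖ ^ 2 ≤ ‖α‖ ^ 2 + ‖β‖ ^ 2) :
    ‖a 1‖ ≤ 1 ∧ ∀ m : ℕ, 2 ≤ m → ‖a m‖ ≤ 1 - ‖a 1‖ ^ 2 := by
  have hA0 : (0:ℝ) ≤ ‖a 1‖ := norm_nonneg _
  have h2 := hkey 2 le_rfl 1 0
  simp only [one_mul, zero_mul, add_zero, norm_one, norm_zero] at h2
  have hA1 : ‖a 1‖ ≤ 1 := by nlinarith [sq_nonneg (‖a 1‖ - 1), sq_nonneg (‖a 2‖)]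
  refine ⟨hA1, fun m hm => ?_⟩
  set A := ‖a 1‖ with hA
  set B := ‖a m‖ with hB
  have hB0 : (0:ℝ) ≤ B := norm_nonneg _
  have hbase := hkey m hm 1 0
  simp only [one_mul, zero_mul, add_zero, norm_one, norm_zero] at hbase
  -- hbase : A^2 + B^2 ≤ 1 + 0 (probably 1^2 + 0^2)
  rcases eq_or_lt_of_le hA1 with hAeq | hAlt
  · -- A = 1 : then B = 0
    have h4 : B ^ 2 ≤ 0 := by nlinarith
    have h5 : B = 0 := by nlinarith [sq_nonneg B]
    rw [h5]; nlinarith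
  · rcases eq_or_ne (a 1) 0 with ha1 | ha1
    · have : A = 0 := by rw [hA, ha1, norm_zero]
      rw [this]
      norm_num
      nlinarith [hbase, sq_nonneg (B - 1)]
    rcases eq_or_ne (a m) 0 with ham | ham
    · have h5 : B = 0 := by rw [hB, ham, norm_zero]
      rw [h5]; nlinarith
    · have hA0' : 0 < A := by rw [hA]; exact norm_pos_iff.mpr ha1
      have hB0' : 0 < B := by rw [hB]; exact norm_pos_iff.mpr ham
      set u : ℝ := 1 - A^2 with hu
      have hu0 : 0 < u := by nlinarith
      set t : ℝ := A * B / u with ht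
      have ht0 : 0 ≤ t := by positivity
      set β : ℂ := (t / (B * A) : ℝ) * (a m * (starRingEnd ℂ) (a 1)) with hβ
      have haC : (A:ℂ) ≠ 0 := Complex.ofReal_ne_zero.mpr hA0'.ne'
      have hbC : (B:ℂ) ≠ 0 := Complex.ofReal_ne_zero.mpr hB0'.ne'
      have hβnorm : ‖β‖ = t := by
        rw [hβ, norm_mul, norm_mul, Complex.norm_real, RCLike.norm_conj]
        rw [Real.norm_of_nonneg (by positivity)]
        rw [← hA, ← hB]
        field_simp
      have hconj : (starRingEnd ℂ) (a 1) * a 1 = ((A^2 : ℝ) : ℂ) := by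
        rw [mul_comm, Complex.mul_conj]
        congr 1
        rw [Complex.normSq_eq_norm_sq, ← hA]
      have hβa1 : β * a 1 = ((t * A / B : ℝ) : ℂ) * a m := by
        rw [hβ]
        calc ((t / (B * A) : ℝ):ℂ) * (a m * (starRingEnd ℂ) (a 1)) * a 1
            = ((t / (B * A) : ℝ):ℂ) * a m * ((starRingEnd ℂ) (a 1) * a 1) := by ring
          _ = ((t / (B * A) : ℝ):ℂ) * a m * ((A^2:ℝ):ℂ) := by rw [hconj]
          _ = ((t * A / B : ℝ) : ℂ) * a m := by
              push_cast
              field_simp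
      have hsum : ‖a m + β * a 1‖ = B + t * A := by
        rw [hβa1]
        have h8 : a m + ((t * A / B : ℝ) : ℂ) * a m = ((1 + t * A / B : ℝ) : ℂ) * a m := by
          push_cast; ring
        rw [h8, norm_mul, Complex.norm_real, Real.norm_of_nonneg (by positivity), ← hB]
        field_simp
      have hk := hkey m hm 1 β
      rw [one_mul, one_mul, hsum, hβnorm, norm_one] at hk
      rw [← hA] at hk
      have htu : t * u = A * B := by rw [ht]; field_simp
      have hq3 : (A*B)*t ≤ u - B^2 := by nlinarith [hk, htu]
      have hq4 : (A*B)*t*u = (A*B)^2 := by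
        have h7 : (A*B)*t*u = (A*B)*(t*u) := by ring
        rw [h7, htu]; ring
      have hq5 : (A*B)^2 ≤ (u - B^2)*u := by
        have h9 := mul_le_mul_of_nonneg_right hq3 hu0.le
        rwa [hq4] at h9
      have hq6 : u + A^2 = 1 := by rw [hu]; ring
      have hq7 : B^2 ≤ u^2 := by nlinarith [hq5, hq6, sq_nonneg B]
      have h10 := Real.sqrt_le_sqrt hq7
      rwa [Real.sqrt_sq hB0, Real.sqrt_sq hu0.le] at h10
end K

section Final
variable {a : ℕ → ℂ}

lemma part1_lemma (hA1 : ‖a 1‖ ≤ 1)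
    (hcoeff : ∀ m : ℕ, 2 ≤ m → ‖a m‖ ≤ 1 - ‖a 1‖ ^ 2)
    (A : ℝ) (hA : A = ‖a 1‖) :
    ∀ r : ℝ, 0 ≤ r → r < 1 →
      ∑' n : ℕ, ENNReal.ofReal (((n : ℝ) + 1) * ‖a (n + 1)‖ * r ^ n) ≤
        ENNReal.ofReal (A + (1 / (1 - r) ^ 2 - 1) * (1 - A ^ 2)) := by
  intro r hr0 hr1
  have hr1' : (0:ℝ) < 1 - r := by linarith
  subst hA
  have hA2 : (0:ℝ) ≤ 1 - ‖a 1‖^2 := by nlinarith [hA1, norm_nonneg (a 1)]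
  set y : ℕ → ℝ := fun n => if n = 0 then ‖a 1‖ else ((n:ℝ)+1) * ((1 - ‖a 1‖^2) * r^n) with hy
  have hterm : ∀ n : ℕ, ((n : ℝ) + 1) * ‖a (n + 1)‖ * r ^ n ≤ y n := by
    intro n
    cases n with
    | zero => simp [hy]
    | succ k =>
      rw [hy]
      simp only [Nat.succ_ne_zero, if_neg, Nat.cast_succ]
      have hc : ‖a (k+1+1)‖ ≤ 1 - ‖a 1‖^2 := hcoeff (k+2) (by omega)
      calc ((k:ℝ)+1+1) * ‖a (k+1+1)‖ * r^(k+1)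
          ≤ ((k:ℝ)+1+1) * (1-‖a 1‖^2) * r^(k+1) := by
            apply mul_le_mul_of_nonneg_right
              (mul_le_mul_of_nonneg_left hc (by positivity)) (by positivity)
        _ = ((k:ℝ)+1+1) * ((1-‖a 1‖^2) * r^(k+1)) := by ring
  have hgeom : HasSum (fun n : ℕ => ((n:ℝ)+1) * r^n) (1/(1-r)^2) := by
    have hg1 := hasSum_coe_mul_geometric_of_norm_lt_one (r := r)
      (by rwa [Real.norm_of_nonneg hr0])
    have hg2 := hasSum_geometric_of_lt_one hr0 hr1
    have h3 : HasSum (fun n : ℕ => (n:ℝ)*r^n + r^n) (r/(1-r)^2 + (1-r)⁻¹) := hg1.add hg2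
    have h4 : (fun n : ℕ => (n:ℝ)*r^n + r^n) = fun n : ℕ => ((n:ℝ)+1)*r^n := by
      funext n; ring
    rw [h4] at h3
    have h5 : r/(1-r)^2 + (1-r)⁻¹ = 1/(1-r)^2 := by field_simp; ring
    rwa [h5] at h3
  have h6 : HasSum (fun n : ℕ => ((n:ℝ)+1+1) * r^(n+1)) (1/(1-r)^2 - 1) := by
    have h7 : HasSum (fun n : ℕ => ((n:ℝ)+1)*r^n)
        ((1/(1-r)^2 - 1) + ∑ i ∈ Finset.range 1, ((i:ℝ)+1)*r^i) := by
      rw [Finset.sum_range_one]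
      norm_num
      convert hgeom using 1
      ring
    have h8 := (hasSum_nat_add_iff (f := fun n : ℕ => ((n:ℝ)+1)*r^n) 1).mpr h7
    have h9 : (fun n : ℕ => (((n+1:ℕ):ℝ)+1) * r^(n+1))
        = fun n : ℕ => ((n:ℝ)+1+1) * r^(n+1) := by
      funext n; push_cast; ring
    rwa [h9] at h8
  have hshift : HasSum (fun n : ℕ => y (n+1)) ((1 - ‖a 1‖^2) * (1/(1-r)^2 - 1)) := by
    have h7 := h6.mul_left (1 - ‖a 1‖^2)
    have h8 : (fun n : ℕ => y (n+1))
        = fun n : ℕ => (1 - ‖a 1‖^2) * (((n:ℝ)+1+1) * r^(n+1)) := by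
      funext n
      simp only [hy]
      rw [if_neg (Nat.succ_ne_zero n)]
      push_cast
      ring
    rw [h8]
    exact h7
  have hysum : HasSum y ((1 - ‖a 1‖^2) * (1/(1-r)^2 - 1) + ‖a 1‖) := by
    have h9 := (hasSum_nat_add_iff (f := y) 1).mp hshift
    rw [Finset.sum_range_one] at h9
    have h10 : y 0 = ‖a 1‖ := by simp [hy]
    rwa [h10] at h9
  have hy0 : ∀ n, 0 ≤ y n := by
    intro n
    simp only [hy]
    split_ifs
    · exact norm_nonneg _
    · positivity
  calc ∑' n : ℕ, ENNReal.ofReal (((n:ℝ)+1) * ‖a (n+1)‖ * r^n)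
      ≤ ∑' n : ℕ, ENNReal.ofReal (y n) :=
        ENNReal.tsum_le_tsum fun n => ENNReal.ofReal_le_ofReal (hterm n)
    _ = ENNReal.ofReal (∑' n, y n) := (ENNReal.ofReal_tsum_of_nonneg hy0 hysum.summable).symm
    _ = ENNReal.ofReal (‖a 1‖ + (1/(1-r)^2 - 1) * (1 - ‖a 1‖^2)) := by
        rw [hysum.tsum_eq]; congr 1; ring
end Final

lemma part2_real (A r : ℝ) (hA0 : 0 ≤ A) (hA1 : A ≤ 1) (hr0 : 0 ≤ r)
    (hr2 : r ≤ 1 - Real.sqrt ((1 + A) / (2 + A))) :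
    A + (1 / (1 - r) ^ 2 - 1) * (1 - A ^ 2) ≤ 1 := by
  have hq0 : 0 < (1+A)/(2+A) := by positivity
  have hs0 : 0 < Real.sqrt ((1+A)/(2+A)) := Real.sqrt_pos.mpr hq0
  have h1r : Real.sqrt ((1+A)/(2+A)) ≤ 1 - r := by linarith
  have h2 : (1+A)/(2+A) ≤ (1-r)^2 := by
    calc (1+A)/(2+A) = Real.sqrt ((1+A)/(2+A))^2 := (Real.sq_sqrt hq0.le).symm
      _ ≤ (1-r)^2 := by
          apply pow_le_pow_left₀ hs0.le h1r
  have h3 : 1/(1-r)^2 ≤ (2+A)/(1+A) := by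
    have := one_div_le_one_div_of_le hq0 h2
    rwa [one_div_div] at this
  have hA2 : (0:ℝ) ≤ 1 - A^2 := by nlinarith
  have h4 : (1/(1-r)^2 - 1) * (1-A^2) ≤ ((2+A)/(1+A) - 1) * (1-A^2) :=
    mul_le_mul_of_nonneg_right (by linarith) hA2
  have h5 : ((2+A)/(1+A) - 1) * (1-A^2) = 1 - A := by
    have h6 : (1:ℝ)+A ≠ 0 := by positivity
    field_simp
    ring
  linarith

/-- The classical estimate for the majorant series of the derivative: if
`f(z) = Σ_{n≥1} aₙ zⁿ`, `‖f‖_∞ ≤ 1`, `a = |a₁|`, then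
`Σ n|aₙ| r^{n-1} ≤ a + (1/(1-r)² - 1)(1 - a²)`, and hence `M_r f' ≤ 1` for
`r ≤ 1 - √((1+a)/(2+a))`. -/
theorem majorant_series_derivative_classical (a : ℕ → ℂ) (f : ℂ → ℂ)
    (hf : ∀ z ∈ Metric.ball (0 : ℂ) 1,
      HasSum (fun n : ℕ => a (n + 1) * z ^ (n + 1)) (f z))
    (hb : ∀ z ∈ Metric.ball (0 : ℂ) 1, ‖f z‖ ≤ 1)
    (A : ℝ) (hA : A = ‖a 1‖) :
    (∀ r : ℝ, 0 ≤ r → r < 1 →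
      ∑' n : ℕ, ENNReal.ofReal (((n : ℝ) + 1) * ‖a (n + 1)‖ * r ^ n) ≤
        ENNReal.ofReal (A + (1 / (1 - r) ^ 2 - 1) * (1 - A ^ 2))) ∧
    (∀ r : ℝ, 0 ≤ r → r ≤ 1 - Real.sqrt ((1 + A) / (2 + A)) →
      ∑' n : ℕ, ENNReal.ofReal (((n : ℝ) + 1) * ‖a (n + 1)‖ * r ^ n) ≤ 1) := by
  have hsumm : ∀ {ρ : ℝ}, 0 ≤ ρ → ρ < 1 → Summable fun n : ℕ => ‖a (n + 1)‖ * ρ ^ (n + 1) :=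
    fun {ρ} h0 h1 => summable_norm_coeff a f hf h0 h1
  have hstep : ∀ (m : ℕ), 2 ≤ m → ∀ {ρ : ℝ}, 0 ≤ ρ → ρ < 1 → ∀ (α β : ℂ),
      ‖α * a 1 * (ρ:ℂ)‖ ^ 2 + ‖(α * a m + β * a 1) * (ρ:ℂ) ^ m‖ ^ 2
        ≤ ‖α‖ ^ 2 + ‖β * (ρ:ℂ) ^ (m - 1)‖ ^ 2 :=
    fun m hm {ρ} h0 h1 α β =>
      step a f hf hb (fun {σ} h0' h1' => hsumm h0' h1') m hm h0 h1 α β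
  have hkey := fun m hm α β => keylem hstep m hm α β
  obtain ⟨hA1, hcoeff⟩ := coeff_bound hkey
  refine ⟨part1_lemma hA1 hcoeff A hA, fun r hr0 hr2 => ?_⟩
  have hA0 : 0 ≤ A := hA ▸ norm_nonneg _
  have hA1' : A ≤ 1 := hA ▸ hA1
  have hq0 : 0 < (1+A)/(2+A) := by positivity
  have hs0 : 0 < Real.sqrt ((1+A)/(2+A)) := Real.sqrt_pos.mpr hq0
  have hr1 : r < 1 := by linarith
  refine (part1_lemma hA1 hcoeff A hA r hr0 hr1).trans ?_
  exact ENNReal.ofReal_le_one.mpr (part2_real A r hA0 hA1' hr0 hr2)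
end

section
/- Fix a ∈ (0,1). Define g(t) = a + (([t]+1)/2 · (t/(t+1))^{[t]-1})^{1/2} (1/a - a) (1/(1 - a^2 t/(t+1))^2 - 1) for t ≥ 1, where [t] is the floor of t. Then g is continuous and monotone (non-decreasing) on [1, ∞), g(t) → ∞ as t → ∞, and if g(2) ≤ 1 then the equation g(s) = 1 has a unique root s ∈ [1, ∞). -/
open Real Filter Set

noncomputable def FPaux (p : ℤ) (t : ℝ) : ℝ := ((p:ℝ)+1)/2 * (t/(t+1))^(p-1)

noncomputable def Flaux (t : ℝ) : ℝ := ((⌊t⌋:ℝ)+1)/2 * (t/(t+1))^(⌊t⌋-1)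

lemma FP_match (p : ℤ) (hp : 0 ≤ p) : FPaux (p+1) ((p:ℝ)+1) = FPaux p ((p:ℝ)+1) := by
  have hx : ((p:ℝ)+1)/((p:ℝ)+1+1) ≠ 0 := by positivity
  simp only [FPaux]
  push_cast
  rw [show p + 1 - 1 = (p - 1) + 1 by ring, zpow_add_one₀ hx]
  have h2 : ((p:ℝ)+2) ≠ 0 := by positivity
  field_simp

lemma Fl_eq_FP (p : ℤ) (hp : 0 ≤ p) (t : ℝ) (ht : t ∈ Set.Icc (p:ℝ) ((p:ℝ)+1)) :
    Flaux t = FPaux p t := by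
  obtain ⟨h1, h2⟩ := ht
  rcases lt_or_eq_of_le h2 with h2 | h2
  · have : ⌊t⌋ = p := Int.floor_eq_iff.mpr ⟨h1, h2⟩
    simp [Flaux, FPaux, this]
  · have ht' : t = ((p+1 : ℤ) : ℝ) := by push_cast; linarith
    have : ⌊t⌋ = p + 1 := by rw [ht']; exact Int.floor_intCast _
    have e1 : Flaux t = FPaux (p+1) t := by simp [Flaux, FPaux, this]
    rw [e1, h2, FP_match p hp]

lemma FP_nat (p : ℤ) (hp : 1 ≤ p) (t : ℝ) :
    FPaux p t = ((p:ℝ)+1)/2 * (t/(t+1))^((p-1).toNat) := by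
  rw [FPaux, ← zpow_natCast (t/(t+1)) (p-1).toNat, Int.toNat_of_nonneg (by omega)]

lemma ratio_mono {s t : ℝ} (hs : 0 ≤ s) (hst : s ≤ t) : s/(s+1) ≤ t/(t+1) := by
  rw [div_le_div_iff₀ (by linarith) (by linarith)]; nlinarith

lemma ratio_strictMono {s t : ℝ} (hs : 0 ≤ s) (hst : s < t) : s/(s+1) < t/(t+1) := by
  rw [div_lt_div_iff₀ (by linarith) (by linarith)]; nlinarith

lemma FP_mono (p : ℤ) (hp : 1 ≤ p) : MonotoneOn (FPaux p) (Set.Ici (0:ℝ)) := by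
  intro s hs t ht hst
  simp only [mem_Ici] at hs ht
  rw [FP_nat p hp, FP_nat p hp]
  have h1 : (0:ℝ) ≤ (p:ℝ)+1 := by positivity
  apply mul_le_mul_of_nonneg_left _ (by positivity)
  have : (0:ℝ) ≤ s/(s+1) := div_nonneg hs (by linarith)
  exact pow_le_pow_left₀ this (ratio_mono hs hst) _

lemma FP_contAt (p : ℤ) (t : ℝ) (ht : 0 < t) : ContinuousAt (FPaux p) t := by
  have hb : t/(t+1) ≠ 0 := by positivity
  have h1 : ContinuousAt (fun x : ℝ => x/(x+1)) t := by
    apply ContinuousAt.div continuousAt_id (by fun_prop)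
    positivity
  have h2 : ContinuousAt (fun x : ℝ => (x/(x+1))^(p-1)) t :=
    h1.zpow₀ (p-1) (Or.inl hb)
  exact (continuousAt_const.mul h2)

lemma floor_ge_one {t : ℝ} (ht : 1 ≤ t) : 1 ≤ ⌊t⌋ := by
  exact_mod_cast Int.le_floor.mpr (by exact_mod_cast ht)

lemma Fl_mono_aux : ∀ k : ℕ, ∀ s t : ℝ, 1 ≤ s → s ≤ t → ⌊t⌋ = ⌊s⌋ + k →
    Flaux s ≤ Flaux t := by
  intro k
  induction k with
  | zero =>
    intro s t hs hst hf
    have hp : 1 ≤ ⌊s⌋ := floor_ge_one hs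
    have hsm : s ∈ Set.Icc ((⌊s⌋:ℝ)) ((⌊s⌋:ℝ)+1) :=
      ⟨Int.floor_le s, (Int.lt_floor_add_one s).le⟩
    have htm : t ∈ Set.Icc ((⌊s⌋:ℝ)) ((⌊s⌋:ℝ)+1) := by
      constructor
      · linarith [Int.floor_le s]
      · have := Int.lt_floor_add_one t
        simp only [hf, Nat.cast_zero, add_zero] at this
        linarith
    rw [Fl_eq_FP ⌊s⌋ (by omega) s hsm, Fl_eq_FP ⌊s⌋ (by omega) t htm]
    exact FP_mono ⌊s⌋ hp (by simp; linarith) (by simp; linarith) hst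
  | succ k ih =>
    intro s t hs hst hf
    have hp : 1 ≤ ⌊s⌋ := floor_ge_one hs
    have hmid : ((⌊s⌋:ℝ)+1) ≤ t := by
      have h1 : (⌊s⌋ + 1 : ℤ) ≤ ⌊t⌋ := by omega
      have : ((⌊s⌋ + 1 : ℤ) : ℝ) ≤ t := Int.le_floor.mp h1
      push_cast at this; linarith
    have hsm : s ∈ Set.Icc ((⌊s⌋:ℝ)) ((⌊s⌋:ℝ)+1) :=
      ⟨Int.floor_le s, (Int.lt_floor_add_one s).le⟩
    have hmm : ((⌊s⌋:ℝ)+1) ∈ Set.Icc ((⌊s⌋:ℝ)) ((⌊s⌋:ℝ)+1) := by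
      constructor <;> simp
    have step1 : Flaux s ≤ Flaux ((⌊s⌋:ℝ)+1) := by
      rw [Fl_eq_FP ⌊s⌋ (by omega) s hsm, Fl_eq_FP ⌊s⌋ (by omega) _ hmm]
      exact FP_mono ⌊s⌋ hp (by simp; linarith) (by simp; positivity)
        (by linarith [Int.lt_floor_add_one s])
    have hfm : ⌊((⌊s⌋:ℝ)+1)⌋ = ⌊s⌋ + 1 := by
      rw [show ((⌊s⌋:ℝ)+1) = ((⌊s⌋+1 : ℤ):ℝ) by push_cast; ring, Int.floor_intCast]
    have step2 : Flaux ((⌊s⌋:ℝ)+1) ≤ Flaux t := by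
      apply ih _ t _ hmid
      · rw [hfm, hf]; push_cast; omega
      · have : (1:ℝ) ≤ (⌊s⌋:ℝ) := by exact_mod_cast hp
        linarith
    linarith

lemma Fl_mono : MonotoneOn Flaux (Set.Ici (1:ℝ)) := by
  intro s hs t ht hst
  simp only [mem_Ici] at hs ht
  have h1 : ⌊s⌋ ≤ ⌊t⌋ := Int.floor_le_floor hst
  exact Fl_mono_aux (⌊t⌋ - ⌊s⌋).toNat s t hs hst (by omega)

lemma Fl_cont : ContinuousOn Flaux (Set.Ici (1:ℝ)) := by
  intro x hx
  simp only [mem_Ici] at hx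
  have hx0 : (0:ℝ) < x := by linarith
  set p := ⌊x⌋ with hpdef
  have hp1 : 1 ≤ p := floor_ge_one hx
  have hpx : (p:ℝ) ≤ x := Int.floor_le x
  by_cases hint : x = (p:ℝ)
  · -- integer point
    have hL : ContinuousWithinAt Flaux (Set.Icc ((p:ℝ)-1) (p:ℝ)) x := by
      apply (FP_contAt (p-1) x hx0).continuousWithinAt.congr
      · intro y hy
        apply Fl_eq_FP (p-1) (by omega)
        have : ((p-1:ℤ):ℝ) = (p:ℝ)-1 := by push_cast; ring
        rw [this]
        exact ⟨hy.1, by push_cast at hy ⊢; linarith [hy.2]⟩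
      · apply Fl_eq_FP (p-1) (by omega)
        constructor <;> push_cast <;> linarith [hint.ge, hint.le]
    have hR : ContinuousWithinAt Flaux (Set.Icc ((p:ℝ)) ((p:ℝ)+1)) x := by
      apply (FP_contAt p x hx0).continuousWithinAt.congr
      · intro y hy
        exact Fl_eq_FP p (by omega) y hy
      · apply Fl_eq_FP p (by omega)
        constructor <;> push_cast <;> linarith [hint.ge, hint.le]
    have hU := hL.union hR
    apply hU.mono_of_mem_nhdsWithin
    apply mem_nhdsWithin_of_mem_nhds
    rw [Set.Icc_union_Icc_eq_Icc (by linarith) (by linarith)]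
    apply Icc_mem_nhds <;> rw [hint] <;> linarith
  · -- non-integer point
    have hlt : (p:ℝ) < x := lt_of_le_of_ne hpx (Ne.symm hint)
    have hlt2 : x < (p:ℝ)+1 := Int.lt_floor_add_one x
    have hmem : Set.Ioo ((p:ℝ)) ((p:ℝ)+1) ∈ nhds x := Ioo_mem_nhds hlt hlt2
    have heq : Flaux =ᶠ[nhds x] FPaux p := by
      filter_upwards [hmem] with y hy
      exact Fl_eq_FP p (by omega) y ⟨hy.1.le, hy.2.le⟩
    exact ((FP_contAt p x hx0).congr heq.symm).continuousWithinAt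

lemma Fl_pos {t : ℝ} (ht : 1 ≤ t) : 0 < Flaux t := by
  have hp : 1 ≤ ⌊t⌋ := floor_ge_one ht
  have ht0 : (0:ℝ) < t := by linarith
  have hb : (0:ℝ) < t/(t+1) := by positivity
  have h1 : (0:ℝ) < (⌊t⌋:ℝ)+1 := by
    have : (1:ℝ) ≤ (⌊t⌋:ℝ) := by exact_mod_cast hp
    linarith
  rw [Flaux]
  positivity

lemma Fl_lower {t : ℝ} (ht : 1 ≤ t) : t/6 ≤ Flaux t := by
  have hp : 1 ≤ ⌊t⌋ := floor_ge_one ht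
  set p := ⌊t⌋ with hpdef
  have hpR : (1:ℝ) ≤ (p:ℝ) := by exact_mod_cast hp
  set n := (p-1).toNat with hndef
  have hnR : (n:ℝ) = (p:ℝ) - 1 := by
    have h0 : ((p-1).toNat : ℤ) = p - 1 := Int.toNat_of_nonneg (by omega)
    rw [hndef]
    exact_mod_cast congrArg (Int.cast : ℤ → ℝ) h0
  have key : Flaux t = ((p:ℝ)+1)/2 * (t/(t+1))^n := by
    have h0 : ((n:ℤ)) = p - 1 := by rw [hndef]; exact Int.toNat_of_nonneg (by omega)
    rw [Flaux, ← hpdef, ← h0, zpow_natCast]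
  -- lower bound for the power term
  have hfr : (p:ℝ)/((p:ℝ)+1) ≤ t/(t+1) := ratio_mono (by linarith) (Int.floor_le t)
  have hup : ((1:ℝ) + 1/(p:ℝ))^n ≤ 3 := by
    have h1 : (1:ℝ) + 1/(p:ℝ) ≤ Real.exp (1/(p:ℝ)) := by
      have := Real.add_one_le_exp (1/(p:ℝ)); linarith
    calc ((1:ℝ) + 1/(p:ℝ))^n ≤ (Real.exp (1/(p:ℝ)))^n :=
          pow_le_pow_left₀ (by positivity) h1 n
      _ = Real.exp ((n:ℝ)/(p:ℝ)) := by
          rw [← Real.exp_nat_mul]; ring_nf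
      _ ≤ Real.exp 1 := by
          apply Real.exp_le_exp.mpr
          rw [hnR, div_le_one (by linarith)]; linarith
      _ ≤ 3 := by linarith [Real.exp_one_lt_d9]
  have hlow : (1:ℝ)/3 ≤ ((p:ℝ)/((p:ℝ)+1))^n := by
    have hpos : (0:ℝ) < ((1:ℝ) + 1/(p:ℝ))^n := by positivity
    have hinv : ((p:ℝ)/((p:ℝ)+1))^n = (((1:ℝ) + 1/(p:ℝ))^n)⁻¹ := by
      rw [← inv_pow]
      congr 1
      field_simp
    rw [hinv, one_div]
    exact inv_anti₀ hpos hup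
  have hpow : (1:ℝ)/3 ≤ (t/(t+1))^n := by
    calc (1:ℝ)/3 ≤ ((p:ℝ)/((p:ℝ)+1))^n := hlow
      _ ≤ (t/(t+1))^n := pow_le_pow_left₀ (by positivity) hfr n
  have hpt : t < (p:ℝ) + 1 := Int.lt_floor_add_one t
  calc t/6 ≤ ((p:ℝ)+1)/6 := by linarith
    _ = ((p:ℝ)+1)/2 * (1/3) := by ring
    _ ≤ ((p:ℝ)+1)/2 * (t/(t+1))^n := by
        apply mul_le_mul_of_nonneg_left hpow (by linarith)
    _ = Flaux t := key.symm

noncomputable def Dda (a t : ℝ) : ℝ := 1/(1 - a^2*t/(t+1))^2 - 1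

section Dpart
variable {a : ℝ}

lemma v_bounds (ha0 : 0 < a) {t : ℝ} (ht : 1 ≤ t) : 0 < a^2*t/(t+1) ∧ a^2*t/(t+1) < a^2 := by
  have h1 : (0:ℝ) < t + 1 := by linarith
  constructor
  · positivity
  · rw [div_lt_iff₀ h1]; nlinarith [sq_nonneg a, mul_pos ha0 ha0]

lemma base_pos (ha0 : 0 < a) (ha1 : a < 1) {t : ℝ} (ht : 1 ≤ t) : 0 < 1 - a^2*t/(t+1) := by
  have := (v_bounds ha0 ht).2
  nlinarith

lemma Dd_pos (ha0 : 0 < a) (ha1 : a < 1) {t : ℝ} (ht : 1 ≤ t) : 0 < Dda a t := by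
  have h1 := (v_bounds ha0 ht).1
  have h2 := base_pos ha0 ha1 ht
  have hsq : (1 - a^2*t/(t+1))^2 < 1 := by nlinarith
  have : 1 < 1/(1 - a^2*t/(t+1))^2 := (one_lt_div (by positivity)).mpr hsq
  rw [Dda]; linarith

lemma Dd_strictMono (ha0 : 0 < a) (ha1 : a < 1) {s t : ℝ} (hs : 1 ≤ s) (hst : s < t) : Dda a s < Dda a t := by
  have ht : 1 ≤ t := by linarith
  have hv : a^2*s/(s+1) < a^2*t/(t+1) := by
    rw [mul_div_assoc, mul_div_assoc]
    exact mul_lt_mul_of_pos_left (ratio_strictMono (by linarith) hst) (by positivity)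
  have h2s := base_pos ha0 ha1 hs
  have h2t := base_pos ha0 ha1 ht
  have hsq : (1 - a^2*t/(t+1))^2 < (1 - a^2*s/(s+1))^2 := by nlinarith
  have : 1/(1 - a^2*s/(s+1))^2 < 1/(1 - a^2*t/(t+1))^2 :=
    one_div_lt_one_div_of_lt (by positivity) hsq
  rw [Dda, Dda]; linarith

lemma Dd_mono (ha0 : 0 < a) (ha1 : a < 1) {s t : ℝ} (hs : 1 ≤ s) (hst : s ≤ t) : Dda a s ≤ Dda a t := by
  rcases eq_or_lt_of_le hst with h | h
  · rw [h]
  · exact (Dd_strictMono ha0 ha1 hs h).le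

lemma Dd_cont (ha0 : 0 < a) (ha1 : a < 1) : ContinuousOn (Dda a) (Set.Ici (1:ℝ)) := by
  apply ContinuousOn.sub _ continuousOn_const
  apply ContinuousOn.div continuousOn_const
  · apply ContinuousOn.pow
    apply ContinuousOn.sub continuousOn_const
    apply ContinuousOn.div (by fun_prop) (by fun_prop)
    intro x hx
    simp only [mem_Ici] at hx; positivity
  · intro x hx
    simp only [mem_Ici] at hx
    have := base_pos ha0 ha1 hx
    positivity

end Dpart

/-- Analysis of the auxiliary function in Theorem 4: for fixed `a ∈ (0,1)`, the
function `g(t) = a + √((⌊t⌋+1)/2 · (t/(t+1))^(⌊t⌋-1)) (1/a - a)(1/(1-a²t/(t+1))² - 1)`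
is continuous and monotone on `[1,∞)`, tends to `∞` at `∞`, and if `g(2) ≤ 1` then
`g(s) = 1` has a unique root `s ∈ [1,∞)`. -/
theorem auxiliary_function_analysis (a : ℝ) (ha0 : 0 < a) (ha1 : a < 1) :
    let g : ℝ → ℝ := fun t =>
      a + Real.sqrt (((⌊t⌋ : ℝ) + 1) / 2 * (t / (t + 1)) ^ (⌊t⌋ - 1)) *
        (1 / a - a) * (1 / (1 - a ^ 2 * t / (t + 1)) ^ 2 - 1)
    ContinuousOn g (Set.Ici 1) ∧ MonotoneOn g (Set.Ici 1) ∧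
      Filter.Tendsto g Filter.atTop Filter.atTop ∧
      (g 2 ≤ 1 → ∃! s : ℝ, s ∈ Set.Ici (1 : ℝ) ∧ g s = 1) := by
  intro g
  have hg : g = fun t => a + Real.sqrt (Flaux t) * (1/a - a) * Dda a t := rfl
  set c := 1/a - a with hc
  have hcpos : 0 < c := by
    rw [hc]
    have : a < 1/a := by rw [lt_div_iff₀ ha0]; nlinarith
    linarith
  -- continuity
  have hcont : ContinuousOn g (Set.Ici 1) := by
    rw [hg]
    exact continuousOn_const.add (((Fl_cont.sqrt).mul continuousOn_const).mul
      (Dd_cont ha0 ha1))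
  -- strict monotonicity
  have hsmono : StrictMonoOn g (Set.Ici 1) := by
    intro s hs t ht hst
    simp only [mem_Ici] at hs ht
    have hAs : 0 < Real.sqrt (Flaux s) * c :=
      mul_pos (Real.sqrt_pos.mpr (Fl_pos hs)) hcpos
    have hAmono : Real.sqrt (Flaux s) * c ≤ Real.sqrt (Flaux t) * c :=
      mul_le_mul_of_nonneg_right
        (Real.sqrt_le_sqrt (Fl_mono (mem_Ici.mpr hs) (mem_Ici.mpr ht) hst.le)) hcpos.le
    have hDt : 0 < Dda a t := Dd_pos ha0 ha1 ht
    have hDst : Dda a s < Dda a t := Dd_strictMono ha0 ha1 hs hst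
    rw [hg]
    simp only
    have : Real.sqrt (Flaux s) * c * Dda a s < Real.sqrt (Flaux t) * c * Dda a t :=
      calc Real.sqrt (Flaux s) * c * Dda a s
          < Real.sqrt (Flaux s) * c * Dda a t := by
            exact mul_lt_mul_of_pos_left hDst hAs
        _ ≤ Real.sqrt (Flaux t) * c * Dda a t :=
            mul_le_mul_of_nonneg_right hAmono hDt.le
    linarith
  have hmono : MonotoneOn g (Set.Ici 1) := hsmono.monotoneOn
  -- tendsto
  have hD1 : 0 < Dda a 1 := Dd_pos ha0 ha1 le_rfl
  have htend : Filter.Tendsto g Filter.atTop Filter.atTop := by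
    have hs6 : Tendsto (fun t : ℝ => Real.sqrt (t/6)) atTop atTop := by
      have h6 : Tendsto (fun t : ℝ => t/6) atTop atTop :=
        tendsto_id.atTop_div_const (by norm_num)
      have hsq : Tendsto Real.sqrt atTop atTop :=
        tendsto_atTop_atTop_of_monotone (fun x y h => Real.sqrt_le_sqrt h)
          (fun b => ⟨b^2, by rw [Real.sqrt_sq_eq_abs]; exact le_abs_self b⟩)
      exact hsq.comp h6
    have hm : Tendsto (fun t : ℝ => a + Real.sqrt (t/6) * (c * Dda a 1)) atTop atTop :=
      tendsto_atTop_add_const_left _ a (hs6.atTop_mul_const (by positivity))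
    apply tendsto_atTop_mono' _ _ hm
    filter_upwards [eventually_ge_atTop (1:ℝ)] with t ht
    rw [hg]
    simp only
    have h1 : Real.sqrt (t/6) ≤ Real.sqrt (Flaux t) := Real.sqrt_le_sqrt (Fl_lower ht)
    have h2 : Dda a 1 ≤ Dda a t := Dd_mono ha0 ha1 le_rfl ht
    have h3 : Real.sqrt (t/6) * (c * Dda a 1) ≤ Real.sqrt (Flaux t) * c * Dda a t := by
      rw [← mul_assoc]
      apply mul_le_mul (mul_le_mul_of_nonneg_right h1 hcpos.le) h2 hD1.le
      positivity
    linarith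
  refine ⟨hcont, hmono, htend, fun h2le => ?_⟩
  -- existence and uniqueness of root
  obtain ⟨T, hT⟩ := (htend.eventually (eventually_ge_atTop (2:ℝ))).exists_forall_of_atTop
  set T' := max T 2 with hT'
  have hgT' : 2 ≤ g T' := hT T' (le_max_left _ _)
  have h2T' : (2:ℝ) ≤ T' := le_max_right _ _
  have hmem : (1:ℝ) ∈ Icc (g 2) (g T') := ⟨h2le, by linarith⟩
  obtain ⟨s, hsmem, hgs⟩ := intermediate_value_Icc h2T'
    (hcont.mono (fun x hx => by simp only [mem_Ici]; linarith [hx.1] : Icc (2:ℝ) T' ⊆ Ici 1)) hmem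
  refine ⟨s, ⟨by simp only [mem_Ici]; linarith [hsmem.1], hgs⟩, ?_⟩
  rintro y ⟨hy1, hgy⟩
  exact hsmono.injOn hy1 (by simp only [mem_Ici]; linarith [hsmem.1]) (by rw [hgy, hgs])
end
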